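/- arXiv:2206.12570 — 6 statements merged into one kernel-verified Lean document; each statement's English description precedes it below -/
import Mathlib

section
/- Let $1 \le q_0, q_1 < \infty$, $w_0 \in A_{q_0}$, $w_1 \in A_{q_1}$, and $\theta \in [0,1]$. Define $q$ by $\frac1q = \frac{1-\theta}{q_0} + \frac{\theta}{q_1}$ and the weight $w$ by $w^{1/q} = w_0^{(1-\theta)/q_0} w_1^{\theta/q_1}$. Then $w \in A_q$ with $[w]_{A_q} \le [w_0]_{A_{q_0}}^{(1-\theta)q/q_0} [w_1]_{A_{q_1}}^{\theta q/q_1}$. -/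
open MeasureTheory ENNReal

noncomputable section

/-- A (closed, axis-parallel) cube in `ℝⁿ`. -/
def IsCube {n : ℕ} (Q : Set (Fin n → ℝ)) : Prop :=
  ∃ (c : Fin n → ℝ) (r : ℝ), 0 < r ∧ Q = {x | ∀ i, |x i - c i| ≤ r}

/-- Average `⨍_Q w` of an `ℝ≥0∞`-valued function over a set. -/
def avgE {n : ℕ} (Q : Set (Fin n → ℝ)) (w : (Fin n → ℝ) → ℝ≥0∞) : ℝ≥0∞ :=
  (∫⁻ x in Q, w x) / volume Q

/-- The `A_p` constant, `1 < p < ∞`. -/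
def apSup {n : ℕ} (p : ℝ) (w : (Fin n → ℝ) → ℝ≥0∞) : ℝ≥0∞ :=
  ⨆ (Q : Set (Fin n → ℝ)) (_ : IsCube Q),
    avgE Q w * (avgE Q fun x => w x ^ (-(1 / (p - 1)))) ^ (p - 1)

/-- The `A_1` constant. -/
def a1Const {n : ℕ} (w : (Fin n → ℝ) → ℝ≥0∞) : ℝ≥0∞ :=
  ⨆ (Q : Set (Fin n → ℝ)) (_ : IsCube Q),
    avgE Q w * essSup (fun x => (w x)⁻¹) (volume.restrict Q)

/-- The Muckenhoupt `A_p` constant for `1 ≤ p < ∞`. -/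
def apConst {n : ℕ} (p : ℝ) (w : (Fin n → ℝ) → ℝ≥0∞) : ℝ≥0∞ :=
  if p = 1 then a1Const w else apSup p w

/-- The `A_∞` constant, `[w]_{A_∞} = inf_{p>1} [w]_{A_p}`. -/
def aInftyConst {n : ℕ} (w : (Fin n → ℝ) → ℝ≥0∞) : ℝ≥0∞ :=
  ⨅ (p : ℝ) (_ : 1 < p), apConst p w

/-- The reverse Hölder constant, `1 ≤ s < ∞`. -/
def rhConst {n : ℕ} (s : ℝ) (w : (Fin n → ℝ) → ℝ≥0∞) : ℝ≥0∞ :=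
  ⨆ (Q : Set (Fin n → ℝ)) (_ : IsCube Q),
    (avgE Q fun x => w x ^ s) ^ (1 / s) / avgE Q w

/-- The reverse Hölder constant for an exponent `s ∈ [1,∞]`. -/
def rhConstE {n : ℕ} (s : ℝ≥0∞) (w : (Fin n → ℝ) → ℝ≥0∞) : ℝ≥0∞ :=
  if s = ∞ then
    ⨆ (Q : Set (Fin n → ℝ)) (_ : IsCube Q),
      essSup w (volume.restrict Q) / avgE Q w
  else rhConst s.toReal w

/-- A weight on `ℝⁿ`: measurable, positive and finite a.e. -/
def IsWeight {n : ℕ} (w : (Fin n → ℝ) → ℝ≥0∞) : Prop :=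
  Measurable w ∧ ∀ᵐ x ∂(volume : Measure (Fin n → ℝ)), 0 < w x ∧ w x < ∞

/-- The conjugate exponent `p' = p/(p-1)` of a real exponent. -/
def rconj (p : ℝ) : ℝ := p / (p - 1)

/-- The conjugate exponent of an extended-real exponent, with `1' = ∞`, `∞' = 1`. -/
def econj (p : ℝ≥0∞) : ℝ≥0∞ :=
  if p = ∞ then 1 else if p ≤ 1 then ∞ else ENNReal.ofReal (p.toReal / (p.toReal - 1))

/-- The limited-range exponent `τ_p = (𝔭₊/p)'(p/𝔭₋ - 1) + 1`. -/
def tauExp (pm : ℝ) (pp : ℝ≥0∞) (p : ℝ) : ℝ :=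
  (econj (pp / ENNReal.ofReal p)).toReal * (p / pm - 1) + 1

namespace S1Aux
variable {n : ℕ}

lemma isCube_volume {Q : Set (Fin n → ℝ)} (hQ : IsCube Q) :
    volume Q ≠ 0 ∧ volume Q ≠ ∞ := by
  obtain ⟨c, r, hr, rfl⟩ := hQ
  have hset : {x : Fin n → ℝ | ∀ i, |x i - c i| ≤ r}
      = Set.univ.pi fun i => Set.Icc (c i - r) (c i + r) := by
    ext x
    simp only [Set.mem_setOf_eq, Set.mem_pi, Set.mem_univ, forall_true_left, Set.mem_Icc, abs_le]
    exact forall_congr' fun i =>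
      ⟨fun h => ⟨by linarith [h.1], by linarith [h.2]⟩, fun h => ⟨by linarith [h.1], by linarith [h.2]⟩⟩
  rw [hset, volume_pi_pi]
  have : ∀ i : Fin n, volume (Set.Icc (c i - r) (c i + r)) = ENNReal.ofReal (2 * r) := by
    intro i; rw [Real.volume_Icc]; ring_nf
  rw [Finset.prod_congr rfl fun i _ => this i, Finset.prod_const]
  have h2r : ENNReal.ofReal (2 * r) ≠ 0 := by
    simp [ENNReal.ofReal_eq_zero]; linarith
  exact ⟨pow_ne_zero _ h2r, ENNReal.pow_ne_top ENNReal.ofReal_ne_top⟩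

lemma avgE_congr {Q : Set (Fin n → ℝ)} {f g : (Fin n → ℝ) → ℝ≥0∞} (h : ∀ x, f x = g x) :
    avgE Q f = avgE Q g := by
  unfold avgE; rw [lintegral_congr fun x => h x]

lemma avgE_congr_ae {Q : Set (Fin n → ℝ)} {f g : (Fin n → ℝ) → ℝ≥0∞}
    (h : f =ᵐ[volume.restrict Q] g) : avgE Q f = avgE Q g := by
  unfold avgE; rw [lintegral_congr_ae h]

lemma avgE_holder {Q : Set (Fin n → ℝ)} (h0 : volume Q ≠ 0) (ht : volume Q ≠ ∞)
    {f g : (Fin n → ℝ) → ℝ≥0∞} (hf : AEMeasurable f (volume.restrict Q))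
    (hg : AEMeasurable g (volume.restrict Q)) {a b : ℝ} (ha : 0 < a) (hb : 0 < b)
    (hab : a + b = 1) :
    avgE Q (fun x => f x ^ a * g x ^ b) ≤ avgE Q f ^ a * avgE Q g ^ b := by
  have ha1 : a < 1 := by linarith
  have hconj : (1/a).HolderConjugate (1/b) := by
    refine ⟨?_, by positivity, by positivity⟩
    rw [one_div, one_div, inv_inv, inv_inv, inv_one]; exact hab
  have H := ENNReal.lintegral_mul_le_Lp_mul_Lq (volume.restrict Q) hconj
    (hf.pow_const a) (hg.pow_const b)
  simp only [Pi.mul_apply] at H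
  have hfa : ∀ x, (f x ^ a) ^ (1/a) = f x := by
    intro x; rw [← ENNReal.rpow_mul, mul_one_div_cancel ha.ne', ENNReal.rpow_one]
  have hgb : ∀ x, (g x ^ b) ^ (1/b) = g x := by
    intro x; rw [← ENNReal.rpow_mul, mul_one_div_cancel hb.ne', ENNReal.rpow_one]
  simp only [hfa, hgb, one_div_one_div] at H
  -- H : ∫ f^a g^b ≤ (∫ f)^a (∫ g)^b
  unfold avgE
  rw [div_eq_mul_inv, div_eq_mul_inv, div_eq_mul_inv,
    ENNReal.mul_rpow_of_nonneg _ _ ha.le, ENNReal.mul_rpow_of_nonneg _ _ hb.le,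
    mul_mul_mul_comm]
  have hv : (volume Q)⁻¹ ^ a * (volume Q)⁻¹ ^ b = (volume Q)⁻¹ := by
    rw [← ENNReal.rpow_add _ _ (by simpa using ht) (by simpa using h0), hab, ENNReal.rpow_one]
  rw [hv]
  exact mul_le_mul_left H _

lemma avgE_const_mul_le {Q : Set (Fin n → ℝ)} {f g : (Fin n → ℝ) → ℝ≥0∞} {C : ℝ≥0∞}
    (hg : Measurable g) (h : ∀ᵐ x ∂(volume.restrict Q), f x ≤ C) :
    avgE Q (fun x => f x * g x) ≤ C * avgE Q g := by
  have H : ∫⁻ x in Q, f x * g x ≤ ∫⁻ x in Q, C * g x :=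
    lintegral_mono_ae (h.mono fun x hx => mul_le_mul_left hx _)
  rw [lintegral_const_mul C hg] at H
  unfold avgE
  calc (∫⁻ x in Q, f x * g x) / volume Q ≤ (C * ∫⁻ x in Q, g x) / volume Q :=
        ENNReal.div_le_div_right H _
    _ = C * ((∫⁻ x in Q, g x) / volume Q) := by rw [mul_div_assoc]

lemma mul_le_rpow_mul {x y x₀ y₀ x₁ y₁ : ℝ≥0∞} {a b : ℝ} (ha : 0 ≤ a) (hb : 0 ≤ b)
    (hx : x ≤ x₀ ^ a * x₁ ^ b) (hy : y ≤ y₀ ^ a * y₁ ^ b) :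
    x * y ≤ (x₀ * y₀) ^ a * (x₁ * y₁) ^ b := by
  calc x * y ≤ (x₀ ^ a * x₁ ^ b) * (y₀ ^ a * y₁ ^ b) := mul_le_mul' hx hy
    _ = (x₀ ^ a * y₀ ^ a) * (x₁ ^ b * y₁ ^ b) := mul_mul_mul_comm _ _ _ _
    _ = (x₀ * y₀) ^ a * (x₁ * y₁) ^ b := by
        rw [ENNReal.mul_rpow_of_nonneg _ _ ha, ENNReal.mul_rpow_of_nonneg _ _ hb]

lemma isup_le_of (F G₀ G₁ : Set (Fin n → ℝ) → ℝ≥0∞) (C₀ C₁ : ℝ≥0∞) {a b : ℝ}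
    (ha : 0 ≤ a) (hb : 0 ≤ b)
    (h : ∀ Q, IsCube Q → F Q ≤ G₀ Q ^ a * G₁ Q ^ b)
    (h₀ : ∀ Q, IsCube Q → G₀ Q ≤ C₀) (h₁ : ∀ Q, IsCube Q → G₁ Q ≤ C₁) :
    (⨆ (Q : Set (Fin n → ℝ)) (_ : IsCube Q), F Q) ≤ C₀ ^ a * C₁ ^ b :=
  iSup₂_le fun Q hQ => (h Q hQ).trans
    (mul_le_mul' (ENNReal.rpow_le_rpow (h₀ Q hQ) ha) (ENNReal.rpow_le_rpow (h₁ Q hQ) hb))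

lemma le_isup_cube (F : Set (Fin n → ℝ) → ℝ≥0∞) {Q : Set (Fin n → ℝ)} (hQ : IsCube Q) :
    F Q ≤ ⨆ (Q : Set (Fin n → ℝ)) (_ : IsCube Q), F Q :=
  le_iSup₂ (f := fun Q (_ : IsCube Q) => F Q) Q hQ

end S1Aux

/-- Interpolation of Muckenhoupt classes: if `w₀ ∈ A_{q₀}`, `w₁ ∈ A_{q₁}`,
`θ ∈ [0,1]`, `1/q = (1-θ)/q₀ + θ/q₁` and `w^{1/q} = w₀^{(1-θ)/q₀} w₁^{θ/q₁}`, then `w ∈ A_q`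
with `[w]_{A_q} ≤ [w₀]_{A_{q₀}}^{(1-θ)q/q₀} [w₁]_{A_{q₁}}^{θ q/q₁}`. -/
theorem statement1 {n : ℕ} (q₀ q₁ q θ : ℝ) (hq₀ : 1 ≤ q₀) (hq₁ : 1 ≤ q₁)
    (hθ : θ ∈ Set.Icc (0:ℝ) 1)
    (w₀ w₁ w : (Fin n → ℝ) → ℝ≥0∞) (hw₀ : IsWeight w₀) (hw₁ : IsWeight w₁)
    (hA₀ : apConst q₀ w₀ ≠ ∞) (hA₁ : apConst q₁ w₁ ≠ ∞)
    (hq : 1 / q = (1 - θ) / q₀ + θ / q₁)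
    (hw : ∀ x, w x = (w₀ x ^ ((1 - θ) / q₀) * w₁ x ^ (θ / q₁)) ^ q) :
    apConst q w ≠ ∞ ∧
    apConst q w ≤ apConst q₀ w₀ ^ ((1 - θ) * q / q₀) * apConst q₁ w₁ ^ (θ * q / q₁) := by
  obtain ⟨hθ0, hθ1⟩ := hθ
  have hq₀0 : (0:ℝ) < q₀ := lt_of_lt_of_le one_pos hq₀
  have hq₁0 : (0:ℝ) < q₁ := lt_of_lt_of_le one_pos hq₁
  rcases eq_or_lt_of_le hθ0 with h0 | hθ0'
  · -- θ = 0
    subst h0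
    have hqq : q = q₀ := by
      have h : (1:ℝ)/q = 1/q₀ := by rw [hq]; norm_num
      rw [one_div, one_div] at h
      exact inv_injective h
    subst hqq
    have hww : w = w₀ := by
      funext x
      rw [hw x]
      simp only [sub_zero, zero_div, ENNReal.rpow_zero, mul_one]
      rw [← ENNReal.rpow_mul, one_div_mul_cancel hq₀0.ne', ENNReal.rpow_one]
    rw [hww, show (1-(0:ℝ))*q/q = 1 by field_simp; norm_num, show (0:ℝ)*q/q₁ = 0 by simp,
      ENNReal.rpow_one, ENNReal.rpow_zero, mul_one]
    exact ⟨hA₀, le_rfl⟩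
  rcases eq_or_lt_of_le hθ1 with h1 | hθ1'
  · -- θ = 1
    subst h1
    have hqq : q = q₁ := by
      have h : (1:ℝ)/q = 1/q₁ := by rw [hq]; norm_num
      rw [one_div, one_div] at h
      exact inv_injective h
    subst hqq
    have hww : w = w₁ := by
      funext x
      rw [hw x]
      simp only [sub_self, zero_div, ENNReal.rpow_zero, one_mul]
      rw [← ENNReal.rpow_mul, one_div_mul_cancel hq₁0.ne', ENNReal.rpow_one]
    rw [hww, show (1-(1:ℝ))*q/q₀ = 0 by simp, show (1:ℝ)*q/q = 1 by field_simp,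
      ENNReal.rpow_one, ENNReal.rpow_zero, one_mul]
    exact ⟨hA₁, le_rfl⟩
  -- main case: 0 < θ < 1
  have hqinv : 0 < 1/q := by
    rw [hq]
    have h1 := div_pos (show (0:ℝ) < 1 - θ by linarith) hq₀0
    have h2 := div_pos hθ0' hq₁0
    linarith
  have hqpos : (0:ℝ) < q := one_div_pos.mp hqinv
  have ha : 0 < (1-θ)*q/q₀ := div_pos (mul_pos (by linarith) hqpos) hq₀0
  have hb : 0 < θ*q/q₁ := div_pos (mul_pos hθ0' hqpos) hq₁0
  have hab : (1-θ)*q/q₀ + θ*q/q₁ = 1 := by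
    have h1 : q * (1/q) = 1 := mul_one_div_cancel hqpos.ne'
    rw [hq] at h1
    calc (1-θ)*q/q₀ + θ*q/q₁ = q * ((1-θ)/q₀ + θ/q₁) := by ring
      _ = 1 := h1
  have hww : ∀ x, w x = w₀ x ^ ((1-θ)*q/q₀) * w₁ x ^ (θ*q/q₁) := by
    intro x
    rw [hw x, ENNReal.mul_rpow_of_nonneg _ _ hqpos.le, ← ENNReal.rpow_mul, ← ENNReal.rpow_mul,
      show (1-θ)/q₀*q = (1-θ)*q/q₀ by ring, show θ/q₁*q = θ*q/q₁ by ring]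
  have hgood : ∀ᵐ x ∂(volume : Measure (Fin n → ℝ)),
      (0 < w₀ x ∧ w₀ x < ∞) ∧ (0 < w₁ x ∧ w₁ x < ∞) := hw₀.2.and hw₁.2
  have havg : ∀ Q : Set (Fin n → ℝ), IsCube Q →
      avgE Q w ≤ avgE Q w₀ ^ ((1-θ)*q/q₀) * avgE Q w₁ ^ (θ*q/q₁) := by
    intro Q hQ
    obtain ⟨hv0, hvt⟩ := S1Aux.isCube_volume hQ
    rw [S1Aux.avgE_congr hww]
    exact S1Aux.avgE_holder hv0 hvt hw₀.1.aemeasurable hw₁.1.aemeasurable ha hb hab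
  have hfin : apConst q₀ w₀ ^ ((1-θ)*q/q₀) * apConst q₁ w₁ ^ (θ*q/q₁) ≠ ∞ :=
    ENNReal.mul_ne_top (ENNReal.rpow_ne_top_of_nonneg ha.le hA₀)
      (ENNReal.rpow_ne_top_of_nonneg hb.le hA₁)
  suffices hle : apConst q w ≤ apConst q₀ w₀ ^ ((1-θ)*q/q₀) * apConst q₁ w₁ ^ (θ*q/q₁) from
    ⟨ne_top_of_le_ne_top hfin hle, hle⟩
  rcases eq_or_lt_of_le hq₀ with hq₀1 | hq₀1
  · subst hq₀1
    rcases eq_or_lt_of_le hq₁ with hq₁1 | hq₁1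
    · -- Case A : q₀ = q₁ = 1
      subst hq₁1
      have hq1 : q = 1 := by
        have h : (1:ℝ)/q = 1 := by rw [hq]; ring
        rw [one_div] at h
        exact inv_eq_one.mp h
      subst hq1
      rw [show apConst 1 w = a1Const w from if_pos rfl,
        show apConst 1 w₀ = a1Const w₀ from if_pos rfl,
        show apConst 1 w₁ = a1Const w₁ from if_pos rfl]
      unfold a1Const
      refine S1Aux.isup_le_of _
        (fun Q => avgE Q w₀ * essSup (fun x => (w₀ x)⁻¹) (volume.restrict Q))
        (fun Q => avgE Q w₁ * essSup (fun x => (w₁ x)⁻¹) (volume.restrict Q))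
        _ _ ha.le hb.le ?_ (fun Q hQ => S1Aux.le_isup_cube _ hQ) (fun Q hQ => S1Aux.le_isup_cube _ hQ)
      intro Q hQ
      refine S1Aux.mul_le_rpow_mul ha.le hb.le (havg Q hQ) ?_
      have hess : essSup (fun x => (w x)⁻¹) (volume.restrict Q)
          ≤ essSup (fun x => (w₀ x)⁻¹) (volume.restrict Q) ^ ((1-θ)*1/1)
            * essSup (fun x => (w₁ x)⁻¹) (volume.restrict Q) ^ (θ*1/1) := by
        refine essSup_le_of_ae_le _ ?_
        filter_upwards [ENNReal.ae_le_essSup (fun x => (w₀ x)⁻¹),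
          ENNReal.ae_le_essSup (fun x => (w₁ x)⁻¹), ae_restrict_of_ae hgood] with x h₀ h₁ hg
        rw [hww x, ENNReal.mul_inv (Or.inl (ENNReal.rpow_pos hg.1.1 hg.1.2.ne).ne')
            (Or.inl (ENNReal.rpow_ne_top_of_nonneg ha.le hg.1.2.ne)),
          ← ENNReal.inv_rpow, ← ENNReal.inv_rpow]
        exact mul_le_mul' (ENNReal.rpow_le_rpow h₀ ha.le) (ENNReal.rpow_le_rpow h₁ hb.le)
      exact hess
    · -- Case B : q₀ = 1 < q₁
      have hlt : 1/q < 1 := by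
        rw [hq, div_one]
        have := div_lt_self hθ0' hq₁1
        linarith
      have hq1 : 1 < q := (div_lt_one hqpos).mp hlt
      have hq1' : (0:ℝ) < q - 1 := by linarith
      have hq₁1' : (0:ℝ) < q₁ - 1 := by linarith
      have hdiv1 : (1-θ)*q/1 = (1-θ)*q := div_one _
      have hb1 : θ*q/q₁ = 1 - (1-θ)*q := by
        rw [hdiv1] at hab; linarith
      have hbq : (θ*q/q₁)*(q₁-1) = q - 1 := by
        have h2 : θ*q/q₁*q₁ = θ*q := div_mul_cancel₀ _ hq₁0.ne'
        calc (θ*q/q₁)*(q₁-1) = θ*q/q₁*q₁ - θ*q/q₁ := by ring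
          _ = θ*q - (1 - (1-θ)*q) := by rw [h2, hb1]
          _ = q - 1 := by ring
      have hs : (θ*q/q₁) * (-(1/(q-1))) = -(1/(q₁-1)) := by
        rw [← hbq]
        have hbne : θ*q/q₁ ≠ 0 := hb.ne'
        field_simp
        try ring
      have ht0 : 0 ≤ ((1-θ)*q/1)/(q-1) := div_nonneg ha.le hq1'.le
      have hD : ∀ Q : Set (Fin n → ℝ), IsCube Q →
          (avgE Q fun x => w x ^ (-(1/(q-1)))) ^ (q-1)
            ≤ (essSup (fun x => (w₀ x)⁻¹) (volume.restrict Q)) ^ ((1-θ)*q/1)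
              * ((avgE Q fun x => w₁ x ^ (-(1/(q₁-1)))) ^ (q₁-1)) ^ (θ*q/q₁) := by
        intro Q hQ
        have hcong : (fun x => w x ^ (-(1/(q-1)))) =ᵐ[volume.restrict Q]
            (fun x => ((w₀ x)⁻¹) ^ (((1-θ)*q/1)/(q-1)) * w₁ x ^ (-(1/(q₁-1)))) := by
          filter_upwards [ae_restrict_of_ae hgood] with x hx
          rw [hww x,
            ENNReal.mul_rpow_of_ne_top (ENNReal.rpow_ne_top_of_nonneg ha.le hx.1.2.ne)
              (ENNReal.rpow_ne_top_of_nonneg hb.le hx.2.2.ne),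
            ← ENNReal.rpow_mul, ← ENNReal.rpow_mul, hs]
          congr 1
          rw [show ((1-θ)*q/1) * (-(1/(q-1))) = -(((1-θ)*q/1)/(q-1)) by ring,
            ENNReal.rpow_neg, ← ENNReal.inv_rpow]
        have hσ : avgE Q (fun x => w x ^ (-(1/(q-1))))
            ≤ (essSup (fun x => (w₀ x)⁻¹) (volume.restrict Q)) ^ (((1-θ)*q/1)/(q-1))
              * avgE Q (fun x => w₁ x ^ (-(1/(q₁-1)))) := by
          rw [S1Aux.avgE_congr_ae hcong]
          refine S1Aux.avgE_const_mul_le (hw₁.1.pow_const _) ?_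
          filter_upwards [ENNReal.ae_le_essSup (fun x => (w₀ x)⁻¹)] with x hx
          exact ENNReal.rpow_le_rpow hx ht0
        calc (avgE Q fun x => w x ^ (-(1/(q-1)))) ^ (q-1)
            ≤ ((essSup (fun x => (w₀ x)⁻¹) (volume.restrict Q)) ^ (((1-θ)*q/1)/(q-1))
              * avgE Q (fun x => w₁ x ^ (-(1/(q₁-1))))) ^ (q-1) :=
              ENNReal.rpow_le_rpow hσ hq1'.le
          _ = (essSup (fun x => (w₀ x)⁻¹) (volume.restrict Q)) ^ ((1-θ)*q/1)
              * ((avgE Q fun x => w₁ x ^ (-(1/(q₁-1)))) ^ (q₁-1)) ^ (θ*q/q₁) := by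
              rw [ENNReal.mul_rpow_of_nonneg _ _ hq1'.le, ← ENNReal.rpow_mul,
                div_mul_cancel₀ _ hq1'.ne',
                show q-1 = (q₁-1)*(θ*q/q₁) from ((mul_comm _ _).trans hbq).symm,
                ENNReal.rpow_mul]
      rw [show apConst q w = apSup q w from if_neg (by linarith),
        show apConst 1 w₀ = a1Const w₀ from if_pos rfl,
        show apConst q₁ w₁ = apSup q₁ w₁ from if_neg (by linarith)]
      unfold apSup a1Const
      refine S1Aux.isup_le_of _
        (fun Q => avgE Q w₀ * essSup (fun x => (w₀ x)⁻¹) (volume.restrict Q))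
        (fun Q => avgE Q w₁ * (avgE Q fun x => w₁ x ^ (-(1/(q₁-1)))) ^ (q₁-1))
        _ _ ha.le hb.le ?_ (fun Q hQ => S1Aux.le_isup_cube _ hQ) (fun Q hQ => S1Aux.le_isup_cube _ hQ)
      intro Q hQ
      exact S1Aux.mul_le_rpow_mul ha.le hb.le (havg Q hQ) (hD Q hQ)
  · rcases eq_or_lt_of_le hq₁ with hq₁1 | hq₁1
    · -- Case C : q₁ = 1 < q₀
      subst hq₁1
      have hlt : 1/q < 1 := by
        rw [hq, div_one]
        have := div_lt_self (show (0:ℝ) < 1-θ by linarith) hq₀1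
        linarith
      have hq1 : 1 < q := (div_lt_one hqpos).mp hlt
      have hq1' : (0:ℝ) < q - 1 := by linarith
      have hq₀1' : (0:ℝ) < q₀ - 1 := by linarith
      have hdiv1 : θ*q/1 = θ*q := div_one _
      have ha1 : (1-θ)*q/q₀ = 1 - θ*q := by rw [hdiv1] at hab; linarith
      have haq : ((1-θ)*q/q₀)*(q₀-1) = q - 1 := by
        have h2 : (1-θ)*q/q₀*q₀ = (1-θ)*q := div_mul_cancel₀ _ hq₀0.ne'
        calc ((1-θ)*q/q₀)*(q₀-1) = (1-θ)*q/q₀*q₀ - (1-θ)*q/q₀ := by ring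
          _ = (1-θ)*q - (1 - θ*q) := by rw [h2, ha1]
          _ = q - 1 := by ring
      have hs : ((1-θ)*q/q₀) * (-(1/(q-1))) = -(1/(q₀-1)) := by
        have ha2 : (1-θ)*q/q₀ = (q-1)/(q₀-1) := (eq_div_iff hq₀1'.ne').mpr haq
        rw [ha2]
        field_simp [hq1'.ne', hq₀1'.ne']
        try ring
      have ht0 : 0 ≤ (θ*q/1)/(q-1) := div_nonneg hb.le hq1'.le
      have hD : ∀ Q : Set (Fin n → ℝ), IsCube Q →
          (avgE Q fun x => w x ^ (-(1/(q-1)))) ^ (q-1)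
            ≤ ((avgE Q fun x => w₀ x ^ (-(1/(q₀-1)))) ^ (q₀-1)) ^ ((1-θ)*q/q₀)
              * (essSup (fun x => (w₁ x)⁻¹) (volume.restrict Q)) ^ (θ*q/1) := by
        intro Q hQ
        have hcong : (fun x => w x ^ (-(1/(q-1)))) =ᵐ[volume.restrict Q]
            (fun x => ((w₁ x)⁻¹) ^ ((θ*q/1)/(q-1)) * w₀ x ^ (-(1/(q₀-1)))) := by
          filter_upwards [ae_restrict_of_ae hgood] with x hx
          rw [hww x,
            ENNReal.mul_rpow_of_ne_top (ENNReal.rpow_ne_top_of_nonneg ha.le hx.1.2.ne)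
              (ENNReal.rpow_ne_top_of_nonneg hb.le hx.2.2.ne),
            ← ENNReal.rpow_mul, ← ENNReal.rpow_mul, hs, mul_comm]
          congr 1
          rw [show (θ*q/1) * (-(1/(q-1))) = -((θ*q/1)/(q-1)) by ring,
            ENNReal.rpow_neg, ← ENNReal.inv_rpow]
        have hσ : avgE Q (fun x => w x ^ (-(1/(q-1))))
            ≤ (essSup (fun x => (w₁ x)⁻¹) (volume.restrict Q)) ^ ((θ*q/1)/(q-1))
              * avgE Q (fun x => w₀ x ^ (-(1/(q₀-1)))) := by
          rw [S1Aux.avgE_congr_ae hcong]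
          refine S1Aux.avgE_const_mul_le (hw₀.1.pow_const _) ?_
          filter_upwards [ENNReal.ae_le_essSup (fun x => (w₁ x)⁻¹)] with x hx
          exact ENNReal.rpow_le_rpow hx ht0
        calc (avgE Q fun x => w x ^ (-(1/(q-1)))) ^ (q-1)
            ≤ ((essSup (fun x => (w₁ x)⁻¹) (volume.restrict Q)) ^ ((θ*q/1)/(q-1))
              * avgE Q (fun x => w₀ x ^ (-(1/(q₀-1))))) ^ (q-1) :=
              ENNReal.rpow_le_rpow hσ hq1'.le
          _ = ((avgE Q fun x => w₀ x ^ (-(1/(q₀-1)))) ^ (q₀-1)) ^ ((1-θ)*q/q₀)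
              * (essSup (fun x => (w₁ x)⁻¹) (volume.restrict Q)) ^ (θ*q/1) := by
              rw [ENNReal.mul_rpow_of_nonneg _ _ hq1'.le, ← ENNReal.rpow_mul,
                div_mul_cancel₀ _ hq1'.ne',
                show q-1 = (q₀-1)*((1-θ)*q/q₀) from ((mul_comm _ _).trans haq).symm,
                ENNReal.rpow_mul, mul_comm]
      rw [show apConst q w = apSup q w from if_neg hq1.ne',
        show apConst q₀ w₀ = apSup q₀ w₀ from if_neg hq₀1.ne',
        show apConst 1 w₁ = a1Const w₁ from if_pos rfl]
      unfold apSup a1Const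
      refine S1Aux.isup_le_of _
        (fun Q => avgE Q w₀ * (avgE Q fun x => w₀ x ^ (-(1/(q₀-1)))) ^ (q₀-1))
        (fun Q => avgE Q w₁ * essSup (fun x => (w₁ x)⁻¹) (volume.restrict Q))
        _ _ ha.le hb.le ?_ (fun Q hQ => S1Aux.le_isup_cube _ hQ) (fun Q hQ => S1Aux.le_isup_cube _ hQ)
      intro Q hQ
      exact S1Aux.mul_le_rpow_mul ha.le hb.le (havg Q hQ) (hD Q hQ)
    · -- Case D : 1 < q₀, 1 < q₁
      have hlt : 1/q < 1 := by
        rw [hq]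
        have h1 := div_lt_self (show (0:ℝ) < 1-θ by linarith) hq₀1
        have h2 := div_lt_self hθ0' hq₁1
        linarith
      have hq1 : 1 < q := (div_lt_one hqpos).mp hlt
      have hq1' : (0:ℝ) < q - 1 := by linarith
      have hq₀1' : (0:ℝ) < q₀ - 1 := by linarith
      have hq₁1' : (0:ℝ) < q₁ - 1 := by linarith
      have hsum : ((1-θ)*q/q₀)*(q₀-1) + (θ*q/q₁)*(q₁-1) = q - 1 := by
        have h2 : (1-θ)*q/q₀*q₀ = (1-θ)*q := div_mul_cancel₀ _ hq₀0.ne'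
        have h3 : θ*q/q₁*q₁ = θ*q := div_mul_cancel₀ _ hq₁0.ne'
        have h4 : ((1-θ)*q/q₀)*(q₀-1) + (θ*q/q₁)*(q₁-1)
            = ((1-θ)*q/q₀*q₀ + θ*q/q₁*q₁) - ((1-θ)*q/q₀ + θ*q/q₁) := by ring
        rw [h4, h2, h3, hab]; ring
      have ha' : 0 < ((1-θ)*q/q₀)*(q₀-1)/(q-1) := div_pos (mul_pos ha hq₀1') hq1'
      have hb' : 0 < ((θ*q/q₁))*(q₁-1)/(q-1) := div_pos (mul_pos hb hq₁1') hq1'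
      have hab' : ((1-θ)*q/q₀)*(q₀-1)/(q-1) + (θ*q/q₁)*(q₁-1)/(q-1) = 1 := by
        rw [← add_div, hsum, div_self hq1'.ne']
      have hs₀ : -(1/(q₀-1)) * (((1-θ)*q/q₀)*(q₀-1)/(q-1)) = ((1-θ)*q/q₀) * (-(1/(q-1))) := by
        field_simp
        try ring
      have hs₁ : -(1/(q₁-1)) * ((θ*q/q₁)*(q₁-1)/(q-1)) = (θ*q/q₁) * (-(1/(q-1))) := by
        field_simp
        try ring
      have hD : ∀ Q : Set (Fin n → ℝ), IsCube Q →
          (avgE Q fun x => w x ^ (-(1/(q-1)))) ^ (q-1)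
            ≤ ((avgE Q fun x => w₀ x ^ (-(1/(q₀-1)))) ^ (q₀-1)) ^ ((1-θ)*q/q₀)
              * ((avgE Q fun x => w₁ x ^ (-(1/(q₁-1)))) ^ (q₁-1)) ^ (θ*q/q₁) := by
        intro Q hQ
        obtain ⟨hv0, hvt⟩ := S1Aux.isCube_volume hQ
        have hcong : (fun x => w x ^ (-(1/(q-1)))) =ᵐ[volume.restrict Q]
            (fun x => (w₀ x ^ (-(1/(q₀-1)))) ^ (((1-θ)*q/q₀)*(q₀-1)/(q-1))
              * (w₁ x ^ (-(1/(q₁-1)))) ^ ((θ*q/q₁)*(q₁-1)/(q-1))) := by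
          filter_upwards [ae_restrict_of_ae hgood] with x hx
          rw [hww x,
            ENNReal.mul_rpow_of_ne_top (ENNReal.rpow_ne_top_of_nonneg ha.le hx.1.2.ne)
              (ENNReal.rpow_ne_top_of_nonneg hb.le hx.2.2.ne),
            ← ENNReal.rpow_mul, ← ENNReal.rpow_mul, ← hs₀, ← hs₁,
            ENNReal.rpow_mul, ENNReal.rpow_mul]
        have hσ : avgE Q (fun x => w x ^ (-(1/(q-1))))
            ≤ (avgE Q fun x => w₀ x ^ (-(1/(q₀-1)))) ^ (((1-θ)*q/q₀)*(q₀-1)/(q-1))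
              * (avgE Q fun x => w₁ x ^ (-(1/(q₁-1)))) ^ ((θ*q/q₁)*(q₁-1)/(q-1)) := by
          rw [S1Aux.avgE_congr_ae hcong]
          exact S1Aux.avgE_holder hv0 hvt (hw₀.1.pow_const _).aemeasurable
            (hw₁.1.pow_const _).aemeasurable ha' hb' hab'
        calc (avgE Q fun x => w x ^ (-(1/(q-1)))) ^ (q-1)
            ≤ ((avgE Q fun x => w₀ x ^ (-(1/(q₀-1)))) ^ (((1-θ)*q/q₀)*(q₀-1)/(q-1))
              * (avgE Q fun x => w₁ x ^ (-(1/(q₁-1)))) ^ ((θ*q/q₁)*(q₁-1)/(q-1))) ^ (q-1) :=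
              ENNReal.rpow_le_rpow hσ hq1'.le
          _ = ((avgE Q fun x => w₀ x ^ (-(1/(q₀-1)))) ^ (q₀-1)) ^ ((1-θ)*q/q₀)
              * ((avgE Q fun x => w₁ x ^ (-(1/(q₁-1)))) ^ (q₁-1)) ^ (θ*q/q₁) := by
              rw [ENNReal.mul_rpow_of_nonneg _ _ hq1'.le, ← ENNReal.rpow_mul, ← ENNReal.rpow_mul,
                show ((1-θ)*q/q₀)*(q₀-1)/(q-1)*(q-1) = (q₀-1)*((1-θ)*q/q₀) from by
                  field_simp,
                show (θ*q/q₁)*(q₁-1)/(q-1)*(q-1) = (q₁-1)*(θ*q/q₁) from by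
                  field_simp,
                ENNReal.rpow_mul, ENNReal.rpow_mul]
      rw [show apConst q w = apSup q w from if_neg hq1.ne',
        show apConst q₀ w₀ = apSup q₀ w₀ from if_neg hq₀1.ne',
        show apConst q₁ w₁ = apSup q₁ w₁ from if_neg hq₁1.ne']
      unfold apSup
      refine S1Aux.isup_le_of _
        (fun Q => avgE Q w₀ * (avgE Q fun x => w₀ x ^ (-(1/(q₀-1)))) ^ (q₀-1))
        (fun Q => avgE Q w₁ * (avgE Q fun x => w₁ x ^ (-(1/(q₁-1)))) ^ (q₁-1))
        _ _ ha.le hb.le ?_ (fun Q hQ => S1Aux.le_isup_cube _ hQ) (fun Q hQ => S1Aux.le_isup_cube _ hQ)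
      intro Q hQ
      exact S1Aux.mul_le_rpow_mul ha.le hb.le (havg Q hQ) (hD Q hQ)
end
end

section
/- Let $1 \le p_0 < p < \infty$, $u \in A_p$, and $v \in A_1$. Then $u^{(p_0-1)/(p-1)} v^{(p-p_0)/(p-1)} \in A_{p_0}$ with $[u^{(p_0-1)/(p-1)} v^{(p-p_0)/(p-1)}]_{A_{p_0}} \le [u]_{A_p}^{(p_0-1)/(p-1)} [v]_{A_1}^{(p-p_0)/(p-1)}$. -/
open MeasureTheory ENNReal

noncomputable section

/-- Volume of a cube is nonzero and finite. -/
lemma cube_vol {n : ℕ} {Q : Set (Fin n → ℝ)} (hQ : IsCube Q) :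
    volume Q ≠ 0 ∧ volume Q ≠ ∞ := by
  obtain ⟨c, r, hr, rfl⟩ := hQ
  have hQeq : {x : Fin n → ℝ | ∀ i, |x i - c i| ≤ r} =
      Set.pi Set.univ fun i => Set.Icc (c i - r) (c i + r) := by
    ext x
    simp only [Set.mem_setOf_eq, Set.mem_univ_pi, Set.mem_Icc]
    refine forall_congr' fun i => ?_
    rw [abs_le]
    constructor <;> rintro ⟨h1, h2⟩ <;> constructor <;> linarith
  rw [hQeq, volume_pi_pi]
  have : ∀ i : Fin n, volume (Set.Icc (c i - r) (c i + r)) = ENNReal.ofReal (2 * r) := by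
    intro i
    rw [Real.volume_Icc]
    congr 1
    ring
  simp only [this, Finset.prod_const, Finset.card_univ, Fintype.card_fin]
  have h0 : ENNReal.ofReal (2 * r) ≠ 0 := by
    simp [ENNReal.ofReal_eq_zero]; linarith
  exact ⟨pow_ne_zero _ h0, ENNReal.pow_ne_top ENNReal.ofReal_ne_top⟩

/-- If `1 ≤ p₀ < p < ∞`, `u ∈ A_p`, `v ∈ A_1`, then
`u^{(p₀-1)/(p-1)} v^{(p-p₀)/(p-1)} ∈ A_{p₀}` with constant at most
`[u]_{A_p}^{(p₀-1)/(p-1)} [v]_{A_1}^{(p-p₀)/(p-1)}`. -/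
theorem statement2 {n : ℕ} (p₀ p : ℝ) (hp₀ : 1 ≤ p₀) (hp₀p : p₀ < p)
    (u v : (Fin n → ℝ) → ℝ≥0∞) (hu : IsWeight u) (hv : IsWeight v)
    (huA : apConst p u ≠ ∞) (hvA : apConst 1 v ≠ ∞) :
    apConst p₀ (fun x => u x ^ ((p₀ - 1)/(p - 1)) * v x ^ ((p - p₀)/(p - 1))) ≠ ∞ ∧
    apConst p₀ (fun x => u x ^ ((p₀ - 1)/(p - 1)) * v x ^ ((p - p₀)/(p - 1))) ≤
      apConst p u ^ ((p₀ - 1)/(p - 1)) * apConst 1 v ^ ((p - p₀)/(p - 1)) := by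
  classical
  have hp1 : (1 : ℝ) < p := lt_of_le_of_lt hp₀ hp₀p
  have hpne : p - 1 ≠ 0 := by intro h; rw [sub_eq_zero] at h; exact absurd h.symm (ne_of_lt hp1)
  have hpne1 : p ≠ 1 := ne_of_gt hp1
  rcases hp₀.eq_or_lt with rfl | h1
  · -- case p₀ = 1
    have e1 : ((1:ℝ) - 1)/(p - 1) = 0 := by rw [sub_self, zero_div]
    have e2 : (p - 1)/(p - 1) = 1 := div_self hpne
    simp only [e1, e2, ENNReal.rpow_zero, ENNReal.rpow_one, one_mul]
    exact ⟨hvA, le_refl _⟩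
  · -- case 1 < p₀
    have hp₀ne : p₀ ≠ 1 := ne_of_gt h1
    have hp₀1 : (0:ℝ) < p₀ - 1 := by linarith
    set θ : ℝ := (p₀ - 1)/(p - 1) with hθdef
    set δ : ℝ := (p - p₀)/(p - 1) with hδdef
    have hθpos : 0 < θ := div_pos hp₀1 (by linarith)
    have hδpos : 0 < δ := div_pos (by linarith) (by linarith)
    have hsum : θ + δ = 1 := by
      rw [hθdef, hδdef, ← add_div, div_eq_one_iff_eq hpne]; ring
    set β : ℝ := (p - p₀)/((p - 1) * (p₀ - 1)) with hβdef
    have hβ0 : 0 ≤ β := le_of_lt (div_pos (by linarith) (mul_pos (by linarith) hp₀1))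
    have eμ : θ * (-(1/(p₀-1))) = -(1/(p-1)) := by
      rw [hθdef]; field_simp
    have eβ : δ * (-(1/(p₀-1))) = -β := by
      rw [hδdef, hβdef]; field_simp
    have eβ2 : β * (p₀ - 1) = δ := by
      rw [hδdef, hβdef]; field_simp
    have ep : p₀ - 1 = (p - 1) * θ := by
      rw [hθdef]; field_simp
    set w : (Fin n → ℝ) → ℝ≥0∞ := fun x => u x ^ θ * v x ^ δ with hwdef
    -- unfold apConst
    rw [apConst, if_neg hp₀ne, apConst, if_neg hpne1, apConst, if_pos rfl]
    rw [apConst, if_neg hpne1] at huA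
    rw [apConst, if_pos rfl] at hvA
    set Su : ℝ≥0∞ := apSup p u with hSu
    set Sv : ℝ≥0∞ := a1Const v with hSv
    have key : apSup p₀ w ≤ Su ^ θ * Sv ^ δ := by
      rw [apSup]
      refine iSup₂_le fun Q hQ => ?_
      obtain ⟨hV0, hVt⟩ := cube_vol hQ
      set V : ℝ≥0∞ := volume Q with hVdef
      have hVi0 : V⁻¹ ≠ 0 := ENNReal.inv_ne_zero.mpr hVt
      have hVit : V⁻¹ ≠ ∞ := ENNReal.inv_ne_top.mpr hV0
      set σ : (Fin n → ℝ) → ℝ≥0∞ := fun x => u x ^ (-(1/(p-1))) with hσdef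
      set I₁ : ℝ≥0∞ := ∫⁻ x in Q, u x with hI₁
      set I₂ : ℝ≥0∞ := ∫⁻ x in Q, v x with hI₂
      set I₃ : ℝ≥0∞ := ∫⁻ x in Q, σ x with hI₃
      set E : ℝ≥0∞ := essSup (fun x => (v x)⁻¹) (volume.restrict Q) with hE
      -- Hölder
      have hJ1 : (∫⁻ x in Q, w x) ≤ I₁ ^ θ * I₂ ^ δ :=
        ENNReal.lintegral_mul_norm_pow_le hu.1.aemeasurable hv.1.aemeasurable
          hθpos.le hδpos.le hsum
      -- pointwise bound for the dual part
      have hae : ∀ᵐ x ∂(volume.restrict Q),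
          w x ^ (-(1/(p₀-1))) ≤ E ^ β * σ x := by
        have h1 := ae_restrict_of_ae (μ := volume) (s := Q) (hu.2.and hv.2)
        have h2 : ∀ᵐ x ∂(volume.restrict Q), (v x)⁻¹ ≤ E := ENNReal.ae_le_essSup _
        filter_upwards [h1, h2] with x hx hxE
        obtain ⟨⟨hu0, hut⟩, ⟨hv0, hvt⟩⟩ := hx
        have hut' : u x ^ θ ≠ ∞ := ENNReal.rpow_ne_top_of_nonneg hθpos.le hut.ne
        have hvt' : v x ^ δ ≠ ∞ := ENNReal.rpow_ne_top_of_nonneg hδpos.le hvt.ne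
        have : w x ^ (-(1/(p₀-1))) = σ x * ((v x)⁻¹) ^ β := by
          rw [hwdef]
          simp only
          rw [ENNReal.mul_rpow_of_ne_top hut' hvt', ← ENNReal.rpow_mul,
            ← ENNReal.rpow_mul, eμ, eβ, ENNReal.rpow_neg (v x), ENNReal.inv_rpow]
        rw [this, mul_comm]
        exact mul_le_mul_left (ENNReal.rpow_le_rpow hxE hβ0) _
      have hJ2 : (∫⁻ x in Q, w x ^ (-(1/(p₀-1)))) ≤ E ^ β * I₃ := by
        calc (∫⁻ x in Q, w x ^ (-(1/(p₀-1)))) ≤ ∫⁻ x in Q, E ^ β * σ x :=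
              lintegral_mono_ae hae
          _ = E ^ β * I₃ := lintegral_const_mul _ (hu.1.pow_const _)
      -- assemble
      have havg1 : avgE Q w ≤ (I₁ * V⁻¹) ^ θ * (I₂ * V⁻¹) ^ δ := by
        have : (I₁ * V⁻¹) ^ θ * (I₂ * V⁻¹) ^ δ = (I₁ ^ θ * I₂ ^ δ) * V⁻¹ := by
          rw [ENNReal.mul_rpow_of_nonneg _ _ hθpos.le,
            ENNReal.mul_rpow_of_nonneg _ _ hδpos.le]
          have : (V⁻¹) ^ θ * (V⁻¹) ^ δ = V⁻¹ := by
            rw [← ENNReal.rpow_add _ _ hVi0 hVit, hsum, ENNReal.rpow_one]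
          calc I₁ ^ θ * V⁻¹ ^ θ * (I₂ ^ δ * V⁻¹ ^ δ)
              = I₁ ^ θ * I₂ ^ δ * (V⁻¹ ^ θ * V⁻¹ ^ δ) := by ring
            _ = I₁ ^ θ * I₂ ^ δ * V⁻¹ := by rw [this]
        rw [this, avgE, div_eq_mul_inv]
        exact mul_le_mul_left hJ1 _
      have havg2 : (avgE Q fun x => w x ^ (-(1/(p₀-1)))) ^ (p₀ - 1) ≤
          E ^ δ * ((I₃ * V⁻¹) ^ (p - 1)) ^ θ := by
        have step : avgE Q (fun x => w x ^ (-(1/(p₀-1)))) ≤ E ^ β * (I₃ * V⁻¹) := by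
          rw [avgE, div_eq_mul_inv, ← mul_assoc]
          exact mul_le_mul_left hJ2 _
        calc (avgE Q fun x => w x ^ (-(1/(p₀-1)))) ^ (p₀ - 1)
            ≤ (E ^ β * (I₃ * V⁻¹)) ^ (p₀ - 1) :=
              ENNReal.rpow_le_rpow step (by linarith)
          _ = E ^ δ * ((I₃ * V⁻¹) ^ (p - 1)) ^ θ := by
              rw [ENNReal.mul_rpow_of_nonneg _ _ hp₀1.le, ← ENNReal.rpow_mul, eβ2,
                ep, ENNReal.rpow_mul]
      have hu_cube : (I₁ * V⁻¹) * ((I₃ * V⁻¹) ^ (p - 1)) ≤ Su := by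
        have : (I₁ * V⁻¹) * ((I₃ * V⁻¹) ^ (p - 1)) =
            avgE Q u * (avgE Q fun x => u x ^ (-(1/(p-1)))) ^ (p - 1) := by
          rw [avgE, avgE, div_eq_mul_inv, div_eq_mul_inv]
        rw [this, hSu, apSup]
        exact le_iSup₂ (f := fun (Q : Set (Fin n → ℝ)) (_ : IsCube Q) =>
          avgE Q u * (avgE Q fun x => u x ^ (-(1/(p-1)))) ^ (p - 1)) Q hQ
      have hv_cube : (I₂ * V⁻¹) * E ≤ Sv := by
        have : (I₂ * V⁻¹) * E = avgE Q v * essSup (fun x => (v x)⁻¹) (volume.restrict Q) := by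
          rw [avgE, div_eq_mul_inv, hE]
        rw [this, hSv, a1Const]
        exact le_iSup₂ (f := fun (Q : Set (Fin n → ℝ)) (_ : IsCube Q) =>
          avgE Q v * essSup (fun x => (v x)⁻¹) (volume.restrict Q)) Q hQ
      calc avgE Q w * (avgE Q fun x => w x ^ (-(1/(p₀-1)))) ^ (p₀ - 1)
          ≤ ((I₁ * V⁻¹) ^ θ * (I₂ * V⁻¹) ^ δ) * (E ^ δ * ((I₃ * V⁻¹) ^ (p - 1)) ^ θ) :=
            mul_le_mul' havg1 havg2
        _ = ((I₁ * V⁻¹) * ((I₃ * V⁻¹) ^ (p - 1))) ^ θ * ((I₂ * V⁻¹) * E) ^ δ := by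
            rw [ENNReal.mul_rpow_of_nonneg (I₁ * V⁻¹) ((I₃ * V⁻¹) ^ (p - 1)) hθpos.le,
              ENNReal.mul_rpow_of_nonneg (I₂ * V⁻¹) E hδpos.le]
            ac_rfl
        _ ≤ Su ^ θ * Sv ^ δ :=
            mul_le_mul' (ENNReal.rpow_le_rpow hu_cube hθpos.le)
              (ENNReal.rpow_le_rpow hv_cube hδpos.le)
    refine ⟨ne_top_of_le_ne_top ?_ key, key⟩
    exact ENNReal.mul_ne_top (ENNReal.rpow_ne_top_of_nonneg hθpos.le huA)
      (ENNReal.rpow_ne_top_of_nonneg hδpos.le hvA)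
end
end

section
/- Let $1 \le p < \infty$ and $1 < s \le \infty$. If $w_1, w_2 \in A_1$, then the weight $w := w_1^{1/s} w_2^{1-p}$ belongs to $A_p \cap RH_s$, and moreover $\max\{[w]_{A_p}, [w]_{RH_s}\} \le [w_1]_{A_1}^{1/s} [w_2]_{A_1}^{p-1}$. -/
open MeasureTheory ENNReal

noncomputable section

namespace S3Aux

variable {n : ℕ}

lemma isCube_volume {Q : Set (Fin n → ℝ)} (hQ : IsCube Q) :
    volume Q ≠ 0 ∧ volume Q ≠ ∞ := by
  obtain ⟨c, r, hr, rfl⟩ := hQ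
  have hset : {x : Fin n → ℝ | ∀ i, |x i - c i| ≤ r} =
      Set.univ.pi fun i => Set.Icc (c i - r) (c i + r) := by
    ext x
    simp only [Set.mem_setOf_eq, Set.mem_pi, Set.mem_univ, forall_true_left, Set.mem_Icc, abs_le]
    constructor <;> intro h i <;> obtain ⟨h1, h2⟩ := h i <;> constructor <;> linarith
  rw [hset, volume_pi_pi]
  have : ∀ i : Fin n, volume (Set.Icc (c i - r) (c i + r)) = ENNReal.ofReal (2*r) := by
    intro i; rw [Real.volume_Icc]; ring_nf
  rw [Finset.prod_congr rfl fun i _ => this i, Finset.prod_const]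
  have h0 : ENNReal.ofReal (2*r) ≠ 0 := by
    simp [ENNReal.ofReal_eq_zero]; linarith
  exact ⟨by positivity, by exact ENNReal.pow_ne_top ENNReal.ofReal_ne_top⟩

lemma avgE_mono_ae {Q : Set (Fin n → ℝ)} {f g : (Fin n → ℝ) → ℝ≥0∞}
    (h : f ≤ᵐ[volume.restrict Q] g) : avgE Q f ≤ avgE Q g :=
  ENNReal.div_le_div_right (lintegral_mono_ae h) _

lemma avgE_congr_ae {Q : Set (Fin n → ℝ)} {f g : (Fin n → ℝ) → ℝ≥0∞}
    (h : f =ᵐ[volume.restrict Q] g) : avgE Q f = avgE Q g := by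
  unfold avgE; rw [lintegral_congr_ae h]

lemma avgE_const_mul {Q : Set (Fin n → ℝ)} (c : ℝ≥0∞) {f : (Fin n → ℝ) → ℝ≥0∞}
    (hf : Measurable f) : avgE Q (fun x => c * f x) = c * avgE Q f := by
  unfold avgE
  rw [lintegral_const_mul c hf, div_eq_mul_inv, div_eq_mul_inv, mul_assoc]

lemma avgE_const {Q : Set (Fin n → ℝ)} (hQ : IsCube Q) (c : ℝ≥0∞) :
    avgE Q (fun _ => c) = c := by
  unfold avgE
  rw [setLIntegral_const, mul_div_assoc,
    ENNReal.div_self (isCube_volume hQ).1 (isCube_volume hQ).2, mul_one]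

/-- Jensen (concave case) via Hölder: `⨍ f^α ≤ (⨍ f)^α` for `0 ≤ α < 1`. -/
lemma avgE_rpow_le {Q : Set (Fin n → ℝ)} (hQ : IsCube Q) {f : (Fin n → ℝ) → ℝ≥0∞}
    (hf : Measurable f) {α : ℝ} (h0 : 0 ≤ α) (h1 : α < 1) :
    avgE Q (fun x => f x ^ α) ≤ (avgE Q f) ^ α := by
  rcases eq_or_lt_of_le h0 with h | h
  · simp only [← h, ENNReal.rpow_zero]
    rw [avgE_const hQ]
  obtain ⟨hV0, hVt⟩ := isCube_volume hQ
  set ν := volume.restrict Q with hν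
  set V := volume Q with hV
  have hVν : ν Set.univ = V := by rw [hν, Measure.restrict_apply_univ]
  have hα : α ≠ 0 := ne_of_gt h
  have hconj : (1/α).HolderConjugate (1/(1-α)) := by
    rw [Real.holderConjugate_iff]; constructor
    · rw [one_div]; exact (one_lt_inv₀ h).mpr h1
    · simp [inv_inv]
  have hH := ENNReal.lintegral_mul_le_Lp_mul_Lq ν hconj
      ((hf.pow_const α).aemeasurable) aemeasurable_const
      (f := fun x => f x ^ α) (g := fun _ => (1:ℝ≥0∞))
  simp only [Pi.mul_apply, mul_one, ENNReal.one_rpow, lintegral_const, hVν,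
    one_mul] at hH
  have e1 : ∀ x, (f x ^ α) ^ (1/α) = f x := by
    intro x; rw [← ENNReal.rpow_mul]
    rw [mul_one_div, div_self hα, ENNReal.rpow_one]
  simp only [e1] at hH
  have e2 : (1:ℝ) / (1/α) = α := by field_simp
  have e3 : (1:ℝ) / (1/(1-α)) = 1-α := by
    rw [one_div, one_div, inv_inv]
  rw [e2, e3] at hH
  have hdiv : avgE Q (fun x => f x ^ α) ≤ (∫⁻ x, f x ∂ν) ^ α * V ^ (1-α) / V :=
    ENNReal.div_le_div_right hH V
  refine hdiv.trans_eq ?_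
  rw [mul_div_assoc]
  have e4 : V ^ (1-α) / V = (V ^ α)⁻¹ := by
    have h5 : V ^ (1-α) = V ^ (-α) * V := by
      have h6 := ENNReal.rpow_add (-α) 1 hV0 hVt
      rw [ENNReal.rpow_one] at h6
      rw [show (1:ℝ)-α = -α + 1 by ring, h6]
    rw [h5, mul_div_assoc, ENNReal.div_self hV0 hVt, mul_one, ENNReal.rpow_neg]
  rw [e4]
  unfold avgE
  rw [ENNReal.div_rpow_of_nonneg _ _ h0, div_eq_mul_inv]

/-- Jensen (convex case) via Hölder: `(⨍ f)^(-β) ≤ ⨍ f^(-β)` for `β ≥ 0`. -/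
lemma avgE_rpow_neg_le {Q : Set (Fin n → ℝ)} (hQ : IsCube Q) {f : (Fin n → ℝ) → ℝ≥0∞}
    (hf : Measurable f) (hpos : ∀ᵐ x ∂(volume.restrict Q), 0 < f x ∧ f x < ∞)
    {β : ℝ} (hβ : 0 ≤ β) (ha0 : avgE Q f ≠ 0) (hat : avgE Q f ≠ ∞) :
    (avgE Q f) ^ (-β) ≤ avgE Q (fun x => f x ^ (-β)) := by
  rcases eq_or_lt_of_le hβ with h | h
  · simp only [← h, neg_zero, ENNReal.rpow_zero]
    rw [avgE_const hQ]
  obtain ⟨hV0, hVt⟩ := isCube_volume hQ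
  set ν := volume.restrict Q with hνdef
  set V := volume Q with hVdef
  set I := ∫⁻ x, f x ∂ν with hIdef
  set J := ∫⁻ x, f x ^ (-β) ∂ν with hJdef
  have hVν : ν Set.univ = V := by rw [hνdef, Measure.restrict_apply_univ]
  have havg : avgE Q f = I / V := rfl
  have hI0 : I ≠ 0 := by
    intro hI; exact ha0 (by rw [havg, hI, ENNReal.zero_div])
  have hIt : I ≠ ∞ := by
    intro hI
    apply hat
    rw [havg, hI, ENNReal.top_div]
    simp [hVt]
  have hβ' : β ≠ 0 := ne_of_gt h
  have h1β : (0:ℝ) < 1 + β := by linarith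
  have hconj : ((1+β)/β).HolderConjugate (1+β) := by
    rw [Real.holderConjugate_iff]; constructor
    · rw [lt_div_iff₀ h]; linarith
    · field_simp; ring
  have hH := ENNReal.lintegral_mul_le_Lp_mul_Lq ν hconj
      ((hf.pow_const (β/(1+β))).aemeasurable) ((hf.pow_const (-(β/(1+β)))).aemeasurable)
      (f := fun x => f x ^ (β/(1+β))) (g := fun x => f x ^ (-(β/(1+β))))
  have hLHS : ∫⁻ a, ((fun x => f x ^ (β/(1+β))) * fun x => f x ^ (-(β/(1+β)))) a ∂ν = V := by
    rw [lintegral_congr_ae (g := fun _ => (1:ℝ≥0∞)) ?_]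
    · simp [hVν]
    · filter_upwards [hpos] with x hx
      simp only [Pi.mul_apply]
      rw [← ENNReal.rpow_add _ _ (ne_of_gt hx.1) (ne_of_lt hx.2)]
      simp
  rw [hLHS] at hH
  have e1 : ∀ x, (f x ^ (β/(1+β))) ^ ((1+β)/β) = f x := by
    intro x; rw [← ENNReal.rpow_mul]
    rw [show β/(1+β) * ((1+β)/β) = 1 by field_simp, ENNReal.rpow_one]
  have e2 : ∀ x, (f x ^ (-(β/(1+β)))) ^ (1+β) = f x ^ (-β) := by
    intro x; rw [← ENNReal.rpow_mul]
    congr 1; field_simp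
  simp only [e1, e2] at hH
  have e3 : (1:ℝ) / ((1+β)/β) = β/(1+β) := by rw [one_div_div]
  rw [e3] at hH
  have hpow := ENNReal.rpow_le_rpow hH (le_of_lt h1β)
  rw [ENNReal.mul_rpow_of_nonneg _ _ (le_of_lt h1β), ← ENNReal.rpow_mul, ← ENNReal.rpow_mul,
    show β/(1+β) * (1+β) = β by field_simp,
    show 1/(1+β) * (1+β) = 1 by field_simp, ENNReal.rpow_one] at hpow
  have hIβ0 : I ^ β ≠ 0 := (ENNReal.rpow_pos (pos_iff_ne_zero.mpr hI0) hIt).ne'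
  have hIβt : I ^ β ≠ ∞ := ENNReal.rpow_ne_top_of_nonneg hβ hIt
  have goal_eq : (avgE Q f) ^ (-β) = V ^ β / I ^ β := by
    rw [havg, ENNReal.rpow_neg, ENNReal.div_rpow_of_nonneg _ _ hβ,
      ENNReal.inv_div (Or.inr hIβt) (Or.inr hIβ0)]
  rw [goal_eq]
  have havgJ : avgE Q (fun x => f x ^ (-β)) = J / V := rfl
  rw [havgJ, ENNReal.div_le_iff hIβ0 hIβt, mul_comm, ← mul_div_assoc,
    ENNReal.le_div_iff_mul_le (Or.inl hV0) (Or.inl hVt)]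
  calc V ^ β * V = V ^ (1+β) := by
        rw [ENNReal.rpow_add 1 β hV0 hVt, ENNReal.rpow_one, mul_comm]
    _ ≤ I ^ β * J := hpow

lemma a1_facts {w : (Fin n → ℝ) → ℝ≥0∞} (hw : IsWeight w) {Q : Set (Fin n → ℝ)}
    (hQ : IsCube Q) (hC : a1Const w ≠ ∞) :
    avgE Q w ≠ 0 ∧ avgE Q w ≠ ∞ ∧
    essSup (fun x => (w x)⁻¹) (volume.restrict Q) ≠ 0 ∧
    essSup (fun x => (w x)⁻¹) (volume.restrict Q) ≠ ∞ ∧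
    avgE Q w * essSup (fun x => (w x)⁻¹) (volume.restrict Q) ≤ a1Const w := by
  obtain ⟨hV0, hVt⟩ := isCube_volume hQ
  set ν := volume.restrict Q with hνdef
  have hν : ν ≠ 0 := fun h => hV0 (Measure.restrict_eq_zero.mp h)
  have hpos : ∀ᵐ x ∂ν, 0 < w x ∧ w x < ∞ := ae_restrict_of_ae hw.2
  have hle : avgE Q w * essSup (fun x => (w x)⁻¹) ν ≤ a1Const w :=
    le_iSup₂ (f := fun (Q : Set (Fin n → ℝ)) (_ : IsCube Q) =>
      avgE Q w * essSup (fun x => (w x)⁻¹) (volume.restrict Q)) Q hQ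
  have ha0 : avgE Q w ≠ 0 := by
    intro h
    have hI : ∫⁻ x, w x ∂ν = 0 := by
      rcases ENNReal.div_eq_zero_iff.mp h with h' | h'
      · exact h'
      · exact absurd h' hVt
    have hz : w =ᵐ[ν] 0 := (lintegral_eq_zero_iff hw.1).mp hI
    have : ∀ᵐ _x ∂ν, False := by
      filter_upwards [hz, hpos] with x hx hx'
      rw [Pi.zero_apply] at hx
      exact absurd hx (ne_of_gt hx'.1)
    exact hν (ae_eq_bot.mp (Filter.eventually_false_iff_eq_bot.mp this))
  have hm0 : essSup (fun x => (w x)⁻¹) ν ≠ 0 := by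
    intro h
    have hb : ∀ᵐ x ∂ν, (w x)⁻¹ ≤ essSup (fun x => (w x)⁻¹) ν :=
      ENNReal.ae_le_essSup _
    have : ∀ᵐ _x ∂ν, False := by
      filter_upwards [hb, hpos] with x hx hx'
      rw [h, le_zero_iff, ENNReal.inv_eq_zero] at hx
      exact absurd hx (ne_of_lt hx'.2)
    exact hν (ae_eq_bot.mp (Filter.eventually_false_iff_eq_bot.mp this))
  have hprodt : avgE Q w * essSup (fun x => (w x)⁻¹) ν ≠ ∞ :=
    fun h => hC (top_le_iff.mp (h ▸ hle))
  have hmt : essSup (fun x => (w x)⁻¹) ν ≠ ∞ :=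
    fun h => hprodt (ENNReal.mul_eq_top.mpr (Or.inl ⟨ha0, h⟩))
  have hat : avgE Q w ≠ ∞ :=
    fun h => hprodt (ENNReal.mul_eq_top.mpr (Or.inr ⟨h, hm0⟩))
  exact ⟨ha0, hat, hm0, hmt, hle⟩

lemma cross {a₁ m₁ a₂ m₂ C₁ C₂ : ℝ≥0∞} {α β : ℝ} (hα : 0 ≤ α) (hβ : 0 ≤ β)
    (h₁ : a₁ * m₁ ≤ C₁) (h₂ : a₂ * m₂ ≤ C₂) :
    m₂ ^ β * a₁ ^ α * (m₁ ^ α * a₂ ^ β) ≤ C₁ ^ α * C₂ ^ β := by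
  calc m₂^β * a₁^α * (m₁^α * a₂^β) = (a₁*m₁)^α * (a₂*m₂)^β := by
        rw [ENNReal.mul_rpow_of_nonneg _ _ hα, ENNReal.mul_rpow_of_nonneg _ _ hβ]; ring
    _ ≤ _ := mul_le_mul' (ENNReal.rpow_le_rpow h₁ hα) (ENNReal.rpow_le_rpow h₂ hβ)

lemma bound_a1 {w₁ : (Fin n → ℝ) → ℝ≥0∞} (hw₁ : IsWeight w₁) {α : ℝ}
    (hα0 : 0 ≤ α) (hα1 : α < 1) (hA₁ : a1Const w₁ ≠ ∞) :
    a1Const (fun x => w₁ x ^ α) ≤ (a1Const w₁) ^ α := by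
  apply iSup₂_le
  intro Q hQ
  obtain ⟨ha0, hat, hm0, hmt, hle⟩ := a1_facts hw₁ hQ hA₁
  set ν := volume.restrict Q with hνdef
  set m₁ := essSup (fun x => (w₁ x)⁻¹) ν with hm₁
  set a₁ := avgE Q w₁ with ha₁
  have h1 : avgE Q (fun x => w₁ x ^ α) ≤ a₁ ^ α := avgE_rpow_le hQ hw₁.1 hα0 hα1
  have h2 : essSup (fun x => (w₁ x ^ α)⁻¹) ν ≤ m₁ ^ α := by
    refine essSup_le_of_ae_le _ ?_
    filter_upwards [ENNReal.ae_le_essSup (fun x => (w₁ x)⁻¹) (μ := ν)] with x hx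
    rw [← ENNReal.inv_rpow]
    exact ENNReal.rpow_le_rpow hx hα0
  calc avgE Q (fun x => w₁ x ^ α) * essSup (fun x => (w₁ x ^ α)⁻¹) ν
      ≤ a₁ ^ α * m₁ ^ α := mul_le_mul' h1 h2
    _ = (a₁ * m₁) ^ α := (ENNReal.mul_rpow_of_nonneg _ _ hα0).symm
    _ ≤ (a1Const w₁) ^ α := ENNReal.rpow_le_rpow hle hα0

lemma bound_apSup {p : ℝ} (hp : 1 < p) {α : ℝ} (hα0 : 0 ≤ α) (hα1 : α < 1)
    {w₁ w₂ : (Fin n → ℝ) → ℝ≥0∞} (hw₁ : IsWeight w₁) (hw₂ : IsWeight w₂)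
    (hA₁ : a1Const w₁ ≠ ∞) (hA₂ : a1Const w₂ ≠ ∞) :
    apSup p (fun x => w₁ x ^ α * w₂ x ^ (1-p)) ≤ a1Const w₁ ^ α * a1Const w₂ ^ (p-1) := by
  apply iSup₂_le
  intro Q hQ
  obtain ⟨ha₁0, ha₁t, hm₁0, hm₁t, hle₁⟩ := a1_facts hw₁ hQ hA₁
  obtain ⟨ha₂0, ha₂t, hm₂0, hm₂t, hle₂⟩ := a1_facts hw₂ hQ hA₂
  set ν := volume.restrict Q with hνdef
  set m₁ := essSup (fun x => (w₁ x)⁻¹) ν with hm₁def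
  set m₂ := essSup (fun x => (w₂ x)⁻¹) ν with hm₂def
  set a₁ := avgE Q w₁ with ha₁def
  set a₂ := avgE Q w₂ with ha₂def
  have hβ0 : (0:ℝ) ≤ p - 1 := by linarith
  have hβpos : (0:ℝ) < p - 1 := by linarith
  have hpos₁ : ∀ᵐ x ∂ν, 0 < w₁ x ∧ w₁ x < ∞ := ae_restrict_of_ae hw₁.2
  have hpos₂ : ∀ᵐ x ∂ν, 0 < w₂ x ∧ w₂ x < ∞ := ae_restrict_of_ae hw₂.2
  have hm₁ae : ∀ᵐ x ∂ν, (w₁ x)⁻¹ ≤ m₁ := ENNReal.ae_le_essSup _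
  have hm₂ae : ∀ᵐ x ∂ν, (w₂ x)⁻¹ ≤ m₂ := ENNReal.ae_le_essSup _
  -- numerator estimate
  have E2 : avgE Q (fun x => w₁ x ^ α * w₂ x ^ (1-p)) ≤ m₂ ^ (p-1) * a₁ ^ α := by
    have step : (fun x => w₁ x ^ α * w₂ x ^ (1-p)) ≤ᵐ[ν]
        (fun x => m₂ ^ (p-1) * w₁ x ^ α) := by
      filter_upwards [hm₂ae] with x hx
      have hx2 : w₂ x ^ (1-p) ≤ m₂ ^ (p-1) := by
        rw [show (1:ℝ)-p = -(p-1) by ring, ENNReal.rpow_neg, ← ENNReal.inv_rpow]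
        exact ENNReal.rpow_le_rpow hx hβ0
      calc w₁ x ^ α * w₂ x ^ (1-p) ≤ w₁ x ^ α * m₂ ^ (p-1) := mul_le_mul_right hx2 _
        _ = m₂ ^ (p-1) * w₁ x ^ α := mul_comm _ _
    calc avgE Q (fun x => w₁ x ^ α * w₂ x ^ (1-p))
        ≤ avgE Q (fun x => m₂ ^ (p-1) * w₁ x ^ α) := avgE_mono_ae step
      _ = m₂ ^ (p-1) * avgE Q (fun x => w₁ x ^ α) :=
          avgE_const_mul _ (hw₁.1.pow_const α)
      _ ≤ m₂ ^ (p-1) * a₁ ^ α :=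
          mul_le_mul_right (avgE_rpow_le hQ hw₁.1 hα0 hα1) _
  -- dual weight estimate
  have E4 : avgE Q (fun x => (w₁ x ^ α * w₂ x ^ (1-p)) ^ (-(1/(p-1)))) ≤
      m₁ ^ (α/(p-1)) * a₂ := by
    have step : (fun x => (w₁ x ^ α * w₂ x ^ (1-p)) ^ (-(1/(p-1)))) ≤ᵐ[ν]
        (fun x => m₁ ^ (α/(p-1)) * w₂ x) := by
      filter_upwards [hm₁ae, hpos₁, hpos₂] with x hx hx1 hx2
      have hne1 : w₁ x ^ α ≠ ∞ := ENNReal.rpow_ne_top_of_nonneg hα0 (ne_of_lt hx1.2)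
      have hne2 : w₂ x ^ ((1:ℝ)-p) ≠ ∞ := by
        rw [Ne, ENNReal.rpow_eq_top_iff]
        push_neg
        exact ⟨fun h => absurd h (ne_of_gt hx2.1), fun h => absurd h (ne_of_lt hx2.2)⟩
      rw [ENNReal.mul_rpow_of_ne_top hne1 hne2, ← ENNReal.rpow_mul, ← ENNReal.rpow_mul,
        show (1-p) * -(1/(p-1)) = 1 by field_simp; ring, ENNReal.rpow_one]
      have h1 : w₁ x ^ (α * -(1/(p-1))) ≤ m₁ ^ (α/(p-1)) := by
        rw [show α * -(1/(p-1)) = -(α/(p-1)) by ring, ENNReal.rpow_neg, ← ENNReal.inv_rpow]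
        exact ENNReal.rpow_le_rpow hx (div_nonneg hα0 hβ0)
      exact mul_le_mul_left h1 _
    calc avgE Q (fun x => (w₁ x ^ α * w₂ x ^ (1-p)) ^ (-(1/(p-1))))
        ≤ avgE Q (fun x => m₁ ^ (α/(p-1)) * w₂ x) := avgE_mono_ae step
      _ = m₁ ^ (α/(p-1)) * a₂ := avgE_const_mul _ hw₂.1
  calc avgE Q (fun x => w₁ x ^ α * w₂ x ^ (1-p)) *
        (avgE Q fun x => (w₁ x ^ α * w₂ x ^ (1-p)) ^ (-(1/(p-1)))) ^ (p-1)
      ≤ (m₂ ^ (p-1) * a₁ ^ α) * (m₁ ^ (α/(p-1)) * a₂) ^ (p-1) :=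
        mul_le_mul' E2 (ENNReal.rpow_le_rpow E4 hβ0)
    _ = m₂ ^ (p-1) * a₁ ^ α * (m₁ ^ α * a₂ ^ (p-1)) := by
        rw [ENNReal.mul_rpow_of_nonneg _ _ hβ0, ← ENNReal.rpow_mul,
          show α/(p-1) * (p-1) = α by field_simp]
    _ ≤ a1Const w₁ ^ α * a1Const w₂ ^ (p-1) := cross hα0 hβ0 hle₁ hle₂

lemma bound_rh_inf {p : ℝ} (hp : 1 ≤ p) {w₂ : (Fin n → ℝ) → ℝ≥0∞}
    (hw₂ : IsWeight w₂) (hA₂ : a1Const w₂ ≠ ∞) :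
    (⨆ (Q : Set (Fin n → ℝ)) (_ : IsCube Q),
        essSup (fun x => w₂ x ^ (1-p)) (volume.restrict Q) /
          avgE Q (fun x => w₂ x ^ (1-p))) ≤ a1Const w₂ ^ (p-1) := by
  apply iSup₂_le
  intro Q hQ
  obtain ⟨ha₂0, ha₂t, hm₂0, hm₂t, hle₂⟩ := a1_facts hw₂ hQ hA₂
  set ν := volume.restrict Q with hνdef
  set m₂ := essSup (fun x => (w₂ x)⁻¹) ν with hm₂def
  set a₂ := avgE Q w₂ with ha₂def
  have hβ0 : (0:ℝ) ≤ p - 1 := by linarith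
  have hpos₂ : ∀ᵐ x ∂ν, 0 < w₂ x ∧ w₂ x < ∞ := ae_restrict_of_ae hw₂.2
  have hm₂ae : ∀ᵐ x ∂ν, (w₂ x)⁻¹ ≤ m₂ := ENNReal.ae_le_essSup _
  have hsup : essSup (fun x => w₂ x ^ (1-p)) ν ≤ m₂ ^ (p-1) := by
    refine essSup_le_of_ae_le _ ?_
    filter_upwards [hm₂ae] with x hx
    rw [show (1:ℝ)-p = -(p-1) by ring, ENNReal.rpow_neg, ← ENNReal.inv_rpow]
    exact ENNReal.rpow_le_rpow hx hβ0
  have havg : (a₂ ^ (p-1))⁻¹ ≤ avgE Q (fun x => w₂ x ^ (1-p)) := by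
    have h1 : avgE Q (fun x => w₂ x ^ (1-p)) = avgE Q (fun x => w₂ x ^ (-(p-1))) := by
      congr 1; funext x; congr 1; ring
    rw [h1, ← ENNReal.rpow_neg]
    exact avgE_rpow_neg_le hQ hw₂.1 hpos₂ hβ0 ha₂0 ha₂t
  have ha₂β0 : a₂ ^ (p-1) ≠ 0 := (ENNReal.rpow_pos (pos_iff_ne_zero.mpr ha₂0) ha₂t).ne'
  have ha₂βt : a₂ ^ (p-1) ≠ ∞ := ENNReal.rpow_ne_top_of_nonneg hβ0 ha₂t
  apply ENNReal.div_le_of_le_mul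
  calc essSup (fun x => w₂ x ^ (1-p)) ν ≤ m₂ ^ (p-1) := hsup
    _ ≤ a1Const w₂ ^ (p-1) * (a₂ ^ (p-1))⁻¹ := by
        rw [← div_eq_mul_inv, ENNReal.le_div_iff_mul_le (Or.inl ha₂β0) (Or.inl ha₂βt)]
        calc m₂ ^ (p-1) * a₂ ^ (p-1) = (a₂ * m₂) ^ (p-1) := by
              rw [ENNReal.mul_rpow_of_nonneg _ _ hβ0]; ring
          _ ≤ a1Const w₂ ^ (p-1) := ENNReal.rpow_le_rpow hle₂ hβ0
    _ ≤ a1Const w₂ ^ (p-1) * avgE Q (fun x => w₂ x ^ (1-p)) :=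
        mul_le_mul_right havg _

lemma bound_rh {p : ℝ} (hp : 1 ≤ p) {SR α : ℝ} (hSR : 1 < SR) (hα : α = SR⁻¹)
    {w₁ w₂ : (Fin n → ℝ) → ℝ≥0∞} (hw₁ : IsWeight w₁) (hw₂ : IsWeight w₂)
    (hA₁ : a1Const w₁ ≠ ∞) (hA₂ : a1Const w₂ ≠ ∞) :
    rhConst SR (fun x => w₁ x ^ α * w₂ x ^ (1-p)) ≤
      a1Const w₁ ^ α * a1Const w₂ ^ (p-1) := by
  apply iSup₂_le
  intro Q hQ
  obtain ⟨ha₁0, ha₁t, hm₁0, hm₁t, hle₁⟩ := a1_facts hw₁ hQ hA₁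
  obtain ⟨ha₂0, ha₂t, hm₂0, hm₂t, hle₂⟩ := a1_facts hw₂ hQ hA₂
  set ν := volume.restrict Q with hνdef
  set m₁ := essSup (fun x => (w₁ x)⁻¹) ν with hm₁def
  set m₂ := essSup (fun x => (w₂ x)⁻¹) ν with hm₂def
  set a₁ := avgE Q w₁ with ha₁def
  set a₂ := avgE Q w₂ with ha₂def
  have hSR0 : (0:ℝ) < SR := lt_trans one_pos hSR
  have hα0 : 0 ≤ α := by rw [hα]; positivity
  have hαSR : α * SR = 1 := by rw [hα]; field_simp
  have hβ0 : (0:ℝ) ≤ p - 1 := by linarith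
  have hpos₁ : ∀ᵐ x ∂ν, 0 < w₁ x ∧ w₁ x < ∞ := ae_restrict_of_ae hw₁.2
  have hpos₂ : ∀ᵐ x ∂ν, 0 < w₂ x ∧ w₂ x < ∞ := ae_restrict_of_ae hw₂.2
  have hm₁ae : ∀ᵐ x ∂ν, (w₁ x)⁻¹ ≤ m₁ := ENNReal.ae_le_essSup _
  have hm₂ae : ∀ᵐ x ∂ν, (w₂ x)⁻¹ ≤ m₂ := ENNReal.ae_le_essSup _
  -- numerator
  have E1 : avgE Q (fun x => (w₁ x ^ α * w₂ x ^ (1-p)) ^ SR) ≤ m₂ ^ ((p-1)*SR) * a₁ := by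
    have step : (fun x => (w₁ x ^ α * w₂ x ^ (1-p)) ^ SR) ≤ᵐ[ν]
        (fun x => m₂ ^ ((p-1)*SR) * w₁ x) := by
      filter_upwards [hm₂ae] with x hx
      rw [ENNReal.mul_rpow_of_nonneg _ _ (le_of_lt hSR0), ← ENNReal.rpow_mul,
        ← ENNReal.rpow_mul, hαSR, ENNReal.rpow_one]
      have hx2 : w₂ x ^ ((1-p)*SR) ≤ m₂ ^ ((p-1)*SR) := by
        rw [show (1-p)*SR = -((p-1)*SR) by ring, ENNReal.rpow_neg, ← ENNReal.inv_rpow]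
        exact ENNReal.rpow_le_rpow hx (by positivity)
      calc w₁ x * w₂ x ^ ((1-p)*SR) ≤ w₁ x * m₂ ^ ((p-1)*SR) := mul_le_mul_right hx2 _
        _ = m₂ ^ ((p-1)*SR) * w₁ x := mul_comm _ _
    calc avgE Q (fun x => (w₁ x ^ α * w₂ x ^ (1-p)) ^ SR)
        ≤ avgE Q (fun x => m₂ ^ ((p-1)*SR) * w₁ x) := avgE_mono_ae step
      _ = m₂ ^ ((p-1)*SR) * a₁ := avgE_const_mul _ hw₁.1
  -- denominator
  have E3 : (m₁ ^ α)⁻¹ * (a₂ ^ (p-1))⁻¹ ≤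
      avgE Q (fun x => w₁ x ^ α * w₂ x ^ (1-p)) := by
    have step : (fun x => (m₁ ^ α)⁻¹ * w₂ x ^ (1-p)) ≤ᵐ[ν]
        (fun x => w₁ x ^ α * w₂ x ^ (1-p)) := by
      filter_upwards [hm₁ae] with x hx
      have h1 : (m₁ ^ α)⁻¹ ≤ w₁ x ^ α := by
        rw [← ENNReal.inv_rpow]
        exact ENNReal.rpow_le_rpow (le_trans (ENNReal.inv_le_inv.mpr hx) (le_of_eq (inv_inv (w₁ x)))) hα0
      exact mul_le_mul_left h1 _
    have havg2 : (a₂ ^ (p-1))⁻¹ ≤ avgE Q (fun x => w₂ x ^ (1-p)) := by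
      have h1 : avgE Q (fun x => w₂ x ^ (1-p)) = avgE Q (fun x => w₂ x ^ (-(p-1))) := by
        congr 1; funext x; congr 1; ring
      rw [h1, ← ENNReal.rpow_neg]
      exact avgE_rpow_neg_le hQ hw₂.1 hpos₂ hβ0 ha₂0 ha₂t
    calc (m₁ ^ α)⁻¹ * (a₂ ^ (p-1))⁻¹
        ≤ (m₁ ^ α)⁻¹ * avgE Q (fun x => w₂ x ^ (1-p)) := mul_le_mul_right havg2 _
      _ = avgE Q (fun x => (m₁ ^ α)⁻¹ * w₂ x ^ (1-p)) :=
          (avgE_const_mul _ (hw₂.1.pow_const (1-p))).symm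
      _ ≤ avgE Q (fun x => w₁ x ^ α * w₂ x ^ (1-p)) := avgE_mono_ae step
  -- combine
  have hm₁α0 : m₁ ^ α ≠ 0 := (ENNReal.rpow_pos (pos_iff_ne_zero.mpr hm₁0) hm₁t).ne'
  have hm₁αt : m₁ ^ α ≠ ∞ := ENNReal.rpow_ne_top_of_nonneg hα0 hm₁t
  have ha₂β0 : a₂ ^ (p-1) ≠ 0 := (ENNReal.rpow_pos (pos_iff_ne_zero.mpr ha₂0) ha₂t).ne'
  have ha₂βt : a₂ ^ (p-1) ≠ ∞ := ENNReal.rpow_ne_top_of_nonneg hβ0 ha₂t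
  set D := m₁ ^ α * a₂ ^ (p-1) with hDdef
  have hD0 : D ≠ 0 := mul_ne_zero hm₁α0 ha₂β0
  have hDt : D ≠ ∞ := ENNReal.mul_ne_top hm₁αt ha₂βt
  have hDinv : (m₁ ^ α)⁻¹ * (a₂ ^ (p-1))⁻¹ = D⁻¹ :=
    (ENNReal.mul_inv (Or.inl hm₁α0) (Or.inl hm₁αt)).symm
  have h1SR : (1:ℝ)/SR = α := by rw [one_div, hα]
  apply ENNReal.div_le_of_le_mul
  have hnum : (avgE Q (fun x => (w₁ x ^ α * w₂ x ^ (1-p)) ^ SR)) ^ ((1:ℝ)/SR) ≤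
      m₂ ^ (p-1) * a₁ ^ α := by
    rw [h1SR]
    calc (avgE Q (fun x => (w₁ x ^ α * w₂ x ^ (1-p)) ^ SR)) ^ α
        ≤ (m₂ ^ ((p-1)*SR) * a₁) ^ α := ENNReal.rpow_le_rpow E1 hα0
      _ = m₂ ^ (p-1) * a₁ ^ α := by
          rw [ENNReal.mul_rpow_of_nonneg _ _ hα0, ← ENNReal.rpow_mul,
            show (p-1)*SR*α = p-1 by rw [mul_assoc, mul_comm SR α, hαSR, mul_one]]
  have hmid : m₂ ^ (p-1) * a₁ ^ α ≤ (a1Const w₁ ^ α * a1Const w₂ ^ (p-1)) * D⁻¹ := by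
    rw [← div_eq_mul_inv, ENNReal.le_div_iff_mul_le (Or.inl hD0) (Or.inl hDt), hDdef]
    exact cross hα0 hβ0 hle₁ hle₂
  calc (avgE Q (fun x => (w₁ x ^ α * w₂ x ^ (1-p)) ^ SR)) ^ ((1:ℝ)/SR)
      ≤ m₂ ^ (p-1) * a₁ ^ α := hnum
    _ ≤ (a1Const w₁ ^ α * a1Const w₂ ^ (p-1)) * D⁻¹ := hmid
    _ ≤ (a1Const w₁ ^ α * a1Const w₂ ^ (p-1)) *
          avgE Q (fun x => w₁ x ^ α * w₂ x ^ (1-p)) := by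
        apply mul_le_mul_right
        rw [← hDinv]
        exact E3

end S3Aux

open S3Aux in

/-- If `1 ≤ p < ∞`, `1 < s ≤ ∞`, and `w₁, w₂ ∈ A_1`, then
`w := w₁^{1/s} w₂^{1-p} ∈ A_p ∩ RH_s` with
`max([w]_{A_p}, [w]_{RH_s}) ≤ [w₁]_{A_1}^{1/s} [w₂]_{A_1}^{p-1}`. -/
theorem statement3 {n : ℕ} (p : ℝ) (s : ℝ≥0∞) (hp : 1 ≤ p) (hs : 1 < s)
    (w₁ w₂ : (Fin n → ℝ) → ℝ≥0∞) (hw₁ : IsWeight w₁) (hw₂ : IsWeight w₂)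
    (hA₁ : apConst 1 w₁ ≠ ∞) (hA₂ : apConst 1 w₂ ≠ ∞) :
    apConst p (fun x => w₁ x ^ (s⁻¹).toReal * w₂ x ^ (1 - p)) ≠ ∞ ∧
    rhConstE s (fun x => w₁ x ^ (s⁻¹).toReal * w₂ x ^ (1 - p)) ≠ ∞ ∧
    max (apConst p (fun x => w₁ x ^ (s⁻¹).toReal * w₂ x ^ (1 - p)))
        (rhConstE s (fun x => w₁ x ^ (s⁻¹).toReal * w₂ x ^ (1 - p))) ≤
      apConst 1 w₁ ^ (s⁻¹).toReal * apConst 1 w₂ ^ (p - 1) := by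
  have hα0 : (0:ℝ) ≤ (s⁻¹).toReal := ENNReal.toReal_nonneg
  have hα1 : (s⁻¹).toReal < 1 := by
    have h1 : s⁻¹ < 1 := ENNReal.inv_lt_one.mpr hs
    have h2 : s⁻¹ ≠ ⊤ := (h1.trans_le le_top).ne
    have := (ENNReal.toReal_lt_toReal h2 ENNReal.one_ne_top).mpr h1
    simpa using this
  have hβ0 : (0:ℝ) ≤ p - 1 := by linarith
  have hC₁ : apConst 1 w₁ = a1Const w₁ := by simp [apConst]
  have hC₂ : apConst 1 w₂ = a1Const w₂ := by simp [apConst]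
  rw [hC₁] at hA₁ ⊢
  rw [hC₂] at hA₂ ⊢
  have hAp : apConst p (fun x => w₁ x ^ (s⁻¹).toReal * w₂ x ^ (1 - p)) ≤
      a1Const w₁ ^ (s⁻¹).toReal * a1Const w₂ ^ (p-1) := by
    by_cases hp1 : p = 1
    · subst hp1
      rw [apConst, if_pos rfl]
      have heq : (fun x => w₁ x ^ (s⁻¹).toReal * w₂ x ^ ((1:ℝ) - 1)) =
          fun x => w₁ x ^ (s⁻¹).toReal := by
        funext x
        rw [sub_self, ENNReal.rpow_zero, mul_one]
      rw [heq, sub_self, ENNReal.rpow_zero, mul_one]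
      exact bound_a1 hw₁ hα0 hα1 hA₁
    · rw [apConst, if_neg hp1]
      exact bound_apSup (lt_of_le_of_ne hp (Ne.symm hp1)) hα0 hα1 hw₁ hw₂ hA₁ hA₂
  have hRH : rhConstE s (fun x => w₁ x ^ (s⁻¹).toReal * w₂ x ^ (1 - p)) ≤
      a1Const w₁ ^ (s⁻¹).toReal * a1Const w₂ ^ (p-1) := by
    by_cases hsi : s = ∞
    · subst hsi
      rw [rhConstE, if_pos rfl]
      simp only [ENNReal.inv_top, ENNReal.toReal_zero, ENNReal.rpow_zero, one_mul]
      exact bound_rh_inf hp hw₂ hA₂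
    · rw [rhConstE, if_neg hsi]
      have hSR : 1 < s.toReal := by
        have := (ENNReal.toReal_lt_toReal ENNReal.one_ne_top hsi).mpr hs
        simpa using this
      have hα : (s⁻¹).toReal = (s.toReal)⁻¹ := ENNReal.toReal_inv s
      exact bound_rh hp hSR hα hw₁ hw₂ hA₁ hA₂
  have hC : a1Const w₁ ^ (s⁻¹).toReal * a1Const w₂ ^ (p-1) ≠ ∞ :=
    ENNReal.mul_ne_top (ENNReal.rpow_ne_top_of_nonneg hα0 hA₁)
      (ENNReal.rpow_ne_top_of_nonneg hβ0 hA₂)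
  exact ⟨ne_top_of_le_ne_top hC hAp, ne_top_of_le_ne_top hC hRH, max_le hAp hRH⟩
end
end

section
/- Let $1 \le \mathfrak{p}_- < \mathfrak{p}_+ \le \infty$ and $p \in (\mathfrak{p}_-, \mathfrak{p}_+)$, and set $\tau_p = (\mathfrak{p}_+/p)'(p/\mathfrak{p}_- - 1) + 1$. Then $w^p \in A_{p/\mathfrak{p}_-} \cap RH_{(\mathfrak{p}_+/p)'}$ if and only if $w^{-p'} \in A_{p'/\mathfrak{p}_+'} \cap RH_{(\mathfrak{p}_-'/p')'}$, and moreover $[w^{p(\mathfrak{p}_+/p)'}]_{A_{\tau_p}} = [w^{-p'(\mathfrak{p}_-'/p')'}]_{A_{\tau_p'}}^{\tau_p - 1}$. -/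
open MeasureTheory ENNReal

noncomputable section

variable {n : ℕ}

lemma IsCube.eq_pi {Q : Set (Fin n → ℝ)} (hQ : IsCube Q) :
    ∃ (c : Fin n → ℝ) (r : ℝ), 0 < r ∧
      Q = Set.pi Set.univ (fun i => Set.Icc (c i - r) (c i + r)) := by
  obtain ⟨c, r, hr, hQ⟩ := hQ
  refine ⟨c, r, hr, hQ.trans ?_⟩
  ext x
  rw [Set.mem_univ_pi]
  simp only [Set.mem_setOf_eq, Set.mem_Icc, abs_le]
  constructor
  · intro h i; constructor <;> linarith [(h i).1, (h i).2]
  · intro h i; constructor <;> linarith [(h i).1, (h i).2]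

lemma IsCube.measurableSet {Q : Set (Fin n → ℝ)} (hQ : IsCube Q) : MeasurableSet Q := by
  obtain ⟨c, r, hr, rfl⟩ := hQ.eq_pi
  exact MeasurableSet.univ_pi fun i => measurableSet_Icc

lemma IsCube.volume_pos {Q : Set (Fin n → ℝ)} (hQ : IsCube Q) : 0 < volume Q := by
  obtain ⟨c, r, hr, rfl⟩ := hQ.eq_pi
  rw [volume_pi_pi]
  refine CanonicallyOrderedAdd.prod_pos.2 fun i _ => ?_
  rw [Real.volume_Icc, ENNReal.ofReal_pos]; linarith

lemma IsCube.volume_lt_top {Q : Set (Fin n → ℝ)} (hQ : IsCube Q) : volume Q < ∞ := by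
  obtain ⟨c, r, hr, rfl⟩ := hQ.eq_pi
  rw [volume_pi_pi]
  exact ENNReal.prod_lt_top fun i _ => by simp [Real.volume_Icc]

lemma ennreal_div_mul_div {a b c d : ℝ≥0∞} (hb : b ≠ 0) (hb' : b ≠ ∞) :
    a / b * (c / d) = a * c / (b * d) := by
  rw [div_eq_mul_inv, div_eq_mul_inv, div_eq_mul_inv,
    ENNReal.mul_inv (Or.inl hb) (Or.inl hb')]
  ring

lemma avgE_pos {Q : Set (Fin n → ℝ)} (hQ : IsCube Q) {w : (Fin n → ℝ) → ℝ≥0∞}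
    (hm : Measurable w) (hpos : ∀ᵐ x ∂(volume : Measure (Fin n → ℝ)), 0 < w x) :
    0 < avgE Q w := by
  refine ENNReal.div_pos (fun h0 => ?_) hQ.volume_lt_top.ne
  rw [lintegral_eq_zero_iff hm] at h0
  have : ∀ᵐ x ∂(volume.restrict Q), False := by
    filter_upwards [h0, ae_restrict_of_ae hpos] with x h1 h2
    simp [Pi.zero_apply] at h1; exact h2.ne' h1
  have hQ0 : volume Q = 0 := by
    have := ae_iff.mp this
    simpa [Measure.restrict_apply_univ] using this
  exact hQ.volume_pos.ne' hQ0

/-- Power-mean (Jensen) inequality for averages. -/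
lemma avgE_le_rpow_avgE {Q : Set (Fin n → ℝ)} (hQ : IsCube Q) {w : (Fin n → ℝ) → ℝ≥0∞}
    (hm : Measurable w) {s : ℝ} (hs : 1 ≤ s) :
    avgE Q w ≤ (avgE Q fun x => w x ^ s) ^ (1 / s) := by
  rcases eq_or_lt_of_le hs with h1 | h1
  · simp [← h1, avgE]
  have hs0 : s ≠ 0 := by positivity
  set V := volume Q with hV
  have hV0 : V ≠ 0 := hQ.volume_pos.ne'
  have hVt : V ≠ ∞ := hQ.volume_lt_top.ne
  have hconj : s.HolderConjugate (s / (s - 1)) := Real.HolderConjugate.conjExponent h1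
  have holder := ENNReal.lintegral_mul_le_Lp_mul_Lq (volume.restrict Q) hconj
    hm.aemeasurable aemeasurable_const (g := fun _ => (1 : ℝ≥0∞))
  simp only [Pi.mul_apply, mul_one, ENNReal.one_rpow, lintegral_const,
    Measure.restrict_apply_univ, one_mul] at holder
  rw [← hV] at holder
  -- holder : ∫⁻ w ≤ (∫⁻ w^s)^(1/s) * V^(1/(s/(s-1)))
  rw [avgE, avgE]
  rw [ENNReal.div_rpow_of_nonneg _ _ (by positivity)]
  calc (∫⁻ x in Q, w x) / V ≤ ((∫⁻ x in Q, w x ^ s) ^ (1/s) * V ^ (1/(s/(s-1)))) / V :=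
        ENNReal.div_le_div_right holder V
    _ = (∫⁻ x in Q, w x ^ s) ^ (1/s) / V ^ (1/s) := by
        rw [mul_div_assoc, div_eq_mul_inv ((∫⁻ x in Q, w x ^ s) ^ (1/s))]
        congr 1
        have e1 : 1/(s/(s-1)) - (1:ℝ) = -(1/s) := by
          rw [one_div_div]; field_simp; ring
        have e2 := ENNReal.rpow_sub (1/(s/(s-1))) 1 hV0 hVt
        rw [ENNReal.rpow_one] at e2
        rw [← e2, e1, ENNReal.rpow_neg]

/-- `1 ≤ ⨍ w · (⨍ w^{-1/(q-1)})^{q-1}`. -/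
lemma one_le_apTerm {Q : Set (Fin n → ℝ)} (hQ : IsCube Q) {w : (Fin n → ℝ) → ℝ≥0∞}
    (hm : Measurable w) (hae : ∀ᵐ x ∂(volume : Measure (Fin n → ℝ)), 0 < w x ∧ w x < ∞)
    {q : ℝ} (hq : 1 < q) :
    1 ≤ avgE Q w * (avgE Q fun x => w x ^ (-(1 / (q - 1)))) ^ (q - 1) := by
  have hq0 : (0:ℝ) < q := by linarith
  set V := volume Q with hV
  have hV0 : V ≠ 0 := hQ.volume_pos.ne'
  have hVt : V ≠ ∞ := hQ.volume_lt_top.ne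
  set A := ∫⁻ x in Q, w x with hA
  set B := ∫⁻ x in Q, w x ^ (-(1 / (q - 1))) with hB
  have hconj : q.HolderConjugate (q / (q - 1)) := Real.HolderConjugate.conjExponent hq
  have holder := ENNReal.lintegral_mul_le_Lp_mul_Lq (volume.restrict Q) hconj
    (hm.pow_const (1/q)).aemeasurable (hm.pow_const (-(1/q))).aemeasurable
  have hVle : V ≤ A ^ (1/q) * B ^ (1/(q/(q-1))) := by
    have h1 : ∫⁻ x in Q, ((fun x => w x ^ (1/q)) * fun x => w x ^ (-(1/q))) x
        ∂volume = V := by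
      rw [hV, ← setLIntegral_one]
      refine lintegral_congr_ae ?_
      filter_upwards [ae_restrict_of_ae hae] with x ⟨hx0, hxt⟩
      simp only [Pi.mul_apply]
      rw [← ENNReal.rpow_add _ _ hx0.ne' hxt.ne]
      norm_num
    have h2 : (∫⁻ x in Q, ((fun x => w x ^ (1/q)) x) ^ q ∂volume) = A := by
      refine lintegral_congr fun x => ?_
      rw [← ENNReal.rpow_mul]
      norm_num [hq0.ne']
    have h3 : (∫⁻ x in Q, ((fun x => w x ^ (-(1/q))) x) ^ (q/(q-1)) ∂volume) = B := by
      refine lintegral_congr fun x => ?_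
      rw [← ENNReal.rpow_mul]
      congr 1
      field_simp
    rw [h1, h2, h3] at holder
    exact holder
  have hkey : V ^ q ≤ A * B ^ (q - 1) := by
    calc V ^ q ≤ (A ^ (1/q) * B ^ (1/(q/(q-1)))) ^ q :=
          ENNReal.rpow_le_rpow hVle hq0.le
      _ = A * B ^ (q-1) := by
          rw [ENNReal.mul_rpow_of_nonneg _ _ hq0.le, ← ENNReal.rpow_mul, ← ENNReal.rpow_mul]
          congr 2
          · field_simp; exact ENNReal.rpow_one A
          · field_simp
  rw [avgE, avgE, ← hA, ← hB, ENNReal.div_rpow_of_nonneg _ _ (by linarith : (0:ℝ) ≤ q - 1),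
    ennreal_div_mul_div hV0 hVt]
  have hVq : V ^ (q-1) ≠ 0 := (ENNReal.rpow_pos (pos_iff_ne_zero.mpr hV0) hVt).ne'
  rw [ENNReal.le_div_iff_mul_le (Or.inl (mul_ne_zero hV0 hVq)) (Or.inl ?_), one_mul]
  · calc V * V ^ (q-1) = V ^ q := by
          rw [← ENNReal.rpow_one V, ← ENNReal.rpow_mul, ← ENNReal.rpow_add _ _ hV0 hVt]
          norm_num
      _ ≤ A * B ^ (q-1) := hkey
  · exact ENNReal.mul_ne_top hVt (ENNReal.rpow_ne_top_of_nonneg (by linarith) hVt)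

lemma ennreal_iSup_rpow {ι : Sort*} (f : ι → ℝ≥0∞) {c : ℝ} (hc : 0 < c) :
    (⨆ i, f i) ^ c = ⨆ i, f i ^ c := by
  have := (ENNReal.orderIsoRpow c hc).map_iSup f
  simp only [ENNReal.orderIsoRpow_apply] at this
  exact this

lemma rconj_sub_one {τ : ℝ} (hτ : 1 < τ) : rconj τ - 1 = 1 / (τ - 1) := by
  have h : τ - 1 ≠ 0 := by linarith
  unfold rconj
  field_simp
  ring

/-- Exact duality for `A_τ` constants. -/
lemma apSup_dual {τ : ℝ} (hτ : 1 < τ) (v : (Fin n → ℝ) → ℝ≥0∞) :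
    apSup τ v = apSup (rconj τ) (fun x => v x ^ (-(1 / (τ - 1)))) ^ (τ - 1) := by
  have hτ0 : (0:ℝ) < τ - 1 := by linarith
  have hτ' := rconj_sub_one hτ
  rw [apSup, apSup, ennreal_iSup_rpow _ hτ0]
  refine iSup_congr fun Q => ?_
  rw [ennreal_iSup_rpow _ hτ0]
  refine iSup_congr fun hQ => ?_
  have h1 : (fun x => (v x ^ (-(1/(τ-1)))) ^ (-(1/(rconj τ - 1)))) = v := by
    funext x
    rw [← ENNReal.rpow_mul, hτ', one_div_one_div,
      show -(1/(τ-1)) * -(τ-1) = 1 by field_simp, ENNReal.rpow_one]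
  rw [h1, hτ', ENNReal.mul_rpow_of_nonneg _ _ hτ0.le, ← ENNReal.rpow_mul,
    show 1/(τ-1) * (τ-1) = 1 by field_simp, ENNReal.rpow_one, mul_comm]

lemma weight_rpow {W : (Fin n → ℝ) → ℝ≥0∞}
    (hae : ∀ᵐ x ∂(volume : Measure (Fin n → ℝ)), 0 < W x ∧ W x < ∞) (t : ℝ) :
    ∀ᵐ x ∂(volume : Measure (Fin n → ℝ)), 0 < W x ^ t ∧ W x ^ t < ∞ := by
  filter_upwards [hae] with x ⟨h0, ht⟩
  constructor
  · exact ENNReal.rpow_pos h0 ht.ne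
  · rw [lt_top_iff_ne_top, Ne, ENNReal.rpow_eq_top_iff]
    push_neg
    exact ⟨fun h => absurd h h0.ne', fun h => absurd h ht.ne⟩

/-- Johnson–Neugebauer: `W ∈ A_q ∩ RH_s ↔ W^s ∈ A_{s(q-1)+1}`. -/
lemma jn_iff {W : (Fin n → ℝ) → ℝ≥0∞} (hW : Measurable W)
    (hae : ∀ᵐ x ∂(volume : Measure (Fin n → ℝ)), 0 < W x ∧ W x < ∞)
    {q s : ℝ} (hq : 1 < q) (hs : 1 ≤ s) :
    (apSup q W ≠ ∞ ∧ rhConst s W ≠ ∞) ↔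
      apSup (s * (q - 1) + 1) (fun x => W x ^ s) ≠ ∞ := by
  have hs0 : (0:ℝ) < s := by linarith
  have hq1 : (0:ℝ) < q - 1 := by linarith
  have hτ1 : s * (q - 1) + 1 - 1 = s * (q - 1) := by ring
  have hσf : (fun x => (W x ^ s) ^ (-(1 / (s * (q - 1))))) =
      (fun x => W x ^ (-(1 / (q - 1)))) := by
    funext x
    rw [← ENNReal.rpow_mul]
    congr 1
    field_simp
  have hap : apSup (s * (q - 1) + 1) (fun x => W x ^ s) =
      ⨆ (Q : Set (Fin n → ℝ)) (_ : IsCube Q),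
        (avgE Q fun x => W x ^ s) *
          (avgE Q fun x => W x ^ (-(1 / (q - 1)))) ^ (s * (q - 1)) := by
    rw [apSup]
    refine iSup_congr fun Q => iSup_congr fun hQ => ?_
    rw [hτ1, hσf]
  have hσpos : ∀ Q : Set (Fin n → ℝ), IsCube Q →
      0 < avgE Q fun x => W x ^ (-(1 / (q - 1))) := fun Q hQ =>
    avgE_pos hQ (hW.pow_const _) ((weight_rpow hae _).mono fun x h => h.1)
  have hσne : ∀ (Q : Set (Fin n → ℝ)), IsCube Q → ∀ t : ℝ, 0 < t →
      (avgE Q fun x => W x ^ (-(1 / (q - 1)))) ^ t ≠ 0 := by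
    intro Q hQ t ht
    rw [Ne, ENNReal.rpow_eq_zero_iff]
    rintro (⟨h1, _⟩ | ⟨_, h2⟩)
    · exact (hσpos Q hQ).ne' h1
    · linarith
  have hWpos : ∀ Q : Set (Fin n → ℝ), IsCube Q → 0 < avgE Q W := fun Q hQ =>
    avgE_pos hQ hW (hae.mono fun x h => h.1)
  rw [hap]
  constructor
  · rintro ⟨hA, hR⟩
    refine ne_top_of_le_ne_top (ENNReal.mul_ne_top
      (ENNReal.rpow_ne_top_of_nonneg hs0.le hR)
      (ENNReal.rpow_ne_top_of_nonneg hs0.le hA))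
      (iSup_le fun Q => iSup_le fun hQ => ?_)
    set σ := avgE Q fun x => W x ^ (-(1 / (q - 1))) with hσ
    have haWt : avgE Q W ≠ ∞ := by
      intro htop
      apply hA
      refine top_le_iff.mp ?_
      calc (⊤ : ℝ≥0∞) = avgE Q W * σ ^ (q - 1) := by
            rw [htop, ENNReal.top_mul (hσne Q hQ _ hq1)]
        _ ≤ apSup q W := le_iSup₂ (f := fun Q (_ : IsCube Q) =>
            avgE Q W * (avgE Q fun x => W x ^ (-(1 / (q - 1)))) ^ (q - 1)) Q hQ
    have hRQ : (avgE Q fun x => W x ^ s) ^ (1/s) ≤ rhConst s W * avgE Q W := by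
      have h := le_iSup₂ (f := fun Q (_ : IsCube Q) =>
        (avgE Q fun x => W x ^ s) ^ (1/s) / avgE Q W) Q hQ
      rwa [ENNReal.div_le_iff (hWpos Q hQ).ne' haWt] at h
    calc (avgE Q fun x => W x ^ s) * σ ^ (s * (q - 1))
        = ((avgE Q fun x => W x ^ s) ^ (1/s) * σ ^ (q-1)) ^ s := by
          rw [ENNReal.mul_rpow_of_nonneg _ _ hs0.le, ← ENNReal.rpow_mul,
            ← ENNReal.rpow_mul, one_div_mul_cancel hs0.ne', ENNReal.rpow_one,
            mul_comm (q-1) s]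
      _ ≤ (rhConst s W * avgE Q W * σ ^ (q-1)) ^ s :=
          ENNReal.rpow_le_rpow (mul_le_mul_left hRQ _) hs0.le
      _ = rhConst s W ^ s * (avgE Q W * σ ^ (q-1)) ^ s := by
          rw [mul_assoc, ENNReal.mul_rpow_of_nonneg _ _ hs0.le]
      _ ≤ rhConst s W ^ s * apSup q W ^ s :=
          mul_le_mul_right (ENNReal.rpow_le_rpow (le_iSup₂ (f := fun Q (_ : IsCube Q) =>
            avgE Q W * (avgE Q fun x => W x ^ (-(1 / (q - 1)))) ^ (q - 1)) Q hQ) hs0.le) _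
  · intro hK
    set K := ⨆ (Q : Set (Fin n → ℝ)) (_ : IsCube Q),
        (avgE Q fun x => W x ^ s) *
          (avgE Q fun x => W x ^ (-(1 / (q - 1)))) ^ (s * (q - 1)) with hKdef
    have hterm : ∀ (Q : Set (Fin n → ℝ)), IsCube Q →
        (avgE Q fun x => W x ^ s) *
          (avgE Q fun x => W x ^ (-(1 / (q - 1)))) ^ (s * (q - 1)) ≤ K :=
      fun Q hQ => le_iSup₂ (f := fun Q (_ : IsCube Q) =>
        (avgE Q fun x => W x ^ s) *
          (avgE Q fun x => W x ^ (-(1 / (q - 1)))) ^ (s * (q - 1))) Q hQ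
    have hfact : ∀ (Q : Set (Fin n → ℝ)), IsCube Q →
        (avgE Q fun x => W x ^ s) ^ (1/s) *
          (avgE Q fun x => W x ^ (-(1 / (q - 1)))) ^ (q - 1) ≤ K ^ (1/s) := by
      intro Q hQ
      have : (avgE Q fun x => W x ^ s) ^ (1/s) *
          (avgE Q fun x => W x ^ (-(1 / (q - 1)))) ^ (q - 1)
          = ((avgE Q fun x => W x ^ s) *
            (avgE Q fun x => W x ^ (-(1 / (q - 1)))) ^ (s * (q - 1))) ^ (1/s) := by
        rw [ENNReal.mul_rpow_of_nonneg _ _ (by positivity : (0:ℝ) ≤ 1/s),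
          ← ENNReal.rpow_mul (avgE Q fun x => W x ^ (-(1 / (q - 1))))]
        congr 2
        field_simp
      rw [this]
      exact ENNReal.rpow_le_rpow (hterm Q hQ) (by positivity)
    constructor
    · refine ne_top_of_le_ne_top
        (ENNReal.rpow_ne_top_of_nonneg (y := 1/s) (by positivity) hK)
        (iSup_le fun Q => iSup_le fun hQ => ?_)
      calc avgE Q W * (avgE Q fun x => W x ^ (-(1 / (q - 1)))) ^ (q - 1)
          ≤ (avgE Q fun x => W x ^ s) ^ (1/s) *
            (avgE Q fun x => W x ^ (-(1 / (q - 1)))) ^ (q - 1) :=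
            mul_le_mul_left (avgE_le_rpow_avgE hQ hW hs) _
        _ ≤ K ^ (1/s) := hfact Q hQ
    · refine ne_top_of_le_ne_top
        (ENNReal.rpow_ne_top_of_nonneg (y := 1/s) (by positivity) hK)
        (iSup_le fun Q => iSup_le fun hQ => ?_)
      have hinv : (avgE Q W)⁻¹ ≤
          (avgE Q fun x => W x ^ (-(1 / (q - 1)))) ^ (q - 1) := by
        rw [ENNReal.inv_le_iff_le_mul
          (fun _ => (hWpos Q hQ).ne') (fun _ => hσne Q hQ _ hq1)]
        exact one_le_apTerm hQ hW hae hq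
      calc (avgE Q fun x => W x ^ s) ^ (1/s) / avgE Q W
          = (avgE Q fun x => W x ^ s) ^ (1/s) * (avgE Q W)⁻¹ := by
            rw [div_eq_mul_inv]
        _ ≤ (avgE Q fun x => W x ^ s) ^ (1/s) *
            (avgE Q fun x => W x ^ (-(1 / (q - 1)))) ^ (q - 1) :=
            mul_le_mul_right hinv _
        _ ≤ K ^ (1/s) := hfact Q hQ

lemma jn_iff' {W V : (Fin n → ℝ) → ℝ≥0∞} (hW : Measurable W)
    (hae : ∀ᵐ x ∂(volume : Measure (Fin n → ℝ)), 0 < W x ∧ W x < ∞)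
    {q s τ : ℝ} (hq : 1 < q) (hs : 1 ≤ s)
    (hV : V = fun x => W x ^ s) (hτe : τ = s * (q - 1) + 1) :
    (apSup q W ≠ ∞ ∧ rhConst s W ≠ ∞) ↔ apSup τ V ≠ ∞ := by
  subst hV hτe
  exact jn_iff hW hae hq hs

lemma econj_top' : econj ∞ = 1 := by simp [econj]

lemma econj_ofReal' {x : ℝ} (hx : 1 < x) :
    econj (ENNReal.ofReal x) = ENNReal.ofReal (x / (x - 1)) := by
  rw [econj, if_neg ENNReal.ofReal_ne_top,
    if_neg (by rw [not_le]; exact ENNReal.one_lt_ofReal.mpr hx),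
    ENNReal.toReal_ofReal (by linarith)]

lemma apConst_of_ne_one {r : ℝ} (h : r ≠ 1) (w : (Fin n → ℝ) → ℝ≥0∞) :
    apConst r w = apSup r w := if_neg h

lemma rhConstE_of_ne_top {s : ℝ≥0∞} (h : s ≠ ∞) (w : (Fin n → ℝ) → ℝ≥0∞) :
    rhConstE s w = rhConst s.toReal w := if_neg h

/-- Duality for limited-range weight classes: for `1 ≤ 𝔭₋ < 𝔭₊ ≤ ∞` and
`p ∈ (𝔭₋, 𝔭₊)`, with `τ_p = (𝔭₊/p)'(p/𝔭₋ - 1) + 1`, one has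
`w^p ∈ A_{p/𝔭₋} ∩ RH_{(𝔭₊/p)'}` iff `w^{-p'} ∈ A_{p'/𝔭₊'} ∩ RH_{(𝔭₋'/p')'}`, and moreover
`[w^{p(𝔭₊/p)'}]_{A_{τ_p}} = [w^{-p'(𝔭₋'/p')'}]_{A_{τ_p'}}^{τ_p - 1}`. -/
theorem statement5 {n : ℕ} (pm : ℝ) (pp : ℝ≥0∞) (p : ℝ)
    (hpm : 1 ≤ pm) (hpmpp : ENNReal.ofReal pm < pp)
    (hp₁ : pm < p) (hp₂ : ENNReal.ofReal p < pp)
    (w : (Fin n → ℝ) → ℝ≥0∞) (hw : IsWeight w) :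
    ((apConst (p / pm) (fun x => w x ^ p) ≠ ∞ ∧
        rhConstE (econj (pp / ENNReal.ofReal p)) (fun x => w x ^ p) ≠ ∞) ↔
      (apConst (rconj p / (econj pp).toReal) (fun x => w x ^ (-(rconj p))) ≠ ∞ ∧
        rhConstE (econj (econj (ENNReal.ofReal pm) / ENNReal.ofReal (rconj p)))
          (fun x => w x ^ (-(rconj p))) ≠ ∞)) ∧
    apConst (tauExp pm pp p)
        (fun x => w x ^ (p * (econj (pp / ENNReal.ofReal p)).toReal)) =
      apConst (rconj (tauExp pm pp p))
          (fun x => w x ^ (-(rconj p *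
            (econj (econj (ENNReal.ofReal pm) / ENNReal.ofReal (rconj p))).toReal)))
        ^ (tauExp pm pp p - 1) := by
  obtain ⟨hwm, hwae⟩ := hw
  have hp1 : 1 < p := lt_of_le_of_lt hpm hp₁
  have hp0 : (0:ℝ) < p := by linarith
  have hpm0 : (0:ℝ) < pm := by linarith
  have hppm : (0:ℝ) < p - pm := by linarith
  have hne1 : p - pm ≠ 0 := ne_of_gt hppm
  have hne2 : p - 1 ≠ 0 := by intro h; linarith
  have hne3 : pm ≠ 0 := ne_of_gt hpm0
  have hne4 : p ≠ 0 := ne_of_gt hp0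
  have hq : 1 < p / pm := (one_lt_div hpm0).mpr hp₁
  set p' := rconj p with hp'def
  have hp'v : p' = p / (p - 1) := rfl
  have hp'1 : 1 < p' := by
    rw [hp'v, lt_div_iff₀ (by linarith)]; linarith
  have hp'0 : (0:ℝ) < p' := by linarith
  set s := (econj (pp / ENNReal.ofReal p)).toReal with hsdef
  set t := (econj (econj (ENNReal.ofReal pm) / ENNReal.ofReal p')).toReal with htdef
  set Qd := p' / (econj pp).toReal with hQddef
  -- value of t and non-topness of the dual RH exponent
  have htfacts : t = pm * (p - 1) / (p - pm) ∧
      econj (econj (ENNReal.ofReal pm) / ENNReal.ofReal p') ≠ ∞ := by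
    by_cases hpm1 : pm = 1
    · have h1 : econj (ENNReal.ofReal pm) = ∞ := by
        rw [hpm1, ENNReal.ofReal_one, econj, if_neg (by simp), if_pos le_rfl]
      have h2 : econj (ENNReal.ofReal pm) / ENNReal.ofReal p' = ∞ := by
        rw [h1]; exact ENNReal.top_div_of_ne_top ENNReal.ofReal_ne_top
      constructor
      · rw [htdef, h2, econj_top', ENNReal.toReal_one, hpm1, one_mul, div_self hne2]
      · rw [h2, econj_top']; exact one_ne_top
    · have hpm1' : 1 < pm := lt_of_le_of_ne hpm (Ne.symm hpm1)
      have hpmne : pm - 1 ≠ 0 := by intro h; linarith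
      have hM : econj (ENNReal.ofReal pm) = ENNReal.ofReal (pm / (pm - 1)) :=
        econj_ofReal' hpm1'
      have hdiv : econj (ENNReal.ofReal pm) / ENNReal.ofReal p' =
          ENNReal.ofReal (pm / (pm - 1) / p') := by
        rw [hM, ENNReal.ofReal_div_of_pos hp'0]
      have hu1 : 1 < pm / (pm - 1) / p' := by
        rw [hp'v, lt_div_iff₀ (div_pos hp0 (by linarith)), one_mul,
          div_lt_div_iff₀ (by linarith) (by linarith)]
        nlinarith
      have hu1' : pm / (pm - 1) / p' - 1 > 0 := by linarith
      constructor
      · rw [htdef, hdiv, econj_ofReal' hu1,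
          ENNReal.toReal_ofReal (by positivity)]
        rw [div_eq_div_iff (ne_of_gt hu1') hne1, hp'v]
        field_simp
        ring
      · rw [hdiv, econj_ofReal' hu1]; exact ENNReal.ofReal_ne_top
  obtain ⟨hts, htne⟩ := htfacts
  have ht1 : 1 ≤ t := by
    rw [hts, le_div_iff₀ hppm]
    nlinarith [mul_nonneg (sub_nonneg.mpr hpm) hp0.le]
  -- facts depending on pp
  have hppfacts : 1 ≤ s ∧ 1 < Qd ∧ t * (Qd - 1) * (s * (p / pm - 1)) = 1 ∧
      econj (pp / ENNReal.ofReal p) ≠ ∞ := by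
    by_cases hpp : pp = ∞
    · have h1 : pp / ENNReal.ofReal p = ∞ := by
        rw [hpp]; exact ENNReal.top_div_of_ne_top ENNReal.ofReal_ne_top
      have hs1 : s = 1 := by rw [hsdef, h1, econj_top', ENNReal.toReal_one]
      have hQdv : Qd = p' := by
        rw [hQddef, hpp, econj_top', ENNReal.toReal_one, div_one]
      refine ⟨by rw [hs1], by rw [hQdv]; exact hp'1, ?_,
        by rw [h1, econj_top']; exact one_ne_top⟩
      rw [hs1, hQdv, hts, hp'v]
      field_simp
      ring
    · set P := pp.toReal with hPdef
      have hppP : pp = ENNReal.ofReal P := (ENNReal.ofReal_toReal hpp).symm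
      have hP : p < P := by
        have := (ENNReal.toReal_lt_toReal ENNReal.ofReal_ne_top hpp).mpr hp₂
        rwa [ENNReal.toReal_ofReal hp0.le] at this
      have hP1 : 1 < P := by linarith
      have hPne : P ≠ 0 := by intro h; linarith
      have hPne1 : P - 1 ≠ 0 := by intro h; linarith
      have hPnep : P - p ≠ 0 := by intro h; linarith
      have hPp1 : 1 < P / p := (one_lt_div hp0).mpr hP
      have hPp1' : P / p - 1 ≠ 0 := by intro h; linarith
      have hsval : s = P / p / (P / p - 1) := by
        rw [hsdef, hppP, ← ENNReal.ofReal_div_of_pos hp0, econj_ofReal' hPp1,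
          ENNReal.toReal_ofReal (div_nonneg (by linarith) (by linarith))]
      have hQdval : Qd = p' * (P - 1) / P := by
        rw [hQddef, hppP, econj_ofReal' hP1,
          ENNReal.toReal_ofReal (div_nonneg (by linarith) (by linarith)),
          div_div_eq_mul_div]
      refine ⟨?_, ?_, ?_, ?_⟩
      · rw [hsval, le_div_iff₀ (by linarith)]
        linarith
      · rw [hQdval, hp'v, lt_div_iff₀ (by linarith : (0:ℝ) < P),
          div_mul_eq_mul_div, lt_div_iff₀ (by linarith : (0:ℝ) < p - 1)]
        nlinarith
      · rw [hsval, hQdval, hts, hp'v]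
        field_simp
        ring
      · rw [hppP, ← ENNReal.ofReal_div_of_pos hp0, econj_ofReal' hPp1]
        exact ENNReal.ofReal_ne_top
  obtain ⟨hs1, hQd1, hkey2, hsne⟩ := hppfacts
  have hs0 : (0:ℝ) < s := by linarith
  have hsq : (0:ℝ) < s * (p / pm - 1) := by
    apply mul_pos hs0; linarith
  have htau : tauExp pm pp p = s * (p / pm - 1) + 1 := rfl
  set τ := tauExp pm pp p with hτdef
  have hτ1 : 1 < τ := by rw [htau]; linarith
  have hτm1 : τ - 1 = s * (p / pm - 1) := by rw [htau]; ring
  -- pointwise function identities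
  have hkey1 : p * s * (-(1 / (τ - 1))) = -(p' * t) := by
    rw [hτm1, hts, hp'v]
    field_simp
  have hfun3 : (fun x : Fin n → ℝ => (w x ^ (p * s)) ^ (-(1 / (τ - 1)))) =
      fun x => w x ^ (-(p' * t)) := by
    funext x
    rw [← ENNReal.rpow_mul, hkey1]
  have hdual := apSup_dual (n := n) hτ1 (fun x => w x ^ (p * s))
  rw [hfun3] at hdual
  have hrconj1 : 1 < rconj τ := by
    have h := rconj_sub_one hτ1
    have : (0:ℝ) < 1 / (τ - 1) := one_div_pos.mpr (by linarith)
    linarith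
  constructor
  · -- the equivalence
    rw [apConst_of_ne_one (ne_of_gt hq), apConst_of_ne_one (ne_of_gt hQd1),
      rhConstE_of_ne_top hsne, rhConstE_of_ne_top htne, ← hsdef, ← htdef]
    have j1 := jn_iff' (V := fun x => w x ^ (p * s)) (τ := τ)
      (hwm.pow_const p) (weight_rpow hwae p) hq hs1
      (funext fun x => (ENNReal.rpow_mul (w x) p s))
      (by rw [htau])
    have j2 := jn_iff' (V := fun x => w x ^ (-(p' * t))) (τ := rconj τ)
      (hwm.pow_const (-p')) (weight_rpow hwae (-p')) hQd1 ht1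
      (funext fun x => by rw [← ENNReal.rpow_mul]; congr 1; ring)
      (by
        have e : t * (Qd - 1) = 1 / (τ - 1) := by
          rw [hτm1]
          exact (eq_div_iff (ne_of_gt hsq)).mpr hkey2
        have h := rconj_sub_one hτ1
        linarith)
    rw [j1, j2, hdual, Ne, Ne, ENNReal.rpow_eq_top_iff_of_pos (by linarith)]
  · rw [apConst_of_ne_one (by linarith : τ ≠ 1),
      apConst_of_ne_one (ne_of_gt hrconj1)]
    exact hdual
end
end

section
/- (Rubio de Francia iteration algorithm.) For any $p \in (1,\infty)$ and any weight $w \in A_p$ on $\mathbb{R}^n$, there exists a sublinear operator $\mathcal{R}: L^p(w) \to L^p(w)$ such that for every nonnegative $h \in L^p(w)$: (a) $h \le \mathcal{R}h$ pointwise a.e.; (b) $\|\mathcal{R}h\|_{L^p(w)} \le 2\|h\|_{L^p(w)}$; (c) $\mathcal{R}h \in A_1$ with $[\mathcal{R}h]_{A_1} \le 2\|M\|_{L^p(w)\to L^p(w)}$. -/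
open MeasureTheory ENNReal

noncomputable section

/-- The (uncentered) Hardy–Littlewood maximal function over cubes. -/
def maximalFn {n : ℕ} (f : (Fin n → ℝ) → ℝ≥0∞) (x : Fin n → ℝ) : ℝ≥0∞ :=
  ⨆ (Q : Set (Fin n → ℝ)) (_ : IsCube Q) (_ : x ∈ Q), avgE Q f

/-- The operator norm of the maximal operator on `L^p(w)`. -/
def maximalOpNorm {n : ℕ} (p : ℝ) (w : (Fin n → ℝ) → ℝ≥0∞) : ℝ≥0∞ :=
  ⨆ (f : (Fin n → ℝ) → ℝ≥0∞) (_ : (∫⁻ x, f x ^ p * w x) ≤ 1),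
    (∫⁻ x, maximalFn f x ^ p * w x) ^ (1/p)

namespace S11

open Set Filter Topology

variable {n : ℕ}

lemma cube_eq (c : Fin n → ℝ) (r : ℝ) :
    {x : Fin n → ℝ | ∀ i, |x i - c i| ≤ r} =
      Set.pi Set.univ (fun i => Set.Icc (c i - r) (c i + r)) := by
  ext x
  simp only [Set.mem_setOf_eq, Set.mem_pi, Set.mem_univ, forall_true_left, Set.mem_Icc, abs_le]
  constructor <;> intro h i <;> have h1 := (h i).1 <;> have h2 := (h i).2 <;>
    exact ⟨by linarith, by linarith⟩

lemma cube_volume (c : Fin n → ℝ) {r : ℝ} (hr : 0 < r) :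
    volume {x : Fin n → ℝ | ∀ i, |x i - c i| ≤ r} = ENNReal.ofReal (2*r) ^ n := by
  rw [cube_eq, volume_pi_pi]
  have : ∀ i : Fin n, volume (Set.Icc (c i - r) (c i + r)) = ENNReal.ofReal (2*r) := by
    intro i; rw [Real.volume_Icc]; ring_nf
  simp only [this, Finset.prod_const, Finset.card_univ, Fintype.card_fin]

lemma cube_facts {Q : Set (Fin n → ℝ)} (hQ : IsCube Q) :
    MeasurableSet Q ∧ 0 < volume Q ∧ volume Q < ∞ := by
  obtain ⟨c, r, hr, rfl⟩ := hQ
  refine ⟨?_, ?_, ?_⟩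
  · rw [cube_eq]; exact MeasurableSet.univ_pi fun i => measurableSet_Icc
  · rw [cube_volume c hr]
    exact ENNReal.pow_pos (ENNReal.ofReal_pos.2 (by linarith)) n
  · rw [cube_volume c hr]
    exact ENNReal.pow_lt_top ENNReal.ofReal_lt_top

lemma avg_le_maximalFn (f : (Fin n → ℝ) → ℝ≥0∞) {Q : Set (Fin n → ℝ)} (hQ : IsCube Q)
    {x : Fin n → ℝ} (hx : x ∈ Q) : avgE Q f ≤ maximalFn f x :=
  le_iSup_of_le Q (le_iSup_of_le hQ (le_iSup_of_le hx le_rfl))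


lemma measurable_maximalFn (f : (Fin n → ℝ) → ℝ≥0∞) : Measurable (maximalFn f) := by
  have lsc : LowerSemicontinuous (maximalFn f) := by
    intro x t ht
    obtain ⟨Q, hQ, hxQ, hQt⟩ : ∃ Q, IsCube Q ∧ x ∈ Q ∧ t < avgE Q f := by
      simp only [maximalFn, lt_iSup_iff] at ht
      obtain ⟨Q, hQ, hx, h⟩ := ht
      exact ⟨Q, hQ, hx, h⟩
    obtain ⟨c, r, hr, rfl⟩ := hQ
    set Q : Set (Fin n → ℝ) := {y | ∀ i, |y i - c i| ≤ r} with hQdef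
    set I := ∫⁻ y in Q, f y with hIdef
    have htne : t ≠ ∞ := (lt_of_lt_of_le hQt le_top).ne
    have hVQ : volume Q = ENNReal.ofReal (2*r) ^ n := cube_volume c hr
    have hVne : ∀ s : ℝ, (ENNReal.ofReal (2*s)) ^ n ≠ ∞ :=
      fun s => (ENNReal.pow_lt_top ENNReal.ofReal_lt_top).ne
    have hVQ0 : volume Q ≠ 0 := ((cube_facts ⟨c, r, hr, rfl⟩).2.1).ne'
    have hQt' : t < I / volume Q := hQt
    obtain ⟨r', hrr', ht'⟩ : ∃ r' > r, t * ENNReal.ofReal (2*r') ^ n < I := by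
      have hI0 : I ≠ 0 := by
        intro h0
        rw [avgE, ← hIdef, h0, ENNReal.zero_div] at hQt
        exact (not_lt_bot hQt)
      rcases eq_or_ne t 0 with rfl | ht0
      · exact ⟨r+1, by linarith, by rw [zero_mul]; exact hI0.bot_lt⟩
      rcases eq_or_ne I ∞ with hItop | hItop
      · refine ⟨r+1, by linarith, ?_⟩
        rw [hItop]
        exact lt_top_iff_ne_top.2 (ENNReal.mul_ne_top htne (hVne _))
      · have htV : t * volume Q < I := by
          rw [avgE, ← hIdef] at hQt
          exact (ENNReal.lt_div_iff_mul_lt (Or.inl hVQ0) (Or.inl (hVQ ▸ hVne r))).1 hQt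
        have hlt : t.toReal * (2*r)^n < I.toReal := by
          have h1 := (ENNReal.toReal_lt_toReal (ENNReal.mul_ne_top htne (hVQ ▸ hVne r)) hItop).2 htV
          rwa [ENNReal.toReal_mul, hVQ, ENNReal.toReal_pow,
            ENNReal.toReal_ofReal (by linarith)] at h1
        have hcont : ContinuousAt (fun s : ℝ => t.toReal * (2*s)^n) r := by fun_prop
        have hev : ∀ᶠ s in 𝓝[>] r, t.toReal * (2*s)^n < I.toReal :=
          nhdsWithin_le_nhds (hcont.tendsto.eventually_lt_const hlt)
        obtain ⟨r', hr'⟩ := (hev.and eventually_mem_nhdsWithin).exists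
        refine ⟨r', hr'.2, ?_⟩
        have hIpos : 0 < I.toReal := ENNReal.toReal_pos hI0 hItop
        have hr'pos : (0:ℝ) ≤ 2 * r' := by
          have : r < r' := hr'.2
          linarith
        calc t * ENNReal.ofReal (2*r') ^ n
            = ENNReal.ofReal (t.toReal * (2*r')^n) := by
              rw [ENNReal.ofReal_mul ENNReal.toReal_nonneg, ENNReal.ofReal_toReal htne,
                ENNReal.ofReal_pow hr'pos]
          _ < I := by
              rw [← ENNReal.ofReal_toReal hItop]
              exact (ENNReal.ofReal_lt_ofReal_iff hIpos).2 hr'.1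
    have hr'0 : 0 < r' := lt_trans hr hrr'
    set Q' : Set (Fin n → ℝ) := {y | ∀ i, |y i - c i| ≤ r'} with hQ'def
    have hQ'cube : IsCube Q' := ⟨c, r', hr'0, rfl⟩
    have hsub : Q ⊆ Q' := fun y hy i => le_trans (hy i) hrr'.le
    have havg' : t < avgE Q' f := by
      have h1 : I ≤ ∫⁻ y in Q', f y := lintegral_mono_set hsub
      have hV' : volume Q' = ENNReal.ofReal (2*r') ^ n := cube_volume c hr'0
      have h2 : t < I / volume Q' := by
        rw [hV', ENNReal.lt_div_iff_mul_lt (Or.inl (ENNReal.pow_ne_zero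
          (ENNReal.ofReal_pos.2 (by linarith)).ne' n)) (Or.inl (hVne r'))]
        exact ht'
      exact lt_of_lt_of_le h2 (ENNReal.div_le_div_right h1 _)
    have hε : 0 < r' - r := by linarith
    filter_upwards [Metric.ball_mem_nhds x hε] with y hy
    have hyQ' : y ∈ Q' := by
      intro i
      have h1 : |y i - x i| ≤ dist y x := by
        rw [← Real.dist_eq]; exact dist_le_pi_dist y x i
      have h2 := hxQ i
      have h3 : dist y x < r' - r := by rwa [Metric.mem_ball] at hy
      calc |y i - c i| ≤ |y i - x i| + |x i - c i| := abs_sub_le _ _ _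
        _ ≤ r' := by linarith
    exact lt_of_lt_of_le havg' (avg_le_maximalFn f hQ'cube hyQ')
  exact lsc.measurable


lemma ennreal_mul_div_le' (a b : ℝ≥0∞) : a * (b / a) ≤ b := ENNReal.mul_div_le

lemma ennreal_mul_div_cancel_r {b : ℝ≥0∞} (hb0 : b ≠ 0) (hbt : b ≠ ∞) (a : ℝ≥0∞) :
    a * b / b = a := by
  rw [mul_div_assoc, ENNReal.div_self hb0 hbt, mul_one]

lemma maximalFn_const_mul (f : (Fin n → ℝ) → ℝ≥0∞) {c : ℝ≥0∞} (hc : c ≠ ∞) (x : Fin n → ℝ) :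
    maximalFn (fun y => c * f y) x = c * maximalFn f x := by
  unfold maximalFn
  rw [ENNReal.mul_iSup]
  refine iSup_congr fun Q => ?_
  rw [ENNReal.mul_iSup]
  refine iSup_congr fun hQ => ?_
  rw [ENNReal.mul_iSup]
  refine iSup_congr fun hx => ?_
  unfold avgE
  rw [lintegral_const_mul' c _ hc, mul_div_assoc]

lemma norm_smul (w : (Fin n → ℝ) → ℝ≥0∞) {p : ℝ} (hp0 : 0 < p) (f : (Fin n → ℝ) → ℝ≥0∞)
    {c : ℝ≥0∞} (hc : c ≠ ∞) :
    (∫⁻ x, (c * f x) ^ p * w x) ^ (1/p) = c * (∫⁻ x, f x ^ p * w x) ^ (1/p) := by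
  have h1 : ∫⁻ x, (c * f x)^p * w x = c^p * ∫⁻ x, f x ^ p * w x := by
    rw [← lintegral_const_mul' (c^p) _ (ENNReal.rpow_ne_top_of_nonneg hp0.le hc)]
    exact lintegral_congr fun x => by
      rw [ENNReal.mul_rpow_of_nonneg _ _ hp0.le, mul_assoc]
  rw [h1, ENNReal.mul_rpow_of_nonneg _ _ (by positivity : (0:ℝ) ≤ 1/p),
    ← ENNReal.rpow_mul, mul_one_div_cancel hp0.ne', ENNReal.rpow_one]

lemma norm_M_le {p : ℝ} (hp : 1 < p) (w : (Fin n → ℝ) → ℝ≥0∞)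
    (hC : maximalOpNorm p w ≠ ∞) (f : (Fin n → ℝ) → ℝ≥0∞)
    (hf : (∫⁻ x, f x ^ p * w x) ≠ ∞) :
    (∫⁻ x, maximalFn f x ^ p * w x) ^ (1/p) ≤
      maximalOpNorm p w * (∫⁻ x, f x ^ p * w x) ^ (1/p) := by
  have hp0 : 0 < p := lt_trans one_pos hp
  set N := (∫⁻ x, f x ^ p * w x) ^ (1/p) with hN
  have hNtop : N ≠ ∞ := ENNReal.rpow_ne_top_of_nonneg (by positivity) hf
  have key : ∀ c : ℝ≥0∞, c ≠ ∞ → (∫⁻ x, (c * f x) ^ p * w x) ≤ 1 →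
      c * (∫⁻ x, maximalFn f x ^ p * w x) ^ (1/p) ≤ maximalOpNorm p w := by
    intro c hc hle
    have h1 : (∫⁻ x, maximalFn (fun y => c * f y) x ^ p * w x) ^ (1/p) ≤ maximalOpNorm p w :=
      le_iSup_of_le (fun y => c * f y) (le_iSup_of_le hle le_rfl)
    have h2 : (∫⁻ x, maximalFn (fun y => c * f y) x ^ p * w x) ^ (1/p)
        = c * (∫⁻ x, maximalFn f x ^ p * w x) ^ (1/p) := by
      have : ∀ x, maximalFn (fun y => c * f y) x = c * maximalFn f x :=
        maximalFn_const_mul f hc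
      simp_rw [this]
      exact norm_smul w hp0 (maximalFn f) hc
    rwa [h2] at h1
  rcases eq_or_ne N 0 with hN0 | hN0
  · have hf0 : (∫⁻ x, f x ^ p * w x) = 0 := by
      rcases ENNReal.rpow_eq_zero_iff.1 hN0 with ⟨h1, _⟩ | ⟨h1, _⟩
      · exact h1
      · exact absurd h1 hf
    rw [hN0, mul_zero, nonpos_iff_eq_zero]
    set m := (∫⁻ x, maximalFn f x ^ p * w x) ^ (1/p) with hm
    by_contra hm0
    have hk : ∀ k : ℕ, (k : ℝ≥0∞) * m ≤ maximalOpNorm p w := by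
      intro k
      refine key k (by simp) ?_
      have : ∫⁻ x, ((k:ℝ≥0∞) * f x)^p * w x = (k:ℝ≥0∞)^p * ∫⁻ x, f x ^ p * w x := by
        rw [← lintegral_const_mul' ((k:ℝ≥0∞)^p) _
          (ENNReal.rpow_ne_top_of_nonneg hp0.le (by simp))]
        exact lintegral_congr fun x => by
          rw [ENNReal.mul_rpow_of_nonneg _ _ hp0.le, mul_assoc]
      rw [this, hf0, mul_zero]
      exact zero_le_one
    rcases eq_or_ne m ∞ with hmt | hmt
    · have := hk 1
      rw [hmt, Nat.cast_one, one_mul] at this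
      exact hC (top_le_iff.1 this)
    · obtain ⟨k, hklt⟩ := ENNReal.exists_nat_gt (ENNReal.div_lt_top hC hm0).ne
      have h2 : maximalOpNorm p w < (k:ℝ≥0∞) * m := by
        have := (ENNReal.div_lt_iff (Or.inl hm0) (Or.inl hmt)).1 hklt
        exact this
      exact absurd (hk k) (not_le.2 h2)
  · have hXne : (∫⁻ x, f x ^ p * w x) ≠ 0 := by
      intro h0
      rw [hN, h0, ENNReal.zero_rpow_of_pos (by positivity)] at hN0
      exact hN0 rfl
    have h1 : (∫⁻ x, (N⁻¹ * f x)^p * w x) ≤ 1 := by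
      have e : ∫⁻ x, (N⁻¹ * f x)^p * w x = (N⁻¹)^p * ∫⁻ x, f x ^ p * w x := by
        rw [← lintegral_const_mul' ((N⁻¹)^p) _
          (ENNReal.rpow_ne_top_of_nonneg hp0.le (ENNReal.inv_ne_top.2 hN0))]
        exact lintegral_congr fun x => by
          rw [ENNReal.mul_rpow_of_nonneg _ _ hp0.le, mul_assoc]
      have e2 : (N⁻¹)^p = (∫⁻ x, f x ^ p * w x)⁻¹ := by
        rw [ENNReal.inv_rpow, hN, ← ENNReal.rpow_mul, one_div_mul_cancel hp0.ne',
          ENNReal.rpow_one]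
      rw [e, e2, ENNReal.inv_mul_cancel hXne hf]
    have h2 := key N⁻¹ (ENNReal.inv_ne_top.2 hN0) h1
    calc (∫⁻ x, maximalFn f x ^ p * w x) ^ (1/p)
        = N * (N⁻¹ * (∫⁻ x, maximalFn f x ^ p * w x) ^ (1/p)) := by
          rw [← mul_assoc, ENNReal.mul_inv_cancel hN0 hNtop, one_mul]
      _ ≤ N * maximalOpNorm p w := mul_le_mul_right h2 N
      _ = maximalOpNorm p w * N := mul_comm _ _


lemma setLintegral_pos {g : (Fin n → ℝ) → ℝ≥0∞} (hg : Measurable g)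
    (hpos : ∀ᵐ x ∂(volume : Measure (Fin n → ℝ)), 0 < g x) {Q : Set (Fin n → ℝ)}
    (hQm : MeasurableSet Q) (hQpos : 0 < volume Q) : 0 < ∫⁻ x in Q, g x := by
  rw [lintegral_pos_iff_support hg]
  have h1 : (volume.restrict Q) (Function.support g)ᶜ = 0 := by
    have hnull : (volume : Measure (Fin n → ℝ)) {x | ¬ 0 < g x} = 0 := ae_iff.1 hpos
    have hsub : (Function.support g)ᶜ ⊆ {x | ¬ 0 < g x} := by
      intro x hx
      simp only [Set.mem_compl_iff, Function.mem_support, not_not] at hx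
      simp [hx]
    exact measure_mono_null hsub
      (le_antisymm (le_trans (Measure.restrict_le_self _ ) hnull.le) zero_le)
  have h2 : volume Q ≤ (volume.restrict Q) (Function.support g) := by
    have := measure_union_le (μ := volume.restrict Q) (Function.support g)
      (Function.support g)ᶜ
    rw [Set.union_compl_self, h1, add_zero, Measure.restrict_apply_univ] at this
    exact this
  exact lt_of_lt_of_le hQpos h2


lemma one_le_opnorm {p : ℝ} (hp : 1 < p) (w : (Fin n → ℝ) → ℝ≥0∞) (hw : IsWeight w)
    (hA : apConst p w ≠ ∞) : 1 ≤ maximalOpNorm p w := by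
  have hp0 : 0 < p := lt_trans one_pos hp
  set Q : Set (Fin n → ℝ) := {x | ∀ i, |x i - (0 : Fin n → ℝ) i| ≤ 1} with hQdef
  have hQcube : IsCube Q := ⟨0, 1, one_pos, rfl⟩
  obtain ⟨hQm, hVpos, hVtop⟩ := cube_facts hQcube
  set W := ∫⁻ x in Q, w x with hW
  have hWpos : 0 < W := setLintegral_pos hw.1 (hw.2.mono fun x hx => hx.1) hQm hVpos
  have hWtop : W ≠ ∞ := by
    have hterm : avgE Q w * (avgE Q fun x => w x ^ (-(1/(p-1)))) ^ (p-1) ≤ apSup p w :=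
      le_iSup_of_le Q (le_iSup_of_le hQcube le_rfl)
    have hA' : apSup p w ≠ ∞ := by
      rwa [apConst, if_neg (by intro h; rw [h] at hp; exact lt_irrefl 1 hp)] at hA
    set σ : (Fin n → ℝ) → ℝ≥0∞ := fun x => w x ^ (-(1/(p-1))) with hσ
    have hσm : Measurable σ := hw.1.pow_const _
    have hσpos : ∀ᵐ x ∂(volume : Measure (Fin n → ℝ)), 0 < σ x := by
      filter_upwards [hw.2] with x hx
      exact ENNReal.rpow_pos hx.1 hx.2.ne
    have hIσpos : 0 < ∫⁻ x in Q, σ x := setLintegral_pos hσm hσpos hQm hVpos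
    have havgσ : avgE Q σ ≠ 0 := (ENNReal.div_pos hIσpos.ne' hVtop.ne).ne'
    have hfac : ((avgE Q σ) ^ (p-1)) ≠ 0 := by
      rw [Ne, ENNReal.rpow_eq_zero_iff]
      rintro (⟨h1, _⟩ | ⟨_, h2⟩)
      · exact havgσ h1
      · linarith
    have havgw : avgE Q w ≠ ∞ := by
      intro htop
      rw [htop, ENNReal.top_mul hfac] at hterm
      exact hA' (top_le_iff.1 hterm)
    have hWe : W = avgE Q w * volume Q :=
      (ENNReal.div_mul_cancel hVpos.ne' hVtop.ne).symm
    rw [hWe]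
    exact ENNReal.mul_ne_top havgw hVtop.ne
  set t := W ^ (-(1/p)) with ht
  have ht0 : t ≠ 0 := by
    rw [ht, Ne, ENNReal.rpow_eq_zero_iff]
    rintro (⟨h1, _⟩ | ⟨h1, _⟩)
    · exact hWpos.ne' h1
    · exact hWtop h1
  have httop : t ≠ ∞ := by
    rw [ht, Ne, ENNReal.rpow_eq_top_iff]
    rintro (⟨h1, _⟩ | ⟨h1, _⟩)
    · exact hWpos.ne' h1
    · exact hWtop h1
  set f : (Fin n → ℝ) → ℝ≥0∞ := fun x => Set.indicator Q (fun _ => t) x with hf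
  have htp : t ^ p * W = 1 := by
    have : t ^ p = W⁻¹ := by
      rw [ht, ← ENNReal.rpow_mul, neg_mul, one_div, inv_mul_cancel₀ hp0.ne',
        ENNReal.rpow_neg_one]
    rw [this, ENNReal.inv_mul_cancel hWpos.ne' hWtop]
  have htpne : t ^ p ≠ ∞ := ENNReal.rpow_ne_top_of_nonneg hp0.le httop
  have hintf : (∫⁻ x, f x ^ p * w x) = t ^ p * W := by
    calc ∫⁻ x, f x ^ p * w x
        = ∫⁻ x, Set.indicator Q (fun y => t ^ p * w y) x := by
          refine lintegral_congr fun x => ?_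
          by_cases hx : x ∈ Q <;>
            simp [hf, hx, ENNReal.zero_rpow_of_pos hp0]
      _ = ∫⁻ x in Q, t ^ p * w x := lintegral_indicator hQm _
      _ = t ^ p * W := by rw [lintegral_const_mul' _ _ htpne]
  have hint : (∫⁻ x, f x ^ p * w x) ≤ 1 := by rw [hintf, htp]
  have hMf : ∀ x ∈ Q, t ≤ maximalFn f x := by
    intro x hx
    have havgf : avgE Q f = t := by
      have h1 : ∫⁻ y in Q, f y = t * volume Q := by
        rw [show ∫⁻ y in Q, f y = ∫⁻ y in Q, t from
          setLIntegral_congr_fun hQm (fun y hy => by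
            simp [hf, hy]), setLIntegral_const]
      rw [avgE, h1, ennreal_mul_div_cancel_r hVpos.ne' hVtop.ne]
    rw [← havgf]
    exact avg_le_maximalFn f hQcube hx
  have hlow : (1 : ℝ≥0∞) ≤ ∫⁻ x, maximalFn f x ^ p * w x := by
    calc (1 : ℝ≥0∞) = t ^ p * W := htp.symm
      _ = ∫⁻ x in Q, t ^ p * w x := by rw [lintegral_const_mul' _ _ htpne]
      _ ≤ ∫⁻ x in Q, maximalFn f x ^ p * w x := by
          refine lintegral_mono_ae ?_
          filter_upwards [ae_restrict_mem hQm] with x hx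
          exact mul_le_mul_left (ENNReal.rpow_le_rpow (hMf x hx) hp0.le) _
      _ ≤ ∫⁻ x, maximalFn f x ^ p * w x := setLIntegral_le_lintegral _ _
  calc (1 : ℝ≥0∞) = 1 ^ (1/p) := (ENNReal.one_rpow _).symm
    _ ≤ (∫⁻ x, maximalFn f x ^ p * w x) ^ (1/p) :=
        ENNReal.rpow_le_rpow hlow (by positivity)
    _ ≤ maximalOpNorm p w := le_iSup_of_le f (le_iSup_of_le hint le_rfl)


lemma lp_add_le_left {α : Type*} [MeasurableSpace α] {μ : Measure α} (f g : α → ℝ≥0∞)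
    (hg : Measurable g) {p : ℝ} (hp : 1 ≤ p) :
    (∫⁻ x, (f x + g x) ^ p ∂μ) ^ (1/p) ≤
      (∫⁻ x, f x ^ p ∂μ) ^ (1/p) + (∫⁻ x, g x ^ p ∂μ) ^ (1/p) := by
  have hp0 : 0 < p := lt_of_lt_of_le one_pos hp
  obtain ⟨φ, hφm, hφle, hφeq⟩ := exists_measurable_le_lintegral_eq μ fun x => (f x + g x) ^ p
  set ψ : α → ℝ≥0∞ := fun x => φ x ^ (1/p) with hψ
  have hψm : Measurable ψ := hφm.pow_const _
  have hψp : ∀ x, ψ x ^ p = φ x := by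
    intro x
    rw [hψ, ← ENNReal.rpow_mul, one_div_mul_cancel hp0.ne', ENNReal.rpow_one]
  have hψle : ∀ x, ψ x ≤ f x + g x := by
    intro x
    have h := ENNReal.rpow_le_rpow (hφle x) (by positivity : (0:ℝ) ≤ 1/p)
    rwa [← ENNReal.rpow_mul, mul_one_div_cancel hp0.ne', ENNReal.rpow_one] at h
  have h1 : ∫⁻ x, (f x + g x) ^ p ∂μ = ∫⁻ x, ψ x ^ p ∂μ := by
    rw [hφeq]; exact (lintegral_congr fun x => hψp x).symm
  have h3 : ∫⁻ x, ψ x ^ p ∂μ ≤ ∫⁻ x, ((ψ x - g x) + g x) ^ p ∂μ :=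
    lintegral_mono fun x => ENNReal.rpow_le_rpow le_tsub_add hp0.le
  have h4 := ENNReal.lintegral_Lp_add_le (μ := μ) (p := p)
    ((hψm.sub hg).aemeasurable) hg.aemeasurable hp
  have h5 : (∫⁻ x, (ψ x - g x) ^ p ∂μ) ^ (1/p) ≤ (∫⁻ x, f x ^ p ∂μ) ^ (1/p) :=
    ENNReal.rpow_le_rpow (lintegral_mono fun x =>
      ENNReal.rpow_le_rpow (tsub_le_iff_right.2 (hψle x)) hp0.le) (by positivity)
  calc (∫⁻ x, (f x + g x) ^ p ∂μ) ^ (1/p)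
      = (∫⁻ x, ψ x ^ p ∂μ) ^ (1/p) := by rw [h1]
    _ ≤ (∫⁻ x, ((ψ x - g x) + g x) ^ p ∂μ) ^ (1/p) :=
        ENNReal.rpow_le_rpow h3 (by positivity)
    _ ≤ (∫⁻ x, (ψ x - g x) ^ p ∂μ) ^ (1/p) + (∫⁻ x, g x ^ p ∂μ) ^ (1/p) := h4
    _ ≤ (∫⁻ x, f x ^ p ∂μ) ^ (1/p) + (∫⁻ x, g x ^ p ∂μ) ^ (1/p) := add_le_add_left h5 _

lemma iSup_rpow {u : ℕ → ℝ≥0∞} {q : ℝ} (hq : 0 < q) :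
    (⨆ k, u k) ^ q = ⨆ k, u k ^ q := by
  refine Monotone.map_iSup_of_continuousAt (f := fun x : ℝ≥0∞ => x ^ q) ?_ ?_ ?_
  · exact ENNReal.continuous_rpow_const.continuousAt
  · exact fun a b hab => ENNReal.rpow_le_rpow hab hq.le
  · simp [ENNReal.zero_rpow_of_pos hq]

lemma lp_tsum_le {α : Type*} [MeasurableSpace α] {μ : Measure α} (g : ℕ → α → ℝ≥0∞)
    (hg : ∀ k, Measurable (g k)) {p : ℝ} (hp : 1 ≤ p) :
    (∫⁻ x, (∑' k, g k x) ^ p ∂μ) ^ (1/p) ≤ ∑' k, (∫⁻ x, g k x ^ p ∂μ) ^ (1/p) := by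
  have hp0 : 0 < p := lt_of_lt_of_le one_pos hp
  have hFm : ∀ K : ℕ, Measurable fun x => ∑ k ∈ Finset.range K, g k x :=
    fun K => Finset.measurable_sum _ fun k _ => hg k
  have fin : ∀ K : ℕ, (∫⁻ x, (∑ k ∈ Finset.range K, g k x) ^ p ∂μ) ^ (1/p) ≤
      ∑ k ∈ Finset.range K, (∫⁻ x, g k x ^ p ∂μ) ^ (1/p) := by
    intro K
    induction K with
    | zero => simp [ENNReal.zero_rpow_of_pos, hp0]
    | succ K ih =>
      calc (∫⁻ x, (∑ k ∈ Finset.range (K+1), g k x) ^ p ∂μ) ^ (1/p)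
          = (∫⁻ x, ((fun x => ∑ k ∈ Finset.range K, g k x) x + g K x) ^ p ∂μ) ^ (1/p) := by
            refine congrArg (· ^ (1/p)) (lintegral_congr fun x => ?_)
            rw [Finset.sum_range_succ]
        _ ≤ (∫⁻ x, (∑ k ∈ Finset.range K, g k x) ^ p ∂μ) ^ (1/p)
            + (∫⁻ x, g K x ^ p ∂μ) ^ (1/p) :=
            ENNReal.lintegral_Lp_add_le (hFm K).aemeasurable (hg K).aemeasurable hp
        _ ≤ ∑ k ∈ Finset.range (K+1), (∫⁻ x, g k x ^ p ∂μ) ^ (1/p) := by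
            rw [Finset.sum_range_succ]
            exact add_le_add_left ih _
  have hpt : ∀ x, (∑' k, g k x) ^ p = ⨆ K, (∑ k ∈ Finset.range K, g k x) ^ p := by
    intro x
    rw [ENNReal.tsum_eq_iSup_nat, iSup_rpow hp0]
  have hmono : Monotone fun K : ℕ => fun x => (∑ k ∈ Finset.range K, g k x) ^ p := by
    intro a b hab x
    exact ENNReal.rpow_le_rpow (Finset.sum_le_sum_of_subset
      (Finset.range_subset_range.2 hab)) hp0.le
  calc (∫⁻ x, (∑' k, g k x) ^ p ∂μ) ^ (1/p)
      = (⨆ K, ∫⁻ x, (∑ k ∈ Finset.range K, g k x) ^ p ∂μ) ^ (1/p) := by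
        rw [lintegral_congr hpt, lintegral_iSup (fun K => (hFm K).pow_const p) hmono]
    _ = ⨆ K, (∫⁻ x, (∑ k ∈ Finset.range K, g k x) ^ p ∂μ) ^ (1/p) :=
        iSup_rpow (by positivity)
    _ ≤ ∑' k, (∫⁻ x, g k x ^ p ∂μ) ^ (1/p) := by
        refine iSup_le fun K => le_trans (fin K) (ENNReal.sum_le_tsum _)


lemma case2 {p : ℝ} (hp : 1 < p) (w : (Fin n → ℝ) → ℝ≥0∞) (hw : IsWeight w)
    (hC : maximalOpNorm p w ≠ ∞) (hC1 : 1 ≤ maximalOpNorm p w)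
    (h : (Fin n → ℝ) → ℝ≥0∞) (hh : (∫⁻ x, h x ^ p * w x) ≠ ∞) :
    (∀ᵐ x ∂(volume : Measure (Fin n → ℝ)),
      h x ≤ h x + ∑' k : ℕ, maximalFn^[k+1] h x / (2 * maximalOpNorm p w)^(k+1)) ∧
    (∫⁻ x, (h x + ∑' k : ℕ, maximalFn^[k+1] h x / (2 * maximalOpNorm p w)^(k+1)) ^ p * w x)
      ^ (1/p) ≤ 2 * (∫⁻ x, h x ^ p * w x) ^ (1/p) ∧
    a1Const (fun x =>
        h x + ∑' k : ℕ, maximalFn^[k+1] h x / (2 * maximalOpNorm p w)^(k+1))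
      ≤ 2 * maximalOpNorm p w := by
  have hp0 : 0 < p := lt_trans one_pos hp
  have hC0 : maximalOpNorm p w ≠ 0 := by
    intro h0; rw [h0] at hC1; simp at hC1
  set D := 2 * maximalOpNorm p w with hDdef
  have hD0 : D ≠ 0 := by
    rw [hDdef]; exact mul_ne_zero (by norm_num) hC0
  have hDt : D ≠ ∞ := by
    rw [hDdef]; exact ENNReal.mul_ne_top (by norm_num) hC
  set N := (∫⁻ x, h x ^ p * w x) ^ (1/p) with hNdef
  have hNt : N ≠ ∞ := ENNReal.rpow_ne_top_of_nonneg (by positivity) hh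
  -- iterated norms
  have iterN : ∀ k : ℕ, (∫⁻ x, maximalFn^[k] h x ^ p * w x) ^ (1/p) ≤ maximalOpNorm p w ^ k * N
      ∧ (∫⁻ x, maximalFn^[k] h x ^ p * w x) ≠ ∞ := by
    intro k
    induction k with
    | zero =>
      simp only [Function.iterate_zero, id_eq, pow_zero, one_mul]
      exact ⟨hNdef.ge, hh⟩
    | succ k ih =>
      have h1 : (∫⁻ x, maximalFn (maximalFn^[k] h) x ^ p * w x) ^ (1/p) ≤
          maximalOpNorm p w * (∫⁻ x, maximalFn^[k] h x ^ p * w x) ^ (1/p) :=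
        norm_M_le hp w hC _ ih.2
      have h2 : (∫⁻ x, maximalFn^[k+1] h x ^ p * w x) ^ (1/p) ≤
          maximalOpNorm p w ^ (k+1) * N := by
        rw [Function.iterate_succ_apply']
        calc (∫⁻ x, maximalFn (maximalFn^[k] h) x ^ p * w x) ^ (1/p)
            ≤ maximalOpNorm p w * (∫⁻ x, maximalFn^[k] h x ^ p * w x) ^ (1/p) := h1
          _ ≤ maximalOpNorm p w * (maximalOpNorm p w ^ k * N) := mul_le_mul_right ih.1 _
          _ = maximalOpNorm p w ^ (k+1) * N := by rw [pow_succ, mul_comm _ (maximalOpNorm p w), mul_assoc]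
      refine ⟨h2, ?_⟩
      intro htop
      rw [htop, ENNReal.top_rpow_of_pos (by positivity)] at h2
      exact (ENNReal.mul_ne_top (ENNReal.pow_ne_top hC) hNt) (top_le_iff.1 h2)
  have hgm : ∀ k : ℕ, Measurable fun x => maximalFn^[k+1] h x / D^(k+1) := by
    intro k
    simp only [Function.iterate_succ_apply']
    exact (measurable_maximalFn _).div measurable_const
  have hTm : Measurable fun x => ∑' k : ℕ, maximalFn^[k+1] h x / D^(k+1) :=
    Measurable.ennreal_tsum hgm
  -- weighted measure
  set μ := volume.withDensity w with hμdef
  have hwfin : ∀ᵐ x ∂(volume : Measure (Fin n → ℝ)), w x < ∞ := hw.2.mono fun x hx => hx.2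
  have conv : ∀ u : (Fin n → ℝ) → ℝ≥0∞,
      (∫⁻ x, u x ^ p * w x) = ∫⁻ x, u x ^ p ∂μ := by
    intro u
    rw [hμdef, lintegral_withDensity_eq_lintegral_mul_non_measurable _ hw.1 hwfin]
    exact lintegral_congr fun x => by rw [Pi.mul_apply, mul_comm]
  -- step3 : norms of g k
  have step3 : ∀ k : ℕ, (∫⁻ x, (maximalFn^[k+1] h x / D^(k+1)) ^ p * w x) ^ (1/p) ≤
      N / 2^(k+1) := by
    intro k
    have hDk0 : (D^(k+1) : ℝ≥0∞) ≠ 0 := pow_ne_zero _ hD0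
    have e1 : ∀ x, maximalFn^[k+1] h x / D^(k+1) = (D^(k+1))⁻¹ * maximalFn^[k+1] h x := by
      intro x; rw [div_eq_mul_inv, mul_comm]
    calc (∫⁻ x, (maximalFn^[k+1] h x / D^(k+1)) ^ p * w x) ^ (1/p)
        = (D^(k+1))⁻¹ * (∫⁻ x, maximalFn^[k+1] h x ^ p * w x) ^ (1/p) := by
          simp_rw [e1]
          exact norm_smul w hp0 _ (ENNReal.inv_ne_top.2 hDk0)
      _ ≤ (D^(k+1))⁻¹ * (maximalOpNorm p w ^ (k+1) * N) := mul_le_mul_right (iterN (k+1)).1 _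
      _ = N / 2^(k+1) := by
          rw [hDdef, mul_pow, ENNReal.mul_inv (Or.inl (by positivity))
            (Or.inl (ENNReal.pow_ne_top (by norm_num)))]
          rw [mul_assoc, ← mul_assoc ((maximalOpNorm p w ^ (k+1))⁻¹) _ _,
            ENNReal.inv_mul_cancel (pow_ne_zero _ hC0) (ENNReal.pow_ne_top hC), one_mul,
            div_eq_mul_inv, mul_comm]
  have step4 : ∑' k : ℕ, N / 2^(k+1) = N := by
    simp_rw [div_eq_mul_inv, ENNReal.inv_pow]
    rw [ENNReal.tsum_mul_left, ENNReal.tsum_geometric_add_one, ENNReal.one_sub_inv_two,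
      ENNReal.mul_inv_cancel (by norm_num) (by norm_num), mul_one]
  refine ⟨Filter.Eventually.of_forall fun x => le_self_add, ?_, ?_⟩
  · -- (b)
    calc (∫⁻ x, (h x + ∑' k : ℕ, maximalFn^[k+1] h x / D^(k+1)) ^ p * w x) ^ (1/p)
        = (∫⁻ x, (h x + ∑' k : ℕ, maximalFn^[k+1] h x / D^(k+1)) ^ p ∂μ) ^ (1/p) := by
          rw [conv]
      _ ≤ (∫⁻ x, h x ^ p ∂μ) ^ (1/p) +
          (∫⁻ x, (∑' k : ℕ, maximalFn^[k+1] h x / D^(k+1)) ^ p ∂μ) ^ (1/p) :=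
          lp_add_le_left h _ hTm hp.le
      _ ≤ N + ∑' k : ℕ, (∫⁻ x, (maximalFn^[k+1] h x / D^(k+1)) ^ p ∂μ) ^ (1/p) := by
          refine add_le_add (le_of_eq ?_) (lp_tsum_le _ hgm hp.le)
          rw [← conv]
      _ ≤ N + ∑' k : ℕ, N / 2^(k+1) := by
          refine add_le_add_right (ENNReal.tsum_le_tsum fun k => ?_) N
          rw [← conv]
          exact step3 k
      _ = 2 * N := by rw [step4, two_mul]
  · -- (c)
    refine iSup₂_le fun Q hQ => ?_
    obtain ⟨hQm, hVpos, hVtop⟩ := cube_facts hQ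
    set A := avgE Q (fun x => h x + ∑' k : ℕ, maximalFn^[k+1] h x / D^(k+1)) with hAdef
    have key : ∀ x ∈ Q, A ≤ D * (h x + ∑' k : ℕ, maximalFn^[k+1] h x / D^(k+1)) := by
      intro x hx
      have e1 : A = avgE Q h + avgE Q (fun y => ∑' k : ℕ, maximalFn^[k+1] h y / D^(k+1)) := by
        rw [hAdef, avgE, avgE, avgE, lintegral_add_right _ hTm, ENNReal.add_div]
      have e2 : avgE Q (fun y => ∑' k : ℕ, maximalFn^[k+1] h y / D^(k+1)) =
          ∑' k : ℕ, avgE Q (fun y => maximalFn^[k+1] h y / D^(k+1)) := by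
        unfold avgE
        rw [lintegral_tsum fun k => (hgm k).aemeasurable]
        simp_rw [div_eq_mul_inv]
        rw [ENNReal.tsum_mul_right]
      have e3 : ∀ k : ℕ, avgE Q (fun y => maximalFn^[k+1] h y / D^(k+1)) ≤
          maximalFn^[k+2] h x / D^(k+1) := by
        intro k
        have hDkinv : ((D^(k+1) : ℝ≥0∞))⁻¹ ≠ ∞ := ENNReal.inv_ne_top.2 (pow_ne_zero _ hD0)
        have ea : avgE Q (fun y => maximalFn^[k+1] h y / D^(k+1)) =
            avgE Q (maximalFn^[k+1] h) / D^(k+1) := by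
          unfold avgE
          have : ∫⁻ y in Q, maximalFn^[k+1] h y / D^(k+1)
              = (∫⁻ y in Q, maximalFn^[k+1] h y) * (D^(k+1))⁻¹ := by
            simp_rw [div_eq_mul_inv]
            exact lintegral_mul_const' _ _ hDkinv
          rw [this]
          simp only [div_eq_mul_inv]
          rw [mul_right_comm]
        rw [ea]
        refine ENNReal.div_le_div_right ?_ _
        have := avg_le_maximalFn (maximalFn^[k+1] h) hQ hx
        rwa [← Function.iterate_succ_apply' maximalFn (k+1) h] at this
      have e4 : avgE Q h ≤ maximalFn h x := by
        have := avg_le_maximalFn h hQ hx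
        exact this
      have e5 : ∑' k : ℕ, D * (maximalFn^[k+1] h x / D^(k+1)) =
          maximalFn h x + ∑' k : ℕ, maximalFn^[k+2] h x / D^(k+1) := by
        rw [tsum_eq_zero_add' ENNReal.summable]
        congr 1
        · simp only [zero_add, pow_one, Function.iterate_one]
          exact ENNReal.mul_div_cancel hD0 hDt
        · refine tsum_congr fun k => ?_
          rw [pow_succ D (k+1)]
          have hsplit : maximalFn^[k+1+1] h x / (D^(k+1) * D)
              = (maximalFn^[k+1+1] h x / D^(k+1)) / D := by
            rw [div_eq_mul_inv, div_eq_mul_inv, div_eq_mul_inv,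
              ENNReal.mul_inv (Or.inl (pow_ne_zero _ hD0)) (Or.inl (ENNReal.pow_ne_top hDt)),
              ← mul_assoc]
          rw [hsplit]
          exact ENNReal.mul_div_cancel hD0 hDt
      calc A = avgE Q h + ∑' k : ℕ, avgE Q (fun y => maximalFn^[k+1] h y / D^(k+1)) := by
            rw [e1, e2]
        _ ≤ maximalFn h x + ∑' k : ℕ, maximalFn^[k+2] h x / D^(k+1) :=
            add_le_add e4 (ENNReal.tsum_le_tsum e3)
        _ = ∑' k : ℕ, D * (maximalFn^[k+1] h x / D^(k+1)) := e5.symm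
        _ = D * ∑' k : ℕ, maximalFn^[k+1] h x / D^(k+1) := ENNReal.tsum_mul_left
        _ ≤ D * (h x + ∑' k : ℕ, maximalFn^[k+1] h x / D^(k+1)) :=
            mul_le_mul_right le_add_self _
    have hinv : ∀ x ∈ Q,
        (h x + ∑' k : ℕ, maximalFn^[k+1] h x / D^(k+1))⁻¹ ≤ D / A := by
      intro x hx
      have h1 := key x hx
      have h2 : A / D ≤ h x + ∑' k : ℕ, maximalFn^[k+1] h x / D^(k+1) :=
        ENNReal.div_le_of_le_mul (mul_comm D _ ▸ h1)
      calc (h x + ∑' k : ℕ, maximalFn^[k+1] h x / D^(k+1))⁻¹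
          ≤ (A / D)⁻¹ := ENNReal.inv_le_inv.2 h2
        _ = D / A := ENNReal.inv_div (Or.inl hDt) (Or.inl hD0)
    have hess : essSup (fun x => (h x + ∑' k : ℕ, maximalFn^[k+1] h x / D^(k+1))⁻¹)
        (volume.restrict Q) ≤ D / A := by
      refine essSup_le_of_ae_le _ ?_
      filter_upwards [ae_restrict_mem hQm] with x hx using hinv x hx
    calc A * essSup (fun x => (h x + ∑' k : ℕ, maximalFn^[k+1] h x / D^(k+1))⁻¹)
          (volume.restrict Q) ≤ A * (D / A) := mul_le_mul_right hess A
      _ ≤ D := ENNReal.mul_div_le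

end S11

/-- Rubio de Francia iteration algorithm: for `p ∈ (1,∞)` and `w ∈ A_p`
there is an operator `ℛ` with `h ≤ ℛh`, `‖ℛh‖_{L^p(w)} ≤ 2‖h‖_{L^p(w)}` and
`ℛh ∈ A_1` with `[ℛh]_{A_1} ≤ 2‖M‖_{L^p(w)→L^p(w)}`, for every nonnegative `h ∈ L^p(w)`. -/
theorem statement11 {n : ℕ} (p : ℝ) (hp : 1 < p)
    (w : (Fin n → ℝ) → ℝ≥0∞) (hw : IsWeight w) (hA : apConst p w ≠ ∞) :
    ∃ R : ((Fin n → ℝ) → ℝ≥0∞) → ((Fin n → ℝ) → ℝ≥0∞),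
      ∀ h : (Fin n → ℝ) → ℝ≥0∞, (∫⁻ x, h x ^ p * w x) ≠ ∞ →
        (∀ᵐ x ∂(volume : Measure (Fin n → ℝ)), h x ≤ R h x) ∧
        (∫⁻ x, R h x ^ p * w x) ^ (1/p) ≤ 2 * (∫⁻ x, h x ^ p * w x) ^ (1/p) ∧
        a1Const (R h) ≤ 2 * maximalOpNorm p w := by
  rcases eq_or_ne (maximalOpNorm p w) ∞ with hC | hC
  · refine ⟨fun h => h, fun h hh => ⟨Filter.Eventually.of_forall fun x => le_rfl,
      le_mul_of_one_le_left zero_le one_le_two, ?_⟩⟩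
    rw [hC, ENNReal.mul_top (by norm_num : (2:ℝ≥0∞) ≠ 0)]
    exact le_top
  · exact ⟨fun h x => h x + ∑' k : ℕ, maximalFn^[k+1] h x / (2 * maximalOpNorm p w)^(k+1),
      fun h hh => S11.case2 hp w hw hC (S11.one_le_opnorm hp w hw hA) h hh⟩
end
end

section
/- Let $g_r(t) := \sum_{\ell=0}^m (-1)^\ell \binom{m}{\ell} \frac{\mathbf{1}_{\{t > \ell r^2\}}}{\sqrt{t - \ell r^2}}$ for $r > 0$ and integer $m \ge 1$. Then for every integer $j \ge 1$ and constant $c > 0$ there is a constant $C_m$ (depending only on $m$, $n$, $c$) such that $\int_0^\infty |g_r(t)| \, e^{-4^j r^2/(ct)} \, (r/\sqrt{t})^{n-1} \, \frac{dt}{\sqrt{t}} \le C_m \, 2^{-nj}$. -/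
open MeasureTheory

open Real Set Finset

noncomputable section

lemma aux_exp_sub_one_le' {x : ℝ} : Real.exp x - 1 ≤ x * Real.exp x := by
  have h := Real.add_one_le_exp (-x)
  rw [Real.exp_neg] at h
  have hpos := Real.exp_pos x
  have h3 := mul_le_mul_of_nonneg_right h hpos.le
  rw [inv_mul_cancel₀ (Real.exp_ne_zero x)] at h3
  nlinarith

lemma aux_integrableOn_gamma {p b : ℝ} (hp : 0 < p) (hb : 0 < b) :
    IntegrableOn (fun s : ℝ => s ^ (p - 1) * Real.exp (-(b * s))) (Set.Ioi (0:ℝ)) := by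
  have h := integrableOn_rpow_mul_exp_neg_mul_rpow (p := 1) (s := p - 1) (b := b)
    (by linarith) (by norm_num) hb
  refine h.congr_fun (fun x hx => ?_) measurableSet_Ioi
  dsimp only
  rw [Real.rpow_one, neg_mul]

lemma aux_inv_sqrt_rep {b : ℝ} (hb : 0 < b) :
    (Real.sqrt b)⁻¹ =
      (Real.sqrt π)⁻¹ * ∫ s in Set.Ioi (0:ℝ), s ^ ((1:ℝ)/2 - 1) * Real.exp (-(b * s)) := by
  rw [Real.integral_rpow_mul_exp_neg_mul_Ioi (by norm_num) hb, Real.Gamma_one_half_eq]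
  have h1 : ((1:ℝ)/b) ^ ((1:ℝ)/2) = (Real.sqrt b)⁻¹ := by
    rw [one_div, ← Real.sqrt_eq_rpow, Real.sqrt_inv]
  rw [h1]
  have : Real.sqrt π ≠ 0 := by positivity
  field_simp

lemma aux_inv_sqrt_eq {x : ℝ} (hx : 0 ≤ x) :
    (Real.sqrt x)⁻¹ = x ^ (-(1/2):ℝ) := by
  rw [Real.sqrt_eq_rpow, ← Real.rpow_neg hx]

lemma aux_exp_neg_le (n : ℕ) {u : ℝ} (hu : 0 < u) :
    Real.exp (-u) ≤ Real.sqrt (n.factorial / 2 ^ n) * u ^ (-((n:ℝ)/2)) := by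
  have key : u ^ ((n:ℝ)/2) * Real.exp (-u) ≤ Real.sqrt (n.factorial / 2 ^ n) := by
    have hA : (0:ℝ) ≤ u ^ ((n:ℝ)/2) * Real.exp (-u) := by positivity
    rw [Real.le_sqrt hA (by positivity)]
    have h1 := Real.pow_div_factorial_le_exp (2*u) (by positivity) n
    have h2 : (2*u)^n ≤ (n.factorial : ℝ) * Real.exp (2*u) := by
      rw [div_le_iff₀ (by positivity)] at h1; linarith
    have h3 : (u ^ ((n:ℝ)/2) * Real.exp (-u)) ^ (2:ℕ) = u ^ n / Real.exp (2*u) := by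
      rw [mul_pow, ← Real.rpow_natCast (u ^ ((n:ℝ)/2)) 2, ← Real.rpow_mul hu.le]
      rw [show (n:ℝ)/2*(2:ℕ) = (n:ℝ) by push_cast; ring, Real.rpow_natCast]
      rw [← Real.exp_nat_mul, div_eq_mul_inv, ← Real.exp_neg]
      congr 2
      push_cast; ring
    rw [h3, div_le_div_iff₀ (by positivity) (by positivity)]
    calc u ^ n * 2 ^ n = (2*u)^n := by rw [mul_pow]; ring
      _ ≤ (n.factorial : ℝ) * Real.exp (2*u) := h2
  have hrw : Real.exp (-u) = u ^ (-((n:ℝ)/2)) * (u ^ ((n:ℝ)/2) * Real.exp (-u)) := by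
    rw [Real.rpow_neg hu.le]
    have hpow : (0:ℝ) < u ^ ((n:ℝ)/2) := Real.rpow_pos_of_pos hu _
    field_simp
  rw [hrw, mul_comm (Real.sqrt _)]
  exact mul_le_mul_of_nonneg_left key (by positivity)

lemma aux_Xbound (n j : ℕ) {c r t : ℝ} (hc : 0 < c) (hr : 0 < r) (ht : 0 < t) :
    Real.exp (-((4:ℝ)^j * r^2) / (c * t)) * (r / Real.sqrt t) ^ ((n:ℝ)-1) / Real.sqrt t
      ≤ (Real.sqrt (n.factorial / 2^n) * c ^ ((n:ℝ)/2)) * (2:ℝ) ^ (-(n:ℝ)*(j:ℝ)) * r⁻¹ := by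
  have h4 : (0:ℝ) < (4:ℝ)^j := by positivity
  have hu : (0:ℝ) < (4:ℝ)^j * r^2 / (c * t) := by positivity
  have hsq : Real.sqrt t = t ^ ((1:ℝ)/2) := Real.sqrt_eq_rpow t
  have hsqpos : (0:ℝ) < Real.sqrt t := Real.sqrt_pos.mpr ht
  have hA : ((4:ℝ)^j * r^2 / (c * t)) ^ (-((n:ℝ)/2))
      = (2:ℝ) ^ (-(n:ℝ)*(j:ℝ)) * r ^ (-(n:ℝ)) * (c ^ ((n:ℝ)/2) * t ^ ((n:ℝ)/2)) := by
    rw [div_eq_mul_inv ((4:ℝ)^j * r^2), mul_inv, ← mul_assoc,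
      Real.mul_rpow (by positivity) (by positivity),
      Real.mul_rpow (by positivity) (by positivity),
      Real.mul_rpow (by positivity) (by positivity),
      Real.inv_rpow hc.le, Real.inv_rpow ht.le,
      ← Real.rpow_neg hc.le, ← Real.rpow_neg ht.le, neg_neg]
    have hB : ((4:ℝ)^j) ^ (-((n:ℝ)/2)) = (2:ℝ) ^ (-(n:ℝ)*(j:ℝ)) := by
      rw [show (4:ℝ) = 2^(2:ℕ) by norm_num, ← pow_mul, ← Real.rpow_natCast 2 (2*j),
        ← Real.rpow_mul (by norm_num : (0:ℝ) ≤ 2)]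
      congr 1; push_cast; ring
    have hC : (r^2) ^ (-((n:ℝ)/2)) = r ^ (-(n:ℝ)) := by
      rw [← Real.rpow_natCast r 2, ← Real.rpow_mul hr.le]
      congr 1; push_cast; ring
    rw [hB, hC]
    ring_nf
  have hD : (r / Real.sqrt t) ^ ((n:ℝ)-1)
      = r ^ ((n:ℝ)-1) * t ^ (-(((n:ℝ)-1)/2)) := by
    rw [div_eq_mul_inv, Real.mul_rpow hr.le (by positivity),
      Real.inv_rpow (Real.sqrt_nonneg t), hsq, ← Real.rpow_mul ht.le,
      ← Real.rpow_neg ht.le]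
    congr 1; ring
  have hE : (Real.sqrt t)⁻¹ = t ^ (-((1:ℝ)/2)) := by
    rw [hsq, ← Real.rpow_neg ht.le]
  have step1 : Real.exp (-((4:ℝ)^j * r^2) / (c * t))
      ≤ Real.sqrt (n.factorial / 2^n) * (((4:ℝ)^j * r^2 / (c * t)) ^ (-((n:ℝ)/2))) := by
    rw [neg_div]
    exact aux_exp_neg_le n hu
  have hnn : (0:ℝ) ≤ (r / Real.sqrt t) ^ ((n:ℝ)-1) / Real.sqrt t := by positivity
  calc Real.exp (-((4:ℝ)^j * r^2) / (c * t)) * (r / Real.sqrt t) ^ ((n:ℝ)-1) / Real.sqrt t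
      = Real.exp (-((4:ℝ)^j * r^2) / (c * t)) * ((r / Real.sqrt t) ^ ((n:ℝ)-1) / Real.sqrt t) := by
        ring
    _ ≤ (Real.sqrt (n.factorial / 2^n) * (((4:ℝ)^j * r^2 / (c * t)) ^ (-((n:ℝ)/2))))
          * ((r / Real.sqrt t) ^ ((n:ℝ)-1) / Real.sqrt t) := by
        exact mul_le_mul_of_nonneg_right step1 hnn
    _ = (Real.sqrt (n.factorial / 2^n) * c ^ ((n:ℝ)/2)) * (2:ℝ) ^ (-(n:ℝ)*(j:ℝ)) * r⁻¹ := by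
        rw [hA, hD, div_eq_mul_inv _ (Real.sqrt t), hE]
        have ht0 : t ^ ((n:ℝ)/2) * (t ^ (-(((n:ℝ)-1)/2)) * t ^ (-((1:ℝ)/2))) = 1 := by
          rw [← Real.rpow_add ht, ← Real.rpow_add ht]
          rw [show (n:ℝ)/2 + (-(((n:ℝ)-1)/2) + -((1:ℝ)/2)) = 0 by ring, Real.rpow_zero]
        have hr0 : r ^ (-(n:ℝ)) * r ^ ((n:ℝ)-1) = r⁻¹ := by
          rw [← Real.rpow_add hr, show -(n:ℝ) + ((n:ℝ)-1) = -1 by ring, Real.rpow_neg_one]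
        calc Real.sqrt (n.factorial / 2^n) *
              ((2:ℝ) ^ (-(n:ℝ)*(j:ℝ)) * r ^ (-(n:ℝ)) * (c ^ ((n:ℝ)/2) * t ^ ((n:ℝ)/2)))
              * (r ^ ((n:ℝ)-1) * t ^ (-(((n:ℝ)-1)/2)) * t ^ (-((1:ℝ)/2)))
            = (Real.sqrt (n.factorial / 2^n) * c ^ ((n:ℝ)/2)) * (2:ℝ) ^ (-(n:ℝ)*(j:ℝ))
              * (r ^ (-(n:ℝ)) * r ^ ((n:ℝ)-1))
              * (t ^ ((n:ℝ)/2) * (t ^ (-(((n:ℝ)-1)/2)) * t ^ (-((1:ℝ)/2)))) := by ring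
          _ = (Real.sqrt (n.factorial / 2^n) * c ^ ((n:ℝ)/2)) * (2:ℝ) ^ (-(n:ℝ)*(j:ℝ)) * r⁻¹ := by
              rw [ht0, hr0, mul_one]

lemma aux_pieceIntOn {A B : ℝ} (hAB : A ≤ B) :
    IntegrableOn (fun t : ℝ => (t - A) ^ (-(1/2):ℝ)) (Set.Ioc A B) := by
  have h1 : IntervalIntegrable (fun x : ℝ => x ^ (-(1/2):ℝ)) volume 0 (B - A) :=
    intervalIntegral.intervalIntegrable_rpow' (by norm_num)
  have h2 := h1.comp_sub_right A
  rw [zero_add, sub_add_cancel] at h2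
  exact (intervalIntegrable_iff_integrableOn_Ioc_of_le hAB).mp h2

lemma aux_pieceVal {A B : ℝ} (hAB : A ≤ B) :
    ∫ t in Set.Ioc A B, (t - A) ^ (-(1/2):ℝ) = 2 * (B - A) ^ ((1:ℝ)/2) := by
  rw [← intervalIntegral.integral_of_le hAB,
    intervalIntegral.integral_comp_sub_right (fun x => x ^ (-(1/2):ℝ)) A, sub_self,
    integral_rpow (Or.inl (by norm_num))]
  rw [Real.zero_rpow (by norm_num)]
  norm_num
  ring

/-- The kernel-expansion function `g_r(t) = ∑_{ℓ=0}^m (-1)^ℓ C(m,ℓ) 𝟙_{t > ℓr²}/√(t-ℓr²)`. -/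
def gFun (m : ℕ) (r t : ℝ) : ℝ :=
  ∑ ℓ ∈ Finset.range (m + 1),
    (-1 : ℝ) ^ ℓ * (m.choose ℓ) * (if (ℓ : ℝ) * r ^ 2 < t then (Real.sqrt (t - ℓ * r ^ 2))⁻¹ else 0)

lemma aux_gFun_rep (m : ℕ) {r t : ℝ} (hr : 0 < r) (ht : (m:ℝ) * r^2 < t) :
    gFun m r t = (Real.sqrt π)⁻¹ *
      ∫ s in Set.Ioi (0:ℝ),
        s ^ ((1:ℝ)/2 - 1) * Real.exp (-(t * s)) * (1 - Real.exp (r^2 * s)) ^ m := by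
  have ha : (0:ℝ) < r^2 := by positivity
  have hlt : ∀ ℓ ∈ Finset.range (m+1), (ℓ:ℝ) * r^2 < t := fun ℓ hℓ => by
    have : (ℓ:ℝ) ≤ (m:ℝ) := by exact_mod_cast Nat.lt_succ_iff.mp (Finset.mem_range.mp hℓ)
    nlinarith
  have key : gFun m r t = ∑ ℓ ∈ Finset.range (m+1),
      (-1:ℝ)^ℓ * (m.choose ℓ) *
        ((Real.sqrt π)⁻¹ * ∫ s in Set.Ioi (0:ℝ),
          s ^ ((1:ℝ)/2 - 1) * Real.exp (-((t - ℓ * r^2) * s))) := by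
    unfold gFun
    refine Finset.sum_congr rfl (fun ℓ hℓ => ?_)
    rw [if_pos (hlt ℓ hℓ), aux_inv_sqrt_rep (by linarith [hlt ℓ hℓ])]
  rw [key]
  have hint : ∀ ℓ ∈ Finset.range (m+1),
      IntegrableOn (fun s : ℝ => (-1:ℝ)^ℓ * (m.choose ℓ) *
        (s ^ ((1:ℝ)/2 - 1) * Real.exp (-((t - ℓ * r^2) * s)))) (Set.Ioi (0:ℝ)) :=
    fun ℓ hℓ => (aux_integrableOn_gamma (by norm_num) (by linarith [hlt ℓ hℓ])).const_mul _
  calc ∑ ℓ ∈ Finset.range (m+1), (-1:ℝ)^ℓ * (m.choose ℓ) *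
        ((Real.sqrt π)⁻¹ * ∫ s in Set.Ioi (0:ℝ),
          s ^ ((1:ℝ)/2 - 1) * Real.exp (-((t - ℓ * r^2) * s)))
      = (Real.sqrt π)⁻¹ * ∑ ℓ ∈ Finset.range (m+1),
          ∫ s in Set.Ioi (0:ℝ), (-1:ℝ)^ℓ * (m.choose ℓ) *
            (s ^ ((1:ℝ)/2 - 1) * Real.exp (-((t - ℓ * r^2) * s))) := by
        rw [Finset.mul_sum]
        refine Finset.sum_congr rfl (fun ℓ hℓ => ?_)
        rw [integral_const_mul]; ring
    _ = (Real.sqrt π)⁻¹ * ∫ s in Set.Ioi (0:ℝ), ∑ ℓ ∈ Finset.range (m+1),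
          (-1:ℝ)^ℓ * (m.choose ℓ) *
            (s ^ ((1:ℝ)/2 - 1) * Real.exp (-((t - ℓ * r^2) * s))) := by
        rw [MeasureTheory.integral_finset_sum _ hint]
    _ = (Real.sqrt π)⁻¹ * ∫ s in Set.Ioi (0:ℝ),
          s ^ ((1:ℝ)/2 - 1) * Real.exp (-(t * s)) * (1 - Real.exp (r^2 * s)) ^ m := by
        congr 1
        refine setIntegral_congr_fun measurableSet_Ioi (fun s hs => ?_)
        have hexp : ∀ ℓ : ℕ, Real.exp (-((t - ℓ * r^2) * s))
            = Real.exp (-(t * s)) * (Real.exp (r^2 * s)) ^ ℓ := fun ℓ => by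
          rw [← Real.exp_nat_mul, ← Real.exp_add]; ring_nf
        simp_rw [hexp]
        rw [sub_eq_add_neg (1:ℝ), add_comm (1:ℝ), add_pow]
        rw [Finset.mul_sum]
        refine Finset.sum_congr rfl (fun ℓ hℓ => ?_)
        rw [neg_pow]
        ring

lemma aux_gFun_ptbound (m : ℕ) {a t : ℝ} (ha : 0 < a) (s : ℝ) (hs : 0 < s) :
    |s ^ ((1:ℝ)/2 - 1) * Real.exp (-(t * s)) * (1 - Real.exp (a * s)) ^ m|
      ≤ a ^ m * (s ^ (((m:ℝ)+1/2) - 1) * Real.exp (-((t - m * a) * s))) := by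
  have h1 : |s ^ ((1:ℝ)/2 - 1) * Real.exp (-(t * s)) * (1 - Real.exp (a * s)) ^ m|
      = s ^ ((1:ℝ)/2 - 1) * Real.exp (-(t * s)) * (Real.exp (a * s) - 1) ^ m := by
    rw [abs_mul, abs_mul, abs_pow, abs_sub_comm,
      abs_of_nonneg (by positivity : (0:ℝ) ≤ s ^ ((1:ℝ)/2 - 1)),
      abs_of_nonneg (Real.exp_pos _).le,
      abs_of_nonneg (by nlinarith [Real.one_le_exp (by positivity : (0:ℝ) ≤ a * s)])]
  rw [h1]
  have h2 : (Real.exp (a * s) - 1) ^ m ≤ (a * s * Real.exp (a * s)) ^ m := by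
    refine pow_le_pow_left₀ (by nlinarith [Real.one_le_exp (by positivity : (0:ℝ) ≤ a * s)]) ?_ m
    exact aux_exp_sub_one_le'
  calc s ^ ((1:ℝ)/2 - 1) * Real.exp (-(t * s)) * (Real.exp (a * s) - 1) ^ m
      ≤ s ^ ((1:ℝ)/2 - 1) * Real.exp (-(t * s)) * (a * s * Real.exp (a * s)) ^ m := by
        exact mul_le_mul_of_nonneg_left h2 (by positivity)
    _ = a ^ m * (s ^ (((m:ℝ)+1/2) - 1) * Real.exp (-((t - m * a) * s))) := by
        rw [mul_pow, mul_pow, ← Real.exp_nat_mul]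
        have hsm : s ^ ((1:ℝ)/2 - 1) * s ^ m = s ^ (((m:ℝ)+1/2) - 1) := by
          rw [← Real.rpow_natCast s m, ← Real.rpow_add hs]; ring_nf
        have he : Real.exp (-(t * s)) * Real.exp ((m:ℝ) * (a * s))
            = Real.exp (-((t - m * a) * s)) := by
          rw [← Real.exp_add]; ring_nf
        calc s ^ ((1:ℝ)/2 - 1) * Real.exp (-(t*s)) * (a^m * s^m * Real.exp ((m:ℝ)*(a*s)))
            = a^m * ((s ^ ((1:ℝ)/2 - 1) * s^m) * (Real.exp (-(t*s)) * Real.exp ((m:ℝ)*(a*s)))) := by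
              ring
          _ = a ^ m * (s ^ (((m:ℝ)+1/2) - 1) * Real.exp (-((t - m * a) * s))) := by rw [hsm, he]

lemma aux_gFun_tail (m : ℕ) {r t : ℝ} (hr : 0 < r) (ht : (m:ℝ) * r^2 < t) :
    |gFun m r t| ≤ (Real.sqrt π)⁻¹ * Real.Gamma ((m:ℝ)+1/2) * (r^2)^m
      * (t - m * r^2) ^ (-((m:ℝ)+1/2)) := by
  have ha : (0:ℝ) < r^2 := by positivity
  have hb : 0 < t - (m:ℝ) * r^2 := by linarith
  have hint : IntegrableOn
      (fun s : ℝ => s ^ (((m:ℝ)+1/2) - 1) * Real.exp (-((t - m*r^2) * s))) (Set.Ioi (0:ℝ)) :=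
    aux_integrableOn_gamma (by positivity) hb
  rw [aux_gFun_rep m hr ht, abs_mul,
    abs_of_nonneg (by positivity : (0:ℝ) ≤ (Real.sqrt π)⁻¹)]
  have h1 : |∫ s in Set.Ioi (0:ℝ),
      s ^ ((1:ℝ)/2 - 1) * Real.exp (-(t * s)) * (1 - Real.exp (r^2 * s)) ^ m|
      ≤ ∫ s in Set.Ioi (0:ℝ),
        (r^2) ^ m * (s ^ (((m:ℝ)+1/2) - 1) * Real.exp (-((t - m*r^2) * s))) := by
    have h0 := norm_integral_le_integral_norm (μ := volume.restrict (Set.Ioi (0:ℝ)))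
      (f := fun s : ℝ => s ^ ((1:ℝ)/2 - 1) * Real.exp (-(t * s)) * (1 - Real.exp (r^2 * s)) ^ m)
    simp only [Real.norm_eq_abs] at h0
    refine le_trans h0 ?_
    refine integral_mono_of_nonneg (Filter.Eventually.of_forall fun s => abs_nonneg _)
      (hint.const_mul _) ?_
    filter_upwards [ae_restrict_mem measurableSet_Ioi] with s hs
    exact aux_gFun_ptbound m ha s hs
  have h2 : (∫ s in Set.Ioi (0:ℝ),
        (r^2) ^ m * (s ^ (((m:ℝ)+1/2) - 1) * Real.exp (-((t - m*r^2) * s))))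
      = (r^2) ^ m * (Real.Gamma ((m:ℝ)+1/2) * (t - m*r^2) ^ (-((m:ℝ)+1/2))) := by
    rw [integral_const_mul, Real.integral_rpow_mul_exp_neg_mul_Ioi (by positivity) hb,
      one_div, Real.inv_rpow hb.le, ← Real.rpow_neg hb.le]
    ring
  calc (Real.sqrt π)⁻¹ * |∫ s in Set.Ioi (0:ℝ),
        s ^ ((1:ℝ)/2 - 1) * Real.exp (-(t * s)) * (1 - Real.exp (r^2 * s)) ^ m|
      ≤ (Real.sqrt π)⁻¹ * ((r^2) ^ m * (Real.Gamma ((m:ℝ)+1/2)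
          * (t - m*r^2) ^ (-((m:ℝ)+1/2)))) := by
        rw [← h2]; exact mul_le_mul_of_nonneg_left h1 (by positivity)
    _ = (Real.sqrt π)⁻¹ * Real.Gamma ((m:ℝ)+1/2) * (r^2)^m
        * (t - m * r^2) ^ (-((m:ℝ)+1/2)) := by ring

/-- Integrable majorant for `gFun`. -/
def aMaj (m : ℕ) (r : ℝ) : ℝ → ℝ := fun t =>
  (∑ ℓ ∈ Finset.range (m+1), (m.choose ℓ : ℝ) *
     (Set.Ioc ((ℓ:ℝ)*r^2) (((m:ℝ)+1)*r^2)).indicator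
       (fun u => (u - (ℓ:ℝ)*r^2) ^ (-(1/2):ℝ)) t)
  + (Set.Ioi (((m:ℝ)+1)*r^2)).indicator
      (fun u => ((Real.sqrt π)⁻¹ * Real.Gamma ((m:ℝ)+1/2) * ((m:ℝ)+1) ^ ((m:ℝ)+1/2))
        * (r^2)^m * u ^ (-((m:ℝ)+1/2))) t

lemma aux_gFun_le_maj (m : ℕ) {r : ℝ} (hr : 0 < r) (t : ℝ) (ht : 0 < t) :
    |gFun m r t| ≤ aMaj m r t := by
  have ha : (0:ℝ) < r^2 := by positivity
  have hq : (0:ℝ) < (m:ℝ)+1/2 := by positivity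
  by_cases hcase : t ≤ ((m:ℝ)+1)*r^2
  · -- local regime
    have htail : (Set.Ioi (((m:ℝ)+1)*r^2)).indicator
        (fun u => ((Real.sqrt π)⁻¹ * Real.Gamma ((m:ℝ)+1/2) * ((m:ℝ)+1) ^ ((m:ℝ)+1/2))
          * (r^2)^m * u ^ (-((m:ℝ)+1/2))) t = 0 :=
      Set.indicator_of_notMem (by simpa using hcase) _
    have hsum : |gFun m r t| ≤ ∑ ℓ ∈ Finset.range (m+1), (m.choose ℓ : ℝ) *
        (Set.Ioc ((ℓ:ℝ)*r^2) (((m:ℝ)+1)*r^2)).indicator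
          (fun u => (u - (ℓ:ℝ)*r^2) ^ (-(1/2):ℝ)) t := by
      refine (Finset.abs_sum_le_sum_abs _ _).trans (Finset.sum_le_sum fun ℓ hℓ => ?_)
      rw [abs_mul, abs_mul, abs_pow, abs_neg, abs_one, one_pow, one_mul, Nat.abs_cast]
      refine mul_le_mul_of_nonneg_left ?_ (Nat.cast_nonneg _)
      by_cases hki : (ℓ:ℝ) * r^2 < t
      · rw [if_pos hki, Set.indicator_of_mem (Set.mem_Ioc.mpr ⟨hki, hcase⟩),
          abs_of_nonneg (inv_nonneg.mpr (Real.sqrt_nonneg _)),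
          aux_inv_sqrt_eq (by linarith : (0:ℝ) ≤ t - (ℓ:ℝ)*r^2)]
      · rw [if_neg hki, abs_zero]
        exact Set.indicator_nonneg
          (fun u hu => Real.rpow_nonneg (by linarith [hu.1] : (0:ℝ) ≤ u - (ℓ:ℝ)*r^2) _) t
    unfold aMaj
    rw [htail, add_zero]
    exact hsum
  · -- tail regime
    push_neg at hcase
    have hm0 : (0:ℝ) ≤ (m:ℝ) := Nat.cast_nonneg m
    have hma : (m:ℝ) * r^2 < t := by nlinarith
    have h1 := aux_gFun_tail m hr hma
    have hdivpos : (0:ℝ) < t / ((m:ℝ)+1) := by positivity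
    have h5 : t / ((m:ℝ)+1) ≤ t - (m:ℝ)*r^2 := by
      rw [div_le_iff₀ (by positivity : (0:ℝ) < (m:ℝ)+1)]
      nlinarith
    have h6 : (t - (m:ℝ)*r^2) ^ (-((m:ℝ)+1/2))
        ≤ ((m:ℝ)+1) ^ ((m:ℝ)+1/2) * t ^ (-((m:ℝ)+1/2)) := by
      refine le_trans (Real.rpow_le_rpow_of_nonpos hdivpos h5 (by linarith)) ?_
      rw [Real.div_rpow ht.le (by positivity), Real.rpow_neg (by positivity : (0:ℝ) ≤ (m:ℝ)+1),
        div_eq_mul_inv, inv_inv, mul_comm]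
    have hsum0 : (∑ ℓ ∈ Finset.range (m+1), (m.choose ℓ : ℝ) *
        (Set.Ioc ((ℓ:ℝ)*r^2) (((m:ℝ)+1)*r^2)).indicator
          (fun u => (u - (ℓ:ℝ)*r^2) ^ (-(1/2):ℝ)) t) = 0 := by
      refine Finset.sum_eq_zero (fun ℓ hℓ => ?_)
      rw [Set.indicator_of_notMem (fun hmem => absurd hmem.2 (not_le.mpr hcase)), mul_zero]
    unfold aMaj
    rw [hsum0, zero_add, Set.indicator_of_mem (by exact hcase : t ∈ Set.Ioi (((m:ℝ)+1)*r^2))]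
    calc |gFun m r t|
        ≤ (Real.sqrt π)⁻¹ * Real.Gamma ((m:ℝ)+1/2) * (r^2)^m
            * (t - m * r^2) ^ (-((m:ℝ)+1/2)) := h1
      _ ≤ (Real.sqrt π)⁻¹ * Real.Gamma ((m:ℝ)+1/2) * (r^2)^m
            * (((m:ℝ)+1) ^ ((m:ℝ)+1/2) * t ^ (-((m:ℝ)+1/2))) := by
          refine mul_le_mul_of_nonneg_left h6 ?_
          have := Real.Gamma_pos_of_pos hq
          positivity
      _ = ((Real.sqrt π)⁻¹ * Real.Gamma ((m:ℝ)+1/2) * ((m:ℝ)+1) ^ ((m:ℝ)+1/2))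
            * (r^2)^m * t ^ (-((m:ℝ)+1/2)) := by ring

lemma aux_maj_integrable (m : ℕ) (hm : 1 ≤ m) {r : ℝ} (hr : 0 < r) :
    Integrable (aMaj m r) (volume.restrict (Set.Ioi (0:ℝ))) := by
  have ha : (0:ℝ) < r^2 := by positivity
  have hb0 : (0:ℝ) < ((m:ℝ)+1)*r^2 := by positivity
  refine Integrable.add ?_ ?_
  · refine integrable_finset_sum _ (fun ℓ hℓ => ?_)
    have hle : (ℓ:ℝ) ≤ (m:ℝ) := by
      exact_mod_cast Nat.lt_succ_iff.mp (Finset.mem_range.mp hℓ)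
    have hAB : (ℓ:ℝ)*r^2 ≤ ((m:ℝ)+1)*r^2 := by nlinarith
    exact (((integrable_indicator_iff measurableSet_Ioc).mpr
      (aux_pieceIntOn hAB)).restrict).const_mul _
  · have hq1 : (1:ℝ) < (m:ℝ)+1/2 := by
      have : (1:ℝ) ≤ (m:ℝ) := by exact_mod_cast hm
      linarith
    have hIoi : IntegrableOn (fun u : ℝ => u ^ (-((m:ℝ)+1/2))) (Set.Ioi (((m:ℝ)+1)*r^2)) :=
      integrableOn_Ioi_rpow_of_lt (by linarith) hb0
    exact (((integrable_indicator_iff measurableSet_Ioi).mpr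
      (hIoi.const_mul _)).restrict)

lemma aux_maj_integral (m : ℕ) (hm : 1 ≤ m) {r : ℝ} (hr : 0 < r) :
    (∫ t in Set.Ioi (0:ℝ), aMaj m r t)
      ≤ ((2:ℝ)^m * (2 * ((m:ℝ)+1) ^ ((1:ℝ)/2))
        + ((Real.sqrt π)⁻¹ * Real.Gamma ((m:ℝ)+1/2) * ((m:ℝ)+1) ^ ((m:ℝ)+1/2))
          * (((m:ℝ)+1) ^ ((1:ℝ) - ((m:ℝ)+1/2))) / (((m:ℝ)+1/2) - 1)) * r := by
  have ha : (0:ℝ) < r^2 := by positivity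
  have hb0 : (0:ℝ) < ((m:ℝ)+1)*r^2 := by positivity
  have hq1 : (1:ℝ) < (m:ℝ)+1/2 := by
    have : (1:ℝ) ≤ (m:ℝ) := by exact_mod_cast hm
    linarith
  have hK : (0:ℝ) ≤ (Real.sqrt π)⁻¹ * Real.Gamma ((m:ℝ)+1/2) * ((m:ℝ)+1) ^ ((m:ℝ)+1/2) := by
    have := Real.Gamma_pos_of_pos (show (0:ℝ) < (m:ℝ)+1/2 by positivity)
    positivity
  -- square root of r^2
  have hroot : (r^2) ^ ((1:ℝ)/2) = r := by
    rw [← Real.rpow_natCast r 2, ← Real.rpow_mul hr.le]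
    norm_num
  have hb12 : (((m:ℝ)+1)*r^2) ^ ((1:ℝ)/2) = ((m:ℝ)+1) ^ ((1:ℝ)/2) * r := by
    rw [Real.mul_rpow (by positivity) ha.le, hroot]
  -- integrability for additivity
  have hint1 : Integrable (fun t => ∑ ℓ ∈ Finset.range (m+1), (m.choose ℓ : ℝ) *
      (Set.Ioc ((ℓ:ℝ)*r^2) (((m:ℝ)+1)*r^2)).indicator
        (fun u => (u - (ℓ:ℝ)*r^2) ^ (-(1/2):ℝ)) t) (volume.restrict (Set.Ioi (0:ℝ))) := by
    refine integrable_finset_sum _ (fun ℓ hℓ => ?_)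
    have hle : (ℓ:ℝ) ≤ (m:ℝ) := by
      exact_mod_cast Nat.lt_succ_iff.mp (Finset.mem_range.mp hℓ)
    have hAB : (ℓ:ℝ)*r^2 ≤ ((m:ℝ)+1)*r^2 := by nlinarith
    exact (((integrable_indicator_iff measurableSet_Ioc).mpr
      (aux_pieceIntOn hAB)).restrict).const_mul _
  have hIoi : IntegrableOn (fun u : ℝ => u ^ (-((m:ℝ)+1/2))) (Set.Ioi (((m:ℝ)+1)*r^2)) :=
    integrableOn_Ioi_rpow_of_lt (by linarith) hb0
  have hint2 : Integrable (fun t => (Set.Ioi (((m:ℝ)+1)*r^2)).indicator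
      (fun u => ((Real.sqrt π)⁻¹ * Real.Gamma ((m:ℝ)+1/2) * ((m:ℝ)+1) ^ ((m:ℝ)+1/2))
        * (r^2)^m * u ^ (-((m:ℝ)+1/2))) t) (volume.restrict (Set.Ioi (0:ℝ))) :=
    ((integrable_indicator_iff measurableSet_Ioi).mpr (hIoi.const_mul _)).restrict
  unfold aMaj
  rw [integral_add hint1 hint2, MeasureTheory.integral_finset_sum _ (fun ℓ hℓ => by
    have hle : (ℓ:ℝ) ≤ (m:ℝ) := by
      exact_mod_cast Nat.lt_succ_iff.mp (Finset.mem_range.mp hℓ)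
    have hAB : (ℓ:ℝ)*r^2 ≤ ((m:ℝ)+1)*r^2 := by nlinarith
    exact (((integrable_indicator_iff measurableSet_Ioc).mpr
      (aux_pieceIntOn hAB)).restrict).const_mul _)]
  have hsumle : (∑ ℓ ∈ Finset.range (m+1), ∫ t in Set.Ioi (0:ℝ), (m.choose ℓ : ℝ) *
      (Set.Ioc ((ℓ:ℝ)*r^2) (((m:ℝ)+1)*r^2)).indicator
        (fun u => (u - (ℓ:ℝ)*r^2) ^ (-(1/2):ℝ)) t)
      ≤ (2:ℝ)^m * (2 * ((m:ℝ)+1) ^ ((1:ℝ)/2)) * r := by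
    have hterm : ∀ ℓ ∈ Finset.range (m+1), (∫ t in Set.Ioi (0:ℝ), (m.choose ℓ : ℝ) *
        (Set.Ioc ((ℓ:ℝ)*r^2) (((m:ℝ)+1)*r^2)).indicator
          (fun u => (u - (ℓ:ℝ)*r^2) ^ (-(1/2):ℝ)) t)
        ≤ (m.choose ℓ : ℝ) * (2 * (((m:ℝ)+1) ^ ((1:ℝ)/2) * r)) := by
      intro ℓ hℓ
      have hle : (ℓ:ℝ) ≤ (m:ℝ) := by
        exact_mod_cast Nat.lt_succ_iff.mp (Finset.mem_range.mp hℓ)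
      have hA0 : (0:ℝ) ≤ (ℓ:ℝ)*r^2 := by positivity
      have hAB : (ℓ:ℝ)*r^2 ≤ ((m:ℝ)+1)*r^2 := by nlinarith
      have hsub : Set.Ioc ((ℓ:ℝ)*r^2) (((m:ℝ)+1)*r^2) ⊆ Set.Ioi (0:ℝ) :=
        fun x hx => lt_of_le_of_lt hA0 hx.1
      rw [MeasureTheory.integral_const_mul, setIntegral_indicator measurableSet_Ioc,
        Set.inter_eq_self_of_subset_right hsub, aux_pieceVal hAB]
      refine mul_le_mul_of_nonneg_left ?_ (Nat.cast_nonneg _)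
      have : (((m:ℝ)+1)*r^2 - (ℓ:ℝ)*r^2) ^ ((1:ℝ)/2) ≤ (((m:ℝ)+1)*r^2) ^ ((1:ℝ)/2) :=
        Real.rpow_le_rpow (by linarith) (by nlinarith) (by norm_num)
      rw [← hb12]
      linarith
    refine (Finset.sum_le_sum hterm).trans ?_
    rw [← Finset.sum_mul]
    have hcast : (∑ ℓ ∈ Finset.range (m+1), (m.choose ℓ : ℝ)) = (2:ℝ)^m := by
      rw [← Nat.cast_sum]
      norm_cast
      exact Nat.sum_range_choose m
    rw [hcast]
    ring_nf
    exact le_refl _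
  have htailval : (∫ t in Set.Ioi (0:ℝ), (Set.Ioi (((m:ℝ)+1)*r^2)).indicator
      (fun u => ((Real.sqrt π)⁻¹ * Real.Gamma ((m:ℝ)+1/2) * ((m:ℝ)+1) ^ ((m:ℝ)+1/2))
        * (r^2)^m * u ^ (-((m:ℝ)+1/2))) t)
      = ((Real.sqrt π)⁻¹ * Real.Gamma ((m:ℝ)+1/2) * ((m:ℝ)+1) ^ ((m:ℝ)+1/2))
        * (((m:ℝ)+1) ^ ((1:ℝ) - ((m:ℝ)+1/2))) / (((m:ℝ)+1/2) - 1) * r := by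
    rw [setIntegral_indicator measurableSet_Ioi,
      Set.inter_eq_self_of_subset_right (Set.Ioi_subset_Ioi hb0.le),
      MeasureTheory.integral_const_mul,
      integral_Ioi_rpow_of_lt (by linarith) hb0]
    have hbpow : (((m:ℝ)+1)*r^2) ^ (-((m:ℝ)+1/2) + 1)
        = ((m:ℝ)+1) ^ ((1:ℝ) - ((m:ℝ)+1/2)) * (r^2) ^ (-((m:ℝ)+1/2) + 1) := by
      rw [Real.mul_rpow (by positivity) ha.le]
      congr 2
      ring
    rw [hbpow, show (-((m:ℝ)+1/2) + 1) = -(((m:ℝ)+1/2) - 1) by ring]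
    have hapow : (r^2:ℝ)^m * (r^2) ^ (-((((m:ℝ)+1/2)) - 1)) = r := by
      rw [← Real.rpow_natCast (r^2) m, ← Real.rpow_add ha,
        show (m:ℝ) + -((((m:ℝ)+1/2)) - 1) = 1/2 by ring, hroot]
    have hD : (((m:ℝ)+1/2) - 1) ≠ 0 := by linarith
    rw [neg_div_neg_eq]
    linear_combination ((Real.sqrt π)⁻¹ * Real.Gamma ((m:ℝ)+1/2) * ((m:ℝ)+1) ^ ((m:ℝ)+1/2)
      * ((m:ℝ)+1) ^ ((1:ℝ) - ((m:ℝ)+1/2)) / (((m:ℝ)+1/2) - 1)) * hapow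
  rw [htailval]
  refine le_trans (add_le_add_left hsumle _) (le_of_eq (by ring))

/-- For every `m ≥ 1`, `n`, and `c > 0` there is a constant `C_m` such that
for all `r > 0` and integers `j ≥ 1`,
`∫₀^∞ |g_r(t)| e^{-4^j r²/(ct)} (r/√t)^{n-1} dt/√t ≤ C_m 2^{-nj}`. -/
theorem statement13 (n m : ℕ) (hm : 1 ≤ m) (c : ℝ) (hc : 0 < c) :
    ∃ C : ℝ, 0 < C ∧ ∀ (r : ℝ) (j : ℕ), 0 < r → 1 ≤ j →
      (∫ t in Set.Ioi (0 : ℝ),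
          |gFun m r t| * Real.exp (-((4 : ℝ) ^ j * r ^ 2) / (c * t)) *
            (r / Real.sqrt t) ^ ((n : ℝ) - 1) / Real.sqrt t) ≤
        C * (2 : ℝ) ^ (-(n : ℝ) * j) := by
  have hq1 : (1:ℝ) < (m:ℝ)+1/2 := by
    have : (1:ℝ) ≤ (m:ℝ) := by exact_mod_cast hm
    linarith
  have hGamma : (0:ℝ) < Real.Gamma ((m:ℝ)+1/2) :=
    Real.Gamma_pos_of_pos (by positivity)
  have hfac : (0:ℝ) < (n.factorial : ℝ) := by exact_mod_cast n.factorial_pos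
  refine ⟨(Real.sqrt (n.factorial / 2^n) * c ^ ((n:ℝ)/2)) *
      ((2:ℝ)^m * (2 * ((m:ℝ)+1) ^ ((1:ℝ)/2))
        + ((Real.sqrt π)⁻¹ * Real.Gamma ((m:ℝ)+1/2) * ((m:ℝ)+1) ^ ((m:ℝ)+1/2))
          * (((m:ℝ)+1) ^ ((1:ℝ) - ((m:ℝ)+1/2))) / (((m:ℝ)+1/2) - 1)), ?_, ?_⟩
  · have h2 : (0:ℝ) < ((m:ℝ)+1/2) - 1 := by linarith
    have h3 : (0:ℝ) < Real.sqrt (n.factorial / 2^n) := Real.sqrt_pos.mpr (by positivity)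
    positivity
  · intro r j hr hj
    have hE30 : (0:ℝ) ≤ (Real.sqrt (n.factorial/2^n) * c^((n:ℝ)/2))
        * (2:ℝ)^(-(n:ℝ)*(j:ℝ)) * r⁻¹ := by positivity
    have hpt : ∀ t ∈ Set.Ioi (0:ℝ),
        |gFun m r t| * Real.exp (-((4:ℝ)^j * r^2)/(c*t)) *
          (r / Real.sqrt t) ^ ((n:ℝ)-1) / Real.sqrt t
        ≤ ((Real.sqrt (n.factorial/2^n) * c^((n:ℝ)/2)) * (2:ℝ)^(-(n:ℝ)*(j:ℝ)) * r⁻¹)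
            * aMaj m r t := by
      intro t ht
      have ht0 : (0:ℝ) < t := ht
      have hX := aux_Xbound n j hc hr ht0
      have hXnn : (0:ℝ) ≤ Real.exp (-((4:ℝ)^j * r^2)/(c*t))
          * (r / Real.sqrt t) ^ ((n:ℝ)-1) / Real.sqrt t := by positivity
      have hgM := aux_gFun_le_maj m hr t ht0
      calc |gFun m r t| * Real.exp (-((4:ℝ)^j * r^2)/(c*t)) *
            (r / Real.sqrt t) ^ ((n:ℝ)-1) / Real.sqrt t
          = |gFun m r t| * (Real.exp (-((4:ℝ)^j * r^2)/(c*t)) *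
            (r / Real.sqrt t) ^ ((n:ℝ)-1) / Real.sqrt t) := by ring
        _ ≤ aMaj m r t * ((Real.sqrt (n.factorial/2^n) * c^((n:ℝ)/2))
            * (2:ℝ)^(-(n:ℝ)*(j:ℝ)) * r⁻¹) :=
          mul_le_mul hgM hX hXnn (le_trans (abs_nonneg _) hgM)
        _ = ((Real.sqrt (n.factorial/2^n) * c^((n:ℝ)/2)) * (2:ℝ)^(-(n:ℝ)*(j:ℝ)) * r⁻¹)
            * aMaj m r t := by ring
    have hmono : (∫ t in Set.Ioi (0:ℝ),
        |gFun m r t| * Real.exp (-((4:ℝ)^j * r^2)/(c*t)) *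
          (r / Real.sqrt t) ^ ((n:ℝ)-1) / Real.sqrt t)
        ≤ ∫ t in Set.Ioi (0:ℝ),
            ((Real.sqrt (n.factorial/2^n) * c^((n:ℝ)/2)) * (2:ℝ)^(-(n:ℝ)*(j:ℝ)) * r⁻¹)
              * aMaj m r t := by
      refine integral_mono_of_nonneg ?_ ((aux_maj_integrable m hm hr).const_mul _) ?_
      · filter_upwards [ae_restrict_mem measurableSet_Ioi] with t ht
        have ht0 : (0:ℝ) < t := ht
        positivity
      · filter_upwards [ae_restrict_mem measurableSet_Ioi] with t ht
        exact hpt t ht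
    rw [MeasureTheory.integral_const_mul] at hmono
    refine le_trans hmono ?_
    have hMle := aux_maj_integral m hm hr
    refine le_trans (mul_le_mul_of_nonneg_left hMle hE30) (le_of_eq ?_)
    field_simp
end
end
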